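/- arXiv:2206.02190 — 7 statements merged into one kernel-verified Lean document; each statement's English description precedes it below -/
import Mathlib

section
/- Let n ≥ 1 be an integer and let c > 0 and r ≥ 1 be real numbers. There exists a constant C = C(n, c, r) such that for every real k ≥ 1 and every n×n real symmetric positive definite matrix Y with Y_D/r ≤ Y in the Loewner order, one has #{T ∈ Λ_n : tr(TY) ≤ c·k} ≤ C · k^{n(n+1)/2} · det(Y)^{−(n+1)/2}. -/
open scoped Real

/-- `Λ_n`: real symmetric positive definite `n × n` matrices with integral diagonal
entries such that `2T` has integer entries (half-integral matrices). -/
def IsHalfIntegral {n : ℕ} (T : Matrix (Fin n) (Fin n) ℝ) : Prop :=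
  T.PosDef ∧ (∀ i, ∃ z : ℤ, T i i = z) ∧ (∀ i j, ∃ z : ℤ, 2 * T i j = z)

/-- The Loewner order: `A ≤ B` iff `B - A` is positive semidefinite. -/
def LoewnerLE {n : ℕ} (A B : Matrix (Fin n) (Fin n) ℝ) : Prop := (B - A).PosSemidef

/-- The diagonal part `Y_D` of a matrix `Y`. -/
def diagPart {n : ℕ} (Y : Matrix (Fin n) (Fin n) ℝ) : Matrix (Fin n) (Fin n) ℝ :=
  Matrix.diagonal fun i => Y i i

section Aux
open Matrix Finset
variable {m : ℕ}




lemma psd_diag_nonneg {A : Matrix (Fin m) (Fin m) ℝ} (hA : A.PosSemidef) (i : Fin m) :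
    0 ≤ A i i := by
  have h := hA.dotProduct_mulVec_nonneg (Pi.single i 1)
  simpa [mulVec_single, single_dotProduct] using h

lemma pd_diag_pos {A : Matrix (Fin m) (Fin m) ℝ} (hA : A.PosDef) (i : Fin m) :
    0 < A i i := by
  have h := hA.dotProduct_mulVec_pos (x := Pi.single i 1) (by simp [Function.ne_iff])
  simpa [mulVec_single, single_dotProduct] using h

lemma psd_trace_nonneg {A : Matrix (Fin m) (Fin m) ℝ} (hA : A.PosSemidef) :
    0 ≤ A.trace := by
  rw [Matrix.trace]
  exact Finset.sum_nonneg fun i _ => psd_diag_nonneg hA i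

open scoped MatrixOrder in
lemma trace_mul_psd_nonneg {A B : Matrix (Fin m) (Fin m) ℝ} (hA : A.PosSemidef)
    (hB : B.PosSemidef) : 0 ≤ (A * B).trace := by
  have hs := (CFC.sqrt_nonneg A).posSemidef
  have h1 : A * B = CFC.sqrt A * (CFC.sqrt A * B) := by
    rw [← mul_assoc, CFC.sqrt_mul_sqrt_self A hA.nonneg]
  rw [h1, Matrix.trace_mul_comm]
  have h2 : CFC.sqrt A * B * CFC.sqrt A = (CFC.sqrt A)ᴴ * B * CFC.sqrt A := by rw [hs.1]
  have := (hB.conjTranspose_mul_mul_same (CFC.sqrt A))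
  rw [← h2] at this
  exact psd_trace_nonneg this


lemma psd_sq_entry_le {A : Matrix (Fin m) (Fin m) ℝ} (hA : A.PosSemidef) (i j : Fin m) :
    A i j ^ 2 ≤ A i i * A j j := by
  rcases eq_or_ne i j with rfl | hij
  · rw [sq]
  · have hsym : A j i = A i j := by
      have h2 := congrFun (congrFun hA.1 i) j
      simpa [conjTranspose_apply] using h2
    have key : ∀ t : ℝ, 0 ≤ A j j * (t * t) + (2 * A i j) * t + A i i := by
      intro t
      have h := hA.dotProduct_mulVec_nonneg (Pi.single i 1 + t • (Pi.single j 1 : Fin m → ℝ))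
      simp only [star_trivial, mulVec_add, mulVec_smul, dotProduct_add, add_dotProduct,
        smul_dotProduct, dotProduct_smul, mulVec_single, single_dotProduct,
        dotProduct_single, mul_one, one_mul, smul_eq_mul, Pi.smul_apply,
        Matrix.col_apply, MulOpposite.op_one, one_smul] at h
      -- h : 0 ≤ A i i + t * A i j + (t * A j i + t * (t * A j j)) or similar
      rw [hsym] at h; nlinarith [h]
    have hd := discrim_le_zero key
    simp only [discrim] at hd
    nlinarith [hd]

lemma trace_eq_sum_eigenvalues {A : Matrix (Fin m) (Fin m) ℝ} (hA : A.IsHermitian) :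
    A.trace = ∑ i, hA.eigenvalues i := by
  simpa using hA.trace_eq_sum_eigenvalues

lemma amgm_prod_le {f : Fin m → ℝ} (hm : 0 < m) (hf : ∀ i, 0 ≤ f i) :
    ∏ i, f i ≤ ((∑ i, f i) / m) ^ m := by
  have h := Real.geom_mean_le_arith_mean_weighted Finset.univ (fun _ => (m : ℝ)⁻¹) f
    (fun i _ => by positivity) (by simp [Finset.card_univ, mul_inv_cancel₀ (by positivity : (m:ℝ) ≠ 0)]) (fun i _ => hf i)
  have h2 : (∏ i, f i ^ ((m : ℝ)⁻¹)) ^ m ≤ ((∑ i, f i) / m) ^ m := by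
    apply pow_le_pow_left₀ (Finset.prod_nonneg fun i _ => Real.rpow_nonneg (hf i) _)
    calc ∏ i, f i ^ ((m:ℝ)⁻¹) ≤ ∑ i, (m:ℝ)⁻¹ * f i := h
    _ = (∑ i, f i) / m := by rw [← Finset.mul_sum]; ring
  calc ∏ i, f i = (∏ i, f i ^ ((m : ℝ)⁻¹)) ^ m := by
        rw [← Finset.prod_pow]
        refine Finset.prod_congr rfl fun i _ => ?_
        rw [← Real.rpow_natCast (f i ^ ((m:ℝ)⁻¹)) m, ← Real.rpow_mul (hf i),
          inv_mul_cancel₀ (by positivity : (m:ℝ) ≠ 0), Real.rpow_one]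
  _ ≤ _ := h2

lemma hadamard_det_le {Y : Matrix (Fin m) (Fin m) ℝ} (hm : 0 < m) (hY : Y.PosDef) :
    Y.det ≤ ∏ i, Y i i := by
  classical
  set d : Fin m → ℝ := fun i => (Real.sqrt (Y i i))⁻¹ with hd
  have hYd : ∀ i, 0 < Y i i := fun i => by
    have h := hY.dotProduct_mulVec_pos (x := Pi.single i 1) (by simp [Function.ne_iff])
    simpa [mulVec_single, single_dotProduct] using h
  set D : Matrix (Fin m) (Fin m) ℝ := Matrix.diagonal d with hD
  have hDH : Dᴴ = D := by simp [hD, Matrix.diagonal_conjTranspose]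
  have hZ : (D * Y * D).PosSemidef := by
    have := hY.posSemidef.conjTranspose_mul_mul_same D
    rwa [hDH] at this
  set Z := D * Y * D with hZdef
  have hZdiag : ∀ i, Z i i = 1 := by
    intro i
    have h1 : Z i i = d i * Y i i * d i := by
      simp only [hZdef, hD, Matrix.diagonal_mul, Matrix.mul_diagonal]
    have h0 : Real.sqrt (Y i i) ≠ 0 := (Real.sqrt_pos.mpr (hYd i)).ne'
    rw [h1]
    simp only [hd]
    rw [← Real.mul_self_sqrt (hYd i).le]
    field_simp
    rw [Real.sqrt_sq (Real.sqrt_nonneg _)]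
  have htr : Z.trace = m := by
    rw [Matrix.trace]
    simp [Matrix.diag, hZdiag]
  have hdet : Z.det = (∏ i, d i)^2 * Y.det := by
    rw [hZdef, Matrix.det_mul, Matrix.det_mul, hD, Matrix.det_diagonal]
    ring
  have hev := hZ.1.det_eq_prod_eigenvalues
  have hevsum := trace_eq_sum_eigenvalues hZ.1
  have hZdet_le : Z.det ≤ 1 := by
    have := amgm_prod_le hm (f := hZ.1.eigenvalues) (fun i => hZ.eigenvalues_nonneg i)
    rw [← hevsum, htr] at this
    rw [div_self (by positivity : (m:ℝ) ≠ 0), one_pow] at this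
    calc Z.det = ∏ i, hZ.1.eigenvalues i := by simpa using hev
    _ ≤ 1 := this
  have hprodd : (∏ i, d i)^2 = (∏ i, Y i i)⁻¹ := by
    rw [← Finset.prod_pow, ← Finset.prod_inv_distrib]
    refine Finset.prod_congr rfl fun i _ => ?_
    show ((Real.sqrt (Y i i))⁻¹)^2 = (Y i i)⁻¹
    rw [← Real.sqrt_inv, Real.sq_sqrt (inv_nonneg.mpr (hYd i).le)]
  have hprodY : 0 < ∏ i, Y i i := Finset.prod_pos fun i _ => hYd i
  rw [hdet, hprodd] at hZdet_le
  calc Y.det = (∏ i, Y i i) * ((∏ i, Y i i)⁻¹ * Y.det) := by field_simp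
  _ ≤ (∏ i, Y i i) * 1 := by
      exact mul_le_mul_of_nonneg_left hZdet_le hprodY.le
  _ = ∏ i, Y i i := by ring

private lemma lower_eq_image :
    (univ.filter fun p : Fin m × Fin m => p.2 ≤ p.1)
      = (univ.filter fun p : Fin m × Fin m => p.1 ≤ p.2).image Prod.swap := by
  ext p
  simp only [mem_filter, mem_univ, true_and, mem_image]
  constructor
  · intro h; exact ⟨p.swap, by simpa using h, by simp⟩
  · rintro ⟨q, hq, rfl⟩; simpa using hq

private lemma tri_union :
    (univ.filter fun p : Fin m × Fin m => p.1 ≤ p.2)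
      ∪ (univ.filter fun p : Fin m × Fin m => p.2 ≤ p.1) = univ := by
  ext p
  simp only [mem_union, mem_filter, mem_univ, true_and, iff_true]
  exact le_total p.1 p.2

private lemma tri_inter :
    (univ.filter fun p : Fin m × Fin m => p.1 ≤ p.2)
      ∩ (univ.filter fun p : Fin m × Fin m => p.2 ≤ p.1)
      = univ.image (fun i : Fin m => (i, i)) := by
  ext p
  simp only [mem_inter, mem_filter, mem_univ, true_and, mem_image]
  constructor
  · rintro ⟨h1, h2⟩
    refine ⟨p.1, ?_⟩
    have : p.1 = p.2 := le_antisymm h1 h2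
    simp [Prod.ext_iff, this]
  · rintro ⟨i, rfl⟩; simp

lemma two_mul_tri_card :
    2 * (univ.filter fun p : Fin m × Fin m => p.1 ≤ p.2).card = m * m + m := by
  have h := Finset.card_union_add_card_inter
    (univ.filter fun p : Fin m × Fin m => p.1 ≤ p.2)
    (univ.filter fun p : Fin m × Fin m => p.2 ≤ p.1)
  rw [tri_union, tri_inter, lower_eq_image,
    Finset.card_image_of_injective _ Prod.swap_injective,
    Finset.card_image_of_injective _ (fun a b h => (Prod.ext_iff.mp h).1)] at h
  simpa [two_mul, Finset.card_univ] using h.symm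

lemma tri_prod (g : Fin m → ℝ) (hg : ∀ i, 0 ≤ g i) :
    (∏ p ∈ univ.filter fun p : Fin m × Fin m => p.1 ≤ p.2, g p.1 * g p.2)
      = (∏ i, g i) ^ (m + 1) := by
  set X := ∏ p ∈ univ.filter fun p : Fin m × Fin m => p.1 ≤ p.2, g p.1 * g p.2 with hX
  have hB : (∏ p ∈ univ.filter fun p : Fin m × Fin m => p.2 ≤ p.1, g p.1 * g p.2) = X := by
    rw [lower_eq_image, Finset.prod_image (fun a _ b _ h => Prod.swap_injective h)]
    simp only [Prod.fst_swap, Prod.snd_swap, hX]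
    exact Finset.prod_congr rfl fun p _ => mul_comm _ _
  have hu := Finset.prod_union_inter (s₁ := univ.filter fun p : Fin m × Fin m => p.1 ≤ p.2)
    (s₂ := univ.filter fun p : Fin m × Fin m => p.2 ≤ p.1) (f := fun p : Fin m × Fin m => g p.1 * g p.2)
  rw [tri_union, tri_inter, hB, ← hX] at hu
  have huniv : (∏ p : Fin m × Fin m, g p.1 * g p.2) = (∏ i, g i) ^ (2 * m) := by
    rw [← Finset.univ_product_univ, Finset.prod_product]
    have : ∀ i : Fin m, (∏ j, g i * g j) = g i ^ m * ∏ j, g j := by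
      intro i; rw [Finset.prod_mul_distrib, Finset.prod_const, Finset.card_univ,
        Fintype.card_fin]
    simp_rw [this]
    rw [Finset.prod_mul_distrib, Finset.prod_pow, Finset.prod_const, Finset.card_univ,
      Fintype.card_fin, two_mul, pow_add]
  have hdiag : (∏ p ∈ univ.image (fun i : Fin m => (i, i)), g p.1 * g p.2)
      = (∏ i, g i) ^ 2 := by
    rw [Finset.prod_image (fun a _ b _ h => (Prod.ext_iff.mp h).1), sq,
      ← Finset.prod_mul_distrib]
  rw [huniv, hdiag] at hu
  have hXnn : 0 ≤ X := Finset.prod_nonneg fun p _ => mul_nonneg (hg _) (hg _)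
  have hYnn : 0 ≤ (∏ i, g i) ^ (m + 1) := pow_nonneg (Finset.prod_nonneg fun i _ => hg i) _
  have hsq : X ^ 2 = ((∏ i, g i) ^ (m + 1)) ^ 2 := by
    rw [sq, sq, ← hu, ← pow_add]; ring_nf
  calc X = Real.sqrt (X ^ 2) := (Real.sqrt_sq hXnn).symm
  _ = Real.sqrt (((∏ i, g i) ^ (m + 1)) ^ 2) := by rw [hsq]
  _ = (∏ i, g i) ^ (m + 1) := Real.sqrt_sq hYnn


lemma trace_mul_diagPart {T Y : Matrix (Fin m) (Fin m) ℝ} :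
    (T * diagPart Y).trace = ∑ i, T i i * Y i i := by
  simp [diagPart, Matrix.trace, Matrix.diag, Matrix.mul_diagonal]

end Aux

theorem statement1 {n : ℕ} (hn : 1 ≤ n) (c r : ℝ) (hc : 0 < c) (hr : 1 ≤ r) :
    ∃ C : ℝ, 0 < C ∧ ∀ k : ℝ, 1 ≤ k →
      ∀ Y : Matrix (Fin n) (Fin n) ℝ, Y.PosDef →
        LoewnerLE (r⁻¹ • diagPart Y) Y →
        {T : Matrix (Fin n) (Fin n) ℝ |
            IsHalfIntegral T ∧ (T * Y).trace ≤ c * k}.Finite ∧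
        ({T : Matrix (Fin n) (Fin n) ℝ |
            IsHalfIntegral T ∧ (T * Y).trace ≤ c * k}.ncard : ℝ)
          ≤ C * k ^ ((n * (n + 1) : ℝ) / 2) * Y.det ^ (-((n : ℝ) + 1) / 2) := by
  classical
  open Matrix Finset in
  set A : Finset (Fin n × Fin n) := univ.filter (fun p => p.1 ≤ p.2) with hA
  set N : ℕ := A.card with hN
  have hNcast : (N : ℝ) = (n * (n + 1) : ℝ) / 2 := by
    have h2 := two_mul_tri_card (m := n)
    rw [← hA, ← hN] at h2
    have : ((2 * N : ℕ) : ℝ) = ((n * n + n : ℕ) : ℝ) := by rw [h2]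
    push_cast at this
    linarith
  refine ⟨(5 * c * r) ^ N, by positivity, ?_⟩
  intro k hk Y hY hL
  have hrpos : (0 : ℝ) < r := lt_of_lt_of_le one_pos hr
  have hkpos : (0 : ℝ) < k := lt_of_lt_of_le one_pos hk
  have hckr : (0 : ℝ) < c * k * r := by positivity
  set S := {T : Matrix (Fin n) (Fin n) ℝ | IsHalfIntegral T ∧ (T * Y).trace ≤ c * k} with hS
  have hYd : ∀ i, 0 < Y i i := fun i => pd_diag_pos hY i
  have hdet : 0 < Y.det := hY.det_pos
  -- basic bounds for members of S
  have hdiag1 : ∀ T ∈ S, ∀ i, 1 ≤ T i i := by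
    rintro T ⟨⟨hTpd, hTd, -⟩, -⟩ i
    obtain ⟨z, hz⟩ := hTd i
    have hpos : 0 < T i i := pd_diag_pos hTpd i
    rw [hz] at hpos ⊢
    have hz0 : (0 : ℤ) < z := by exact_mod_cast hpos
    have hz1 : (1 : ℤ) ≤ z := hz0
    exact_mod_cast hz1
  have hsum : ∀ T ∈ S, ∑ i, T i i * Y i i ≤ c * k * r := by
    rintro T ⟨⟨hTpd, -, -⟩, htr⟩
    have hnn := trace_mul_psd_nonneg hTpd.posSemidef hL
    have hexp : (T * (Y - r⁻¹ • diagPart Y)).trace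
        = (T * Y).trace - r⁻¹ * (∑ i, T i i * Y i i) := by
      rw [Matrix.mul_sub, Matrix.trace_sub, Matrix.mul_smul, Matrix.trace_smul,
        trace_mul_diagPart]
      simp [smul_eq_mul]
    rw [LoewnerLE] at hL
    rw [hexp] at hnn
    have h1 : r⁻¹ * (∑ i, T i i * Y i i) ≤ c * k := le_trans (by linarith) htr
    calc ∑ i, T i i * Y i i = r * (r⁻¹ * (∑ i, T i i * Y i i)) := by
          field_simp
    _ ≤ r * (c * k) := by exact mul_le_mul_of_nonneg_left h1 hrpos.le
    _ = c * k * r := by ring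
  have hterm : ∀ T ∈ S, ∀ i, T i i * Y i i ≤ c * k * r := by
    intro T hT i
    refine le_trans ?_ (hsum T hT)
    exact Finset.single_le_sum (f := fun j => T j j * Y j j)
      (fun j _ => mul_nonneg (le_trans zero_le_one (hdiag1 T hT j)) (hYd j).le) (mem_univ i)
  rcases Set.eq_empty_or_nonempty S with hSe | ⟨T₀, hT₀⟩
  · rw [hSe]
    refine ⟨Set.finite_empty, ?_⟩
    simp only [Set.ncard_empty, Nat.cast_zero]
    positivity
  · have hYkb : ∀ i, Y i i ≤ c * k * r := by
      intro i
      calc Y i i = 1 * Y i i := (one_mul _).symm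
      _ ≤ T₀ i i * Y i i := mul_le_mul_of_nonneg_right (hdiag1 T₀ hT₀ i) (hYd i).le
      _ ≤ c * k * r := hterm T₀ hT₀ i
    set g : Fin n → ℝ := fun i => (Real.sqrt (Y i i))⁻¹ with hg
    have hgpos : ∀ i, 0 < g i := fun i => inv_pos.mpr (Real.sqrt_pos.mpr (hYd i))
    set M : Fin n × Fin n → ℝ := fun p => c * k * r * (g p.1 * g p.2) with hM
    have hMpos : ∀ p, 0 < M p := fun p =>
      mul_pos hckr (mul_pos (hgpos _) (hgpos _))
    have hM1 : ∀ p : Fin n × Fin n, 1 ≤ M p := by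
      intro p
      have hsp : 0 < Real.sqrt (Y p.1 p.1) * Real.sqrt (Y p.2 p.2) := by
        have := Real.sqrt_pos.mpr (hYd p.1)
        have := Real.sqrt_pos.mpr (hYd p.2)
        positivity
      have hprodle : Real.sqrt (Y p.1 p.1) * Real.sqrt (Y p.2 p.2) ≤ c * k * r := by
        rw [← Real.sqrt_mul (hYd p.1).le]
        calc Real.sqrt (Y p.1 p.1 * Y p.2 p.2)
            ≤ Real.sqrt ((c * k * r) * (c * k * r)) :=
          Real.sqrt_le_sqrt (mul_le_mul (hYkb _) (hYkb _) (hYd _).le hckr.le)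
        _ = c * k * r := Real.sqrt_mul_self hckr.le
      have : M p = c * k * r / (Real.sqrt (Y p.1 p.1) * Real.sqrt (Y p.2 p.2)) := by
        rw [hM, hg, div_eq_mul_inv, mul_inv]
      rw [this]
      exact (one_le_div hsp).mpr hprodle
    have hgsq : ∀ i, g i ^ 2 = (Y i i)⁻¹ := by
      intro i
      rw [hg]
      show ((Real.sqrt (Y i i))⁻¹) ^ 2 = (Y i i)⁻¹
      rw [inv_pow, Real.sq_sqrt (hYd i).le]
    have hentry : ∀ T ∈ S, ∀ p : Fin n × Fin n, |2 * T p.1 p.2| ≤ 2 * M p := by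
      intro T hT p
      obtain ⟨i, j⟩ := p
      have hTpsd := hT.1.1.posSemidef
      have h1 : T i j ^ 2 ≤ T i i * T j j := psd_sq_entry_le hTpsd i j
      have hTi : T i i ≤ c * k * r / Y i i := by
        rw [le_div_iff₀ (hYd i)]; exact hterm T hT i
      have hTj : T j j ≤ c * k * r / Y j j := by
        rw [le_div_iff₀ (hYd j)]; exact hterm T hT j
      have hTipos : 0 < T i i := lt_of_lt_of_le one_pos (hdiag1 T hT i)
      have hTjpos : 0 < T j j := lt_of_lt_of_le one_pos (hdiag1 T hT j)
      have h2 : T i i * T j j ≤ (c * k * r / Y i i) * (c * k * r / Y j j) :=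
        mul_le_mul hTi hTj hTjpos.le (div_nonneg hckr.le (hYd i).le)
      have hM2 : (2 * M (i, j)) ^ 2 = 4 * ((c * k * r / Y i i) * (c * k * r / Y j j)) := by
        have e : (2 * M (i, j)) ^ 2 = 4 * (c * k * r) ^ 2 * (g i ^ 2 * g j ^ 2) := by
          rw [hM]; ring
        rw [e, hgsq i, hgsq j]
        field_simp
      have habs : (2 * T i j) ^ 2 ≤ (2 * M (i, j)) ^ 2 := by
        rw [hM2]; nlinarith [h1, h2]
      calc |2 * T i j| = Real.sqrt ((2 * T i j) ^ 2) := (Real.sqrt_sq_eq_abs _).symm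
      _ ≤ Real.sqrt ((2 * M (i, j)) ^ 2) := Real.sqrt_le_sqrt habs
      _ = 2 * M (i, j) := Real.sqrt_sq (by linarith [hMpos (i, j)])
    set B : Fin n × Fin n → ℤ := fun p => ⌊2 * M p⌋ with hB
    have hBnn : ∀ p, 0 ≤ B p := fun p =>
      Int.floor_nonneg.mpr (by linarith [hM1 p])
    set G : Finset ({p // p ∈ A} → ℤ) :=
      Fintype.piFinset (fun q => Finset.Icc (-(B q.1)) (B q.1)) with hG
    set f : Matrix (Fin n) (Fin n) ℝ → ({p // p ∈ A} → ℤ) :=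
      fun T q => ⌊2 * T q.1.1 q.1.2⌋ with hf
    have hfex : ∀ T ∈ S, ∀ i j, ((⌊2 * T i j⌋ : ℤ) : ℝ) = 2 * T i j := by
      rintro T ⟨⟨-, -, hTz⟩, -⟩ i j
      obtain ⟨z, hz⟩ := hTz i j
      rw [hz, Int.floor_intCast]
    have hsymm : ∀ T ∈ S, ∀ i j, T i j = T j i := by
      rintro T ⟨⟨hTpd, -, -⟩, -⟩ i j
      have h2 := congrFun (congrFun hTpd.1 j) i
      simpa [Matrix.conjTranspose_apply] using h2
    have hinj : Set.InjOn f S := by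
      intro T hT T' hT' hff
      ext i j
      rcases le_total i j with hij | hij
      · have hq := congrFun hff ⟨(i, j), by simp [hA, hij]⟩
        have e1 := hfex T hT i j
        have e2 := hfex T' hT' i j
        have : (2 : ℝ) * T i j = 2 * T' i j := by
          rw [← e1, ← e2]
          exact_mod_cast congrArg Int.cast hq
        linarith
      · have hq := congrFun hff ⟨(j, i), by simp [hA, hij]⟩
        have e1 := hfex T hT j i
        have e2 := hfex T' hT' j i
        have h3 : (2 : ℝ) * T j i = 2 * T' j i := by
          rw [← e1, ← e2]
          exact_mod_cast congrArg Int.cast hq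
        rw [hsymm T hT i j, hsymm T' hT' i j]
        linarith
    have hmem : ∀ T ∈ S, f T ∈ G := by
      intro T hT
      rw [hG, Fintype.mem_piFinset]
      intro q
      rw [Finset.mem_Icc]
      have habs := hentry T hT q.1
      have hfl : ((⌊2 * T q.1.1 q.1.2⌋ : ℤ) : ℝ) = 2 * T q.1.1 q.1.2 :=
        hfex T hT q.1.1 q.1.2
      rw [abs_le] at habs
      constructor
      · rw [neg_le]
        rw [hB, Int.le_floor]
        push_cast
        rw [hfl]
        linarith [habs.1]
      · rw [hB, Int.le_floor, hfl]
        exact habs.2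
    have himg : f '' S ⊆ ↑G := by rintro _ ⟨T, hT, rfl⟩; exact hmem T hT
    have hfin : S.Finite := Set.Finite.of_finite_image (G.finite_toSet.subset himg) hinj
    refine ⟨hfin, ?_⟩
    have hcard : S.ncard ≤ G.card := by
      rw [← Set.ncard_coe_finset G, ← Set.ncard_image_of_injOn hinj]
      exact Set.ncard_le_ncard himg G.finite_toSet
    have hfactor : ∀ p ∈ A, ((Finset.Icc (-(B p)) (B p)).card : ℝ) ≤ 5 * M p := by
      intro p _
      rw [Int.card_Icc]
      have h1 : (0 : ℤ) ≤ B p + 1 - -(B p) := by linarith [hBnn p]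
      have h2 : (((B p + 1 - -(B p)).toNat : ℕ) : ℝ) = ((B p + 1 - -(B p) : ℤ) : ℝ) := by
        exact_mod_cast congrArg (Int.cast : ℤ → ℝ) (Int.toNat_of_nonneg h1)
      rw [h2]
      push_cast
      have hBle : (B p : ℝ) ≤ 2 * M p := Int.floor_le _
      linarith [hM1 p]
    have hGcard : (G.card : ℝ) ≤ ∏ p ∈ A, (5 * M p) := by
      have e1 : (G.card : ℝ) = ∏ p ∈ A, ((Finset.Icc (-(B p)) (B p)).card : ℝ) := by
        rw [hG, Fintype.card_piFinset]
        push_cast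
        exact Finset.prod_coe_sort A (fun p => ((Finset.Icc (-(B p)) (B p)).card : ℝ))
      rw [e1]
      exact Finset.prod_le_prod (fun p _ => Nat.cast_nonneg _) hfactor
    have hprodM : ∏ p ∈ A, (5 * M p) = (5 * (c * k * r)) ^ N * (∏ i, g i) ^ (n + 1) := by
      calc ∏ p ∈ A, (5 * M p)
          = ∏ p ∈ A, ((5 * (c * k * r)) * (g p.1 * g p.2)) := by
            refine Finset.prod_congr rfl fun p _ => ?_
            rw [hM]; ring
      _ = (5 * (c * k * r)) ^ N * ∏ p ∈ A, (g p.1 * g p.2) := by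
            rw [Finset.prod_mul_distrib, Finset.prod_const, hN]
      _ = (5 * (c * k * r)) ^ N * (∏ i, g i) ^ (n + 1) := by
            rw [hA, tri_prod g (fun i => (hgpos i).le)]
    have hPpos : 0 < ∏ i, Y i i := Finset.prod_pos fun i _ => hYd i
    have hgrpow : (∏ i, g i) ^ (n + 1) = (∏ i, Y i i) ^ (-((n : ℝ) + 1) / 2) := by
      have h1 : ∏ i, g i = (∏ i, Y i i) ^ (-(1 / 2 : ℝ)) := by
        rw [← Real.finset_prod_rpow _ _ (fun i _ => (hYd i).le)]
        refine Finset.prod_congr rfl fun i _ => ?_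
        rw [hg]
        show (Real.sqrt (Y i i))⁻¹ = Y i i ^ (-(1 / 2 : ℝ))
        rw [Real.rpow_neg (hYd i).le, ← Real.sqrt_eq_rpow]
      rw [h1, ← Real.rpow_natCast ((∏ i, Y i i) ^ (-(1 / 2 : ℝ))) (n + 1),
        ← Real.rpow_mul hPpos.le]
      congr 1
      push_cast
      ring
    have hHad : (∏ i, Y i i) ^ (-((n : ℝ) + 1) / 2) ≤ Y.det ^ (-((n : ℝ) + 1) / 2) := by
      apply Real.rpow_le_rpow_of_nonpos hdet (hadamard_det_le (lt_of_lt_of_le one_pos hn) hY)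
      have hnn : (0 : ℝ) ≤ (n : ℝ) + 1 := by positivity
      linarith
    have hkpow : (5 * (c * k * r)) ^ N = (5 * c * r) ^ N * k ^ ((n * (n + 1) : ℝ) / 2) := by
      rw [← hNcast, Real.rpow_natCast]
      rw [← mul_pow]
      congr 1
      ring
    calc (S.ncard : ℝ) ≤ (G.card : ℝ) := by exact_mod_cast hcard
    _ ≤ ∏ p ∈ A, (5 * M p) := hGcard
    _ = (5 * (c * k * r)) ^ N * (∏ i, g i) ^ (n + 1) := hprodM
    _ = (5 * (c * k * r)) ^ N * (∏ i, Y i i) ^ (-((n : ℝ) + 1) / 2) := by rw [hgrpow]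
    _ ≤ (5 * (c * k * r)) ^ N * Y.det ^ (-((n : ℝ) + 1) / 2) := by
        exact mul_le_mul_of_nonneg_left hHad (by positivity)
    _ = (5 * c * r) ^ N * k ^ ((n * (n + 1) : ℝ) / 2) * Y.det ^ (-((n : ℝ) + 1) / 2) := by
        rw [hkpow]
end

section
/- Let n ≥ 1 be an integer, r ≥ 1 and ε ∈ (0, 1/2). There exists a constant C = C(n, r, ε) such that for every integer k ≥ 2 and every r-reduced n×n matrix Y with Y ≥ 1_n in the Loewner order, the set C_Y := {T ∈ Λ_n : every eigenvalue of Y^{1/2} T Y^{1/2} lies in the open interval (k/(4π) − k^{1/2+ε}, k/(4π) + k^{1/2+ε})} satisfies #C_Y ≤ C · k^{(1/2+ε)·n(n+1)/2} · det(Y)^{−(n+1)/4}. -/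
open scoped Real

/-- `Y` is `r`-reduced: positive definite with `Y_D / r ≤ Y ≤ r • Y_D` in the
Loewner order. -/
def MinkReduced {n : ℕ} (r : ℝ) (Y : Matrix (Fin n) (Fin n) ℝ) : Prop :=
  Y.PosDef ∧ LoewnerLE (r⁻¹ • diagPart Y) Y ∧ LoewnerLE Y (r • diagPart Y)

/-- The square root of a positive semidefinite matrix, as `Matrix.PosSemidef.sqrt` was defined
in the older Mathlib (since removed in favour of `CFC.sqrt`). -/
noncomputable def Matrix.PosSemidef.sqrt {n : Type*} [Fintype n] [DecidableEq n]
    {A : Matrix n n ℝ} (hA : A.PosSemidef) : Matrix n n ℝ :=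
  hA.1.eigenvectorUnitary.1 * Matrix.diagonal ((↑) ∘ (√·) ∘ hA.1.eigenvalues) *
    (star hA.1.eigenvectorUnitary : Matrix n n ℝ)

namespace Statement2Aux

open Matrix

variable {n : ℕ}

lemma psd_diag {M : Matrix (Fin n) (Fin n) ℝ} (h : M.PosSemidef) (i : Fin n) : 0 ≤ M i i := by
  have := h.dotProduct_mulVec_nonneg (Pi.single i 1)
  simpa [dotProduct, Matrix.mulVec, Pi.single_apply] using this

lemma pd_diag {M : Matrix (Fin n) (Fin n) ℝ} (h : M.PosDef) (i : Fin n) : 0 < M i i := by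
  have hne : (Pi.single i 1 : Fin n → ℝ) ≠ 0 := by
    intro hc; have := congrFun hc i; simp at this
  have := h.dotProduct_mulVec_pos hne
  simpa [dotProduct, Matrix.mulVec, Pi.single_apply] using this

lemma herm_apply {M : Matrix (Fin n) (Fin n) ℝ} (h : M.IsHermitian) (i j : Fin n) :
    M j i = M i j := by
  have := congrFun (congrFun h.symm j) i
  simpa [Matrix.conjTranspose_apply] using this

lemma psd_off {M : Matrix (Fin n) (Fin n) ℝ} (h : M.PosSemidef) (i j : Fin n) :
    M i j ^ 2 ≤ M i i * M j j := by
  rcases eq_or_ne i j with rfl | hij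
  · nlinarith [psd_diag h i]
  · have key : ∀ t : ℝ, 0 ≤ M i i * (t * t) + (2 * M i j) * t + M j j := by
      intro t
      have h2 := h.dotProduct_mulVec_nonneg (Pi.single i t + Pi.single j 1)
      have e : (Pi.single i t + Pi.single j 1 : Fin n → ℝ) ⬝ᵥ
          (M *ᵥ (Pi.single i t + Pi.single j 1)) =
          M i i * (t * t) + (2 * M i j) * t + M j j := by
        have hs := herm_apply h.1 i j
        simp [dotProduct, Matrix.mulVec, Pi.single_apply, Finset.mul_sum, mul_add,
          add_mul, Finset.sum_add_distrib, mul_ite, ite_mul]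
        rw [hs]; ring
      rw [show star (Pi.single i t + Pi.single j 1 : Fin n → ℝ) =
        Pi.single i t + Pi.single j 1 from star_trivial _] at h2
      rw [e] at h2; exact h2
    have hd := discrim_le_zero key
    rw [discrim] at hd
    nlinarith [hd]

lemma eig_ge {K : Matrix (Fin n) (Fin n) ℝ} (hK : K.IsHermitian) {c : ℝ}
    (h : (K - c • (1 : Matrix (Fin n) (Fin n) ℝ)).PosSemidef) (i : Fin n) :
    c ≤ hK.eigenvalues i := by
  have hnorm : ‖hK.eigenvectorBasis i‖ = 1 := hK.eigenvectorBasis.orthonormal.1 i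
  set v : Fin n → ℝ := ⇑(hK.eigenvectorBasis i) with hv
  have hsum : v ⬝ᵥ v = 1 := by
    have h1 : (inner ℝ (hK.eigenvectorBasis i) (hK.eigenvectorBasis i) : ℝ) = 1 := by
      rw [real_inner_self_eq_norm_sq, hnorm]; norm_num
    rw [← h1]
    simp [dotProduct, PiLp.inner_apply, RCLike.inner_apply, mul_comm, hv]
    rw [PiLp.inner_apply] at h1
    simpa [mul_comm, sq] using h1
  have hmv := hK.mulVec_eigenvectorBasis i
  have hq := h.dotProduct_mulVec_nonneg v
  rw [star_trivial, Matrix.sub_mulVec, dotProduct_sub] at hq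
  have heig : v ⬝ᵥ (K *ᵥ v) = hK.eigenvalues i := by
    rw [← hv] at hmv
    rw [hmv, dotProduct_smul, hsum]
    simp
  have hc : v ⬝ᵥ ((c • (1 : Matrix (Fin n) (Fin n) ℝ)) *ᵥ v) = c := by
    rw [Matrix.smul_mulVec, Matrix.one_mulVec, dotProduct_smul, hsum]
    simp
  rw [heig, hc] at hq
  linarith

lemma loewner_of_eig_ge {S : Matrix (Fin n) (Fin n) ℝ} (hS : S.IsHermitian) {a : ℝ}
    (h : ∀ i, a ≤ hS.eigenvalues i) :
    (S - a • (1 : Matrix (Fin n) (Fin n) ℝ)).PosSemidef := by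
  have hsp := hS.spectral_theorem
  simp only [Unitary.conjStarAlgAut_apply, Unitary.coe_star] at hsp
  set U : Matrix (Fin n) (Fin n) ℝ := hS.eigenvectorUnitary.1 with hU
  have hUU : U * star U = 1 := Matrix.mem_unitaryGroup_iff.mp hS.eigenvectorUnitary.2
  have key : S - a • (1 : Matrix (Fin n) (Fin n) ℝ)
      = U * (Matrix.diagonal (fun i => hS.eigenvalues i - a)) * star U := by
    have h1 : (Matrix.diagonal (fun i => hS.eigenvalues i - a) : Matrix (Fin n) (Fin n) ℝ)
        = Matrix.diagonal (RCLike.ofReal ∘ hS.eigenvalues) - a • 1 := by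
      ext i j
      by_cases hij : i = j <;>
        simp [Matrix.diagonal_apply, Matrix.one_apply, Matrix.sub_apply, hij]
    rw [h1, Matrix.mul_sub, Matrix.sub_mul, ← hsp]
    congr 1
    rw [Matrix.mul_smul, Matrix.smul_mul, mul_one, hUU]
  rw [key]
  have hdpsd : (Matrix.diagonal (fun i => hS.eigenvalues i - a) :
      Matrix (Fin n) (Fin n) ℝ).PosSemidef :=
    Matrix.PosSemidef.diagonal (fun i => by simpa using h i)
  have := hdpsd.mul_mul_conjTranspose_same U
  simpa [Matrix.star_eq_conjTranspose] using this

lemma loewner_of_eig_le {S : Matrix (Fin n) (Fin n) ℝ} (hS : S.IsHermitian) {b : ℝ}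
    (h : ∀ i, hS.eigenvalues i ≤ b) :
    (b • (1 : Matrix (Fin n) (Fin n) ℝ) - S).PosSemidef := by
  have hsp := hS.spectral_theorem
  simp only [Unitary.conjStarAlgAut_apply, Unitary.coe_star] at hsp
  set U : Matrix (Fin n) (Fin n) ℝ := hS.eigenvectorUnitary.1 with hU
  have hUU : U * star U = 1 := Matrix.mem_unitaryGroup_iff.mp hS.eigenvectorUnitary.2
  have key : b • (1 : Matrix (Fin n) (Fin n) ℝ) - S
      = U * (Matrix.diagonal (fun i => b - hS.eigenvalues i)) * star U := by
    have h1 : (Matrix.diagonal (fun i => b - hS.eigenvalues i) : Matrix (Fin n) (Fin n) ℝ)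
        = b • 1 - Matrix.diagonal (RCLike.ofReal ∘ hS.eigenvalues) := by
      ext i j
      by_cases hij : i = j <;>
        simp [Matrix.diagonal_apply, Matrix.one_apply, Matrix.sub_apply, hij]
    rw [h1, Matrix.mul_sub, Matrix.sub_mul, ← hsp]
    congr 1
    rw [Matrix.mul_smul, Matrix.smul_mul, mul_one, hUU]
  rw [key]
  have hdpsd : (Matrix.diagonal (fun i => b - hS.eigenvalues i) :
      Matrix (Fin n) (Fin n) ℝ).PosSemidef :=
    Matrix.PosSemidef.diagonal (fun i => by simpa using h i)
  have := hdpsd.mul_mul_conjTranspose_same U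
  simpa [Matrix.star_eq_conjTranspose] using this

section Congr

variable {Y R : Matrix (Fin n) (Fin n) ℝ}

lemma Rdet_unit (hY : Y.PosDef) (hRR : R * R = Y) : IsUnit R.det := by
  have h2 : R.det * R.det = Y.det := by rw [← Matrix.det_mul, hRR]
  exact isUnit_iff_ne_zero.mpr (fun hc => (ne_of_gt hY.det_pos) (by rw [← h2, hc, mul_zero]))

lemma conj_inv_psd (hRh : Rᴴ = R) {M : Matrix (Fin n) (Fin n) ℝ} (hM : M.PosSemidef) :
    (R⁻¹ * M * R⁻¹).PosSemidef := by
  have h := hM.mul_mul_conjTranspose_same R⁻¹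
  have he : (R⁻¹)ᴴ = R⁻¹ := by rw [Matrix.conjTranspose_nonsing_inv, hRh]
  rwa [he] at h

lemma conj_inv_S (hY : Y.PosDef) (hRR : R * R = Y) (T : Matrix (Fin n) (Fin n) ℝ) :
    R⁻¹ * (R * T * R) * R⁻¹ = T := by
  have hdet := Rdet_unit hY hRR
  rw [show R⁻¹ * (R * T * R) * R⁻¹ = (R⁻¹ * R) * T * (R * R⁻¹) by
      simp only [mul_assoc],
    Matrix.nonsing_inv_mul _ hdet, Matrix.mul_nonsing_inv _ hdet, one_mul, mul_one]

lemma conj_inv_smul_one (hRR : R * R = Y) (c : ℝ) :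
    R⁻¹ * (c • (1 : Matrix (Fin n) (Fin n) ℝ)) * R⁻¹ = c • Y⁻¹ := by
  rw [Matrix.mul_smul, Matrix.smul_mul, mul_one, ← Matrix.mul_inv_rev, hRR]

lemma conj_inv_Y (hY : Y.PosDef) (hRR : R * R = Y) : R⁻¹ * Y * R⁻¹ = 1 := by
  have hdet := Rdet_unit hY hRR
  rw [← hRR, show R⁻¹ * (R * R) * R⁻¹ = (R⁻¹ * R) * (R * R⁻¹) by simp only [mul_assoc],
    Matrix.nonsing_inv_mul _ hdet, Matrix.mul_nonsing_inv _ hdet, one_mul]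

lemma det_le_r_prod (hY : Y.PosDef) (hRR : R * R = Y) (hRh : Rᴴ = R) {r : ℝ}
    (h3 : ((r • diagPart Y - Y)).PosSemidef) :
    Y.det ≤ r ^ n * ∏ i, Y i i := by
  have hdet := Rdet_unit hY hRR
  have hKh : (R⁻¹ * (r • diagPart Y) * R⁻¹).IsHermitian := by
    have hDh : (r • diagPart Y).IsHermitian := by
      show (r • diagPart Y)ᴴ = _
      rw [Matrix.conjTranspose_smul,
        show (diagPart Y)ᴴ = diagPart Y from Matrix.isHermitian_diagonal _]
      simp
    have he : (R⁻¹)ᴴ = R⁻¹ := by rw [Matrix.conjTranspose_nonsing_inv, hRh]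
    show (R⁻¹ * (r • diagPart Y) * R⁻¹)ᴴ = _
    rw [Matrix.conjTranspose_mul, Matrix.conjTranspose_mul, he, hDh.eq]
    simp only [mul_assoc]
  have hK1 : ((R⁻¹ * (r • diagPart Y) * R⁻¹)
      - (1:ℝ) • (1 : Matrix (Fin n) (Fin n) ℝ)).PosSemidef := by
    have heq : (R⁻¹ * (r • diagPart Y) * R⁻¹) - (1:ℝ) • (1 : Matrix (Fin n) (Fin n) ℝ)
        = R⁻¹ * (r • diagPart Y - Y) * R⁻¹ := by
      rw [Matrix.mul_sub, Matrix.sub_mul, one_smul]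
      congr 1
      exact (conj_inv_Y hY hRR).symm
    rw [heq]
    exact conj_inv_psd hRh h3
  have heig : ∀ i, 1 ≤ hKh.eigenvalues i := fun i => eig_ge hKh hK1 i
  have hdetK : 1 ≤ (R⁻¹ * (r • diagPart Y) * R⁻¹).det := by
    rw [hKh.det_eq_prod_eigenvalues]
    push_cast
    calc (1:ℝ) = ∏ _i : Fin n, 1 := by simp
    _ ≤ ∏ i, hKh.eigenvalues i :=
      Finset.prod_le_prod (by simp) (fun i _ => heig i)
  have hdetKval : (R⁻¹ * (r • diagPart Y) * R⁻¹).det = (r ^ n * ∏ i, Y i i) / Y.det := by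
    rw [Matrix.det_mul, Matrix.det_mul, Matrix.det_nonsing_inv, Ring.inverse_eq_inv']
    have hD : (r • diagPart Y).det = r ^ n * ∏ i, Y i i := by
      rw [Matrix.det_smul, diagPart, Matrix.det_diagonal]
      simp
    rw [hD]
    have hRdet : R.det * R.det = Y.det := by rw [← Matrix.det_mul, hRR]
    have hR0 : R.det ≠ 0 := by
      intro hc
      rw [hc, mul_zero] at hRdet
      exact (ne_of_gt hY.det_pos) hRdet.symm
    rw [← hRdet]
    field_simp
  rw [hdetKval] at hdetK
  have hpos := hY.det_pos
  rw [le_div_iff₀ hpos] at hdetK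
  linarith

lemma inv_diag_le (hY : Y.PosDef) {r : ℝ} (hr : 1 ≤ r)
    (h2 : ((Y - r⁻¹ • diagPart Y)).PosSemidef) (i : Fin n) :
    Y⁻¹ i i ≤ r / Y i i := by
  have hdet : IsUnit Y.det := isUnit_iff_ne_zero.mpr (ne_of_gt hY.det_pos)
  set u : Fin n → ℝ := Y⁻¹ *ᵥ Pi.single i 1 with hu
  have hui : u i = Y⁻¹ i i := by
    simp [hu, Matrix.mulVec, dotProduct, Pi.single_apply]
  have hYu : Y *ᵥ u = Pi.single i 1 := by
    rw [hu, Matrix.mulVec_mulVec, Matrix.mul_nonsing_inv _ hdet, Matrix.one_mulVec]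
  have hq : u ⬝ᵥ (Y *ᵥ u) = u i := by
    rw [hYu]; simp [dotProduct, Pi.single_apply]
  have hlow : r⁻¹ * (Y i i * (u i)^2) ≤ u i := by
    have h3 := h2.dotProduct_mulVec_nonneg u
    rw [star_trivial, Matrix.sub_mulVec, dotProduct_sub] at h3
    have hdquad : u ⬝ᵥ ((r⁻¹ • diagPart Y) *ᵥ u) = r⁻¹ * ∑ j, Y j j * (u j)^2 := by
      rw [Matrix.smul_mulVec, dotProduct_smul]
      congr 1
      simp [diagPart, Matrix.mulVec_diagonal, dotProduct]
      congr 1; funext j; ring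
    rw [hdquad, hq] at h3
    have hterm : Y i i * (u i)^2 ≤ ∑ j, Y j j * (u j)^2 := by
      apply Finset.single_le_sum (f := fun j => Y j j * (u j)^2)
      · intro j _; have := pd_diag hY j; positivity
      · exact Finset.mem_univ i
    have hrpos : (0:ℝ) < r⁻¹ := by positivity
    nlinarith
  have hYipos := pd_diag hY i
  rw [← hui]
  rcases le_or_gt (u i) 0 with h | h
  · exact le_trans h (by positivity)
  · rw [le_div_iff₀ hYipos]
    have hrpos : (0:ℝ) < r := by linarith
    have := mul_le_mul_of_nonneg_left hlow (le_of_lt hrpos)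
    rw [← mul_assoc, mul_inv_cancel₀ (ne_of_gt hrpos), one_mul] at this
    nlinarith

end Congr

lemma prod_pairs {M : Type*} [CommMonoid M] {n : ℕ} (g : Fin n → M) :
    ∏ q : {p : Fin n × Fin n // p.1 ≤ p.2}, (g q.1.1 * g q.1.2) = (∏ i, g i) ^ (n + 1) := by
  rw [← Finset.prod_subtype (Finset.univ.filter (fun p : Fin n × Fin n => p.1 ≤ p.2))
    (fun p => by simp) (fun p => g p.1 * g p.2)]
  rw [Finset.prod_filter, Fintype.prod_prod_type]
  have step : ∀ i : Fin n, ∏ j : Fin n, (if i ≤ j then g i * g j else 1)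
      = (∏ j : Fin n, if i ≤ j then g i else 1) * ∏ j : Fin n, if i ≤ j then g j else 1 := by
    intro i
    rw [← Finset.prod_mul_distrib]
    congr 1; funext j
    split <;> simp
  simp_rw [step]
  rw [Finset.prod_mul_distrib]
  have h1 : ∀ i : Fin n, (∏ j : Fin n, if i ≤ j then g i else 1) = g i ^ (n - (i : ℕ)) := by
    intro i
    rw [← Finset.prod_filter, Finset.prod_const]
    congr 1
    rw [show Finset.univ.filter (fun j : Fin n => i ≤ j) = Finset.Ici i by ext j; simp]
    exact Fin.card_Ici i
  have h2 : ∏ i : Fin n, (∏ j : Fin n, if i ≤ j then g j else 1)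
      = ∏ j : Fin n, g j ^ ((j : ℕ) + 1) := by
    rw [Finset.prod_comm]
    congr 1; funext j
    rw [← Finset.prod_filter, Finset.prod_const]
    congr 1
    rw [show Finset.univ.filter (fun i : Fin n => i ≤ j) = Finset.Iic j by ext i; simp]
    exact Fin.card_Iic j
  rw [h2]
  simp_rw [h1]
  rw [← Finset.prod_mul_distrib, ← Finset.prod_pow]
  congr 1; funext i
  rw [← pow_add]
  congr 1
  omega

lemma card_pairs {n : ℕ} :
    2 * Fintype.card {p : Fin n × Fin n // p.1 ≤ p.2} = n * (n + 1) := by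
  have h := prod_pairs (M := ℕ) (n := n) (fun _ => 2)
  simp only [Finset.prod_const, Finset.card_univ, Fintype.card_fin] at h
  have h2 : (2 * 2 : ℕ) = 2 ^ 2 := by norm_num
  rw [h2, ← pow_mul, ← pow_mul] at h
  have := Nat.pow_right_injective (le_refl 2) h
  omega

lemma icc_card_le {x y : ℝ} (hxy : x ≤ y) :
    ((Finset.Icc ⌈x⌉ ⌊y⌋).card : ℝ) ≤ y - x + 1 := by
  rcases le_or_gt ⌈x⌉ ⌊y⌋ with h | h
  · rw [Int.card_Icc]
    have he : ((⌊y⌋ + 1 - ⌈x⌉).toNat : ℝ) = ((⌊y⌋ : ℝ) + 1 - (⌈x⌉ : ℝ)) := by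
      rw [show ((⌊y⌋ + 1 - ⌈x⌉).toNat : ℝ) = (((⌊y⌋ + 1 - ⌈x⌉).toNat : ℤ) : ℝ) by push_cast; ring,
        Int.toNat_of_nonneg (by omega)]
      push_cast; ring
    rw [he]
    have h1 := Int.floor_le y
    have h2 := Int.le_ceil x
    linarith
  · rw [Finset.Icc_eq_empty (by exact_mod_cast not_le.mpr h)]
    simp
    linarith

set_option maxHeartbeats 2000000 in
noncomputable def Cval (n : ℕ) (r : ℝ) : ℝ :=
  (10 * r) ^ (Fintype.card {p : Fin n × Fin n // p.1 ≤ p.2})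
    * (r ^ n : ℝ) ^ (((n : ℝ) + 1) / 4)

lemma Cval_pos (n : ℕ) {r : ℝ} (hr : 1 ≤ r) : 0 < Cval n r := by
  have h0 : (0:ℝ) < r := by linarith
  unfold Cval
  positivity

set_option maxHeartbeats 2000000 in
lemma main_aux (r ε : ℝ) (hr : 1 ≤ r) (hε0 : 0 < ε) (hε2 : ε < 1/2)
    (k : ℕ) (hk : 2 ≤ k) (Y R : Matrix (Fin n) (Fin n) ℝ)
    (hYpd : Y.PosDef) (hRR : R * R = Y) (hRh : Rᴴ = R)
    (hred2 : (Y - r⁻¹ • diagPart Y).PosSemidef)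
    (hred3 : (r • diagPart Y - Y).PosSemidef)
    (hY1 : (Y - 1).PosSemidef)
    (SS : Set (Matrix (Fin n) (Fin n) ℝ))
    (hSSdef : SS = {T | IsHalfIntegral T ∧ ∀ μ ∈ spectrum ℝ (R * T * R),
        μ ∈ Set.Ioo ((k:ℝ)/(4*π) - (k:ℝ) ^ ((1:ℝ)/2 + ε))
          ((k:ℝ)/(4*π) + (k:ℝ) ^ ((1:ℝ)/2 + ε))}) :
    SS.Finite ∧ (SS.ncard : ℝ) ≤ Cval n r * (k : ℝ) ^ ((1 / 2 + ε) * (n * (n + 1) : ℝ) / 2) *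
        Y.det ^ (-((n : ℝ) + 1) / 4) := by
  classical
  have hr0 : (0:ℝ) < r := by linarith
  set δ : ℝ := (k:ℝ) ^ ((1:ℝ)/2 + ε) with hδdef
  set a : ℝ := (k:ℝ)/(4*π) - δ with hadef
  set b : ℝ := (k:ℝ)/(4*π) + δ with hbdef
  have hk1 : (1:ℝ) ≤ (k:ℝ) := by exact_mod_cast Nat.one_le_of_lt hk
  have hk0 : (0:ℝ) < (k:ℝ) := by linarith
  have hδ1 : 1 ≤ δ := Real.one_le_rpow hk1 (by linarith)
  have hδ0 : (0:ℝ) < δ := by linarith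
  have hkδ2 : (k:ℝ) ≤ δ^2 := by
    have h1 : ((k:ℝ) ^ ((1:ℝ)/2))^2 = (k:ℝ) := by
      rw [← Real.rpow_natCast ((k:ℝ) ^ ((1:ℝ)/2)) 2, ← Real.rpow_mul (le_of_lt hk0)]
      norm_num
    have h2 : (k:ℝ) ^ ((1:ℝ)/2) ≤ δ :=
      Real.rpow_le_rpow_of_exponent_le hk1 (by linarith)
    nlinarith [Real.rpow_nonneg (le_of_lt hk0) ((1:ℝ)/2)]
  have hδk : δ ≤ (k:ℝ) := by
    calc δ ≤ (k:ℝ) ^ (1:ℝ) := Real.rpow_le_rpow_of_exponent_le hk1 (by linarith)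
    _ = (k:ℝ) := Real.rpow_one _
  have hπ : (0:ℝ) < π := Real.pi_pos
  have hbpos : 0 < b := by
    have : 0 < (k:ℝ)/(4*π) := by positivity
    rw [hbdef]; linarith
  have hb2k : b ≤ 2 * (k:ℝ) := by
    have h1 : (k:ℝ)/(4*π) ≤ (k:ℝ) := by
      apply div_le_self (le_of_lt hk0)
      nlinarith [Real.pi_gt_three]
    rw [hbdef]; linarith
  have hdetY := hYpd.det_pos
  have hW : (Y⁻¹).PosDef := hYpd.inv
  have hWd : ∀ i, 0 ≤ Y⁻¹ i i := fun i => le_of_lt (pd_diag hW i)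
  have hWle : ∀ i, Y⁻¹ i i ≤ r / Y i i := fun i => inv_diag_le hYpd hr hred2 i
  have hYd1 : ∀ i, 1 ≤ Y i i := by
    intro i
    have := psd_diag hY1 i
    simp only [Matrix.sub_apply, Matrix.one_apply_eq] at this
    linarith
  have hYd0 : ∀ i, 0 < Y i i := fun i => lt_of_lt_of_le one_pos (hYd1 i)
  -- Loewner bounds for members
  have hTb : ∀ T ∈ SS, (T - a • Y⁻¹).PosSemidef ∧ (b • Y⁻¹ - T).PosSemidef := by
    intro T hT
    rw [hSSdef] at hT
    obtain ⟨⟨hTpd, hTdZ, hTZ⟩, hspec⟩ := hT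
    have hSh : (R * T * R).IsHermitian := by
      show (R * T * R)ᴴ = _
      rw [Matrix.conjTranspose_mul, Matrix.conjTranspose_mul, hRh, hTpd.1.eq]
      simp only [mul_assoc]
    have heigs : ∀ i, a < hSh.eigenvalues i ∧ hSh.eigenvalues i < b := by
      intro i
      have := hspec _ (hSh.eigenvalues_mem_spectrum_real i)
      exact ⟨this.1, this.2⟩
    have h1 := loewner_of_eig_ge hSh (fun i => le_of_lt (heigs i).1)
    have h2 := loewner_of_eig_le hSh (fun i => le_of_lt (heigs i).2)
    constructor
    · have h3 := conj_inv_psd hRh h1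
      rwa [Matrix.mul_sub, Matrix.sub_mul, conj_inv_S hYpd hRR T,
        conj_inv_smul_one hRR a] at h3
    · have h3 := conj_inv_psd hRh h2
      rwa [Matrix.mul_sub, Matrix.sub_mul, conj_inv_S hYpd hRR T,
        conj_inv_smul_one hRR b] at h3
  -- entry bounds for members
  have hentry : ∀ T ∈ SS, ∀ i j : Fin n,
      |T i j - a * Y⁻¹ i j| ≤ 2 * δ * Real.sqrt (Y⁻¹ i i * Y⁻¹ j j) := by
    intro T hT i j
    obtain ⟨hL, hU⟩ := hTb T hT
    have hMd : ∀ l, 0 ≤ T l l - a * Y⁻¹ l l := by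
      intro l
      have := psd_diag hL l
      simpa [Matrix.sub_apply, Matrix.smul_apply] using this
    have hMu : ∀ l, T l l - a * Y⁻¹ l l ≤ 2 * δ * Y⁻¹ l l := by
      intro l
      have := psd_diag hU l
      simp only [Matrix.sub_apply, Matrix.smul_apply, smul_eq_mul] at this
      have hba : b = a + 2 * δ := by rw [hadef, hbdef]; ring
      nlinarith [this]
    have hoff := psd_off hL i j
    simp only [Matrix.sub_apply, Matrix.smul_apply, smul_eq_mul] at hoff
    have hsq : (T i j - a * Y⁻¹ i j)^2 ≤ (2 * δ * Real.sqrt (Y⁻¹ i i * Y⁻¹ j j))^2 := by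
      have hs : (Real.sqrt (Y⁻¹ i i * Y⁻¹ j j))^2 = Y⁻¹ i i * Y⁻¹ j j :=
        Real.sq_sqrt (mul_nonneg (hWd i) (hWd j))
      have h1 : (T i i - a * Y⁻¹ i i) * (T j j - a * Y⁻¹ j j)
          ≤ (2 * δ * Y⁻¹ i i) * (2 * δ * Y⁻¹ j j) :=
        mul_le_mul (hMu i) (hMu j) (hMd j) (by nlinarith [hWd i, hδ0])
      calc (T i j - a * Y⁻¹ i j)^2 ≤ (T i i - a * Y⁻¹ i i) * (T j j - a * Y⁻¹ j j) := hoff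
      _ ≤ (2 * δ * Y⁻¹ i i) * (2 * δ * Y⁻¹ j j) := h1
      _ = (2 * δ * Real.sqrt (Y⁻¹ i i * Y⁻¹ j j))^2 := by rw [mul_pow, mul_pow, hs]; ring
    have habs : |T i j - a * Y⁻¹ i j| = Real.sqrt ((T i j - a * Y⁻¹ i j)^2) :=
      (Real.sqrt_sq_eq_abs _).symm
    rw [habs]
    calc Real.sqrt ((T i j - a * Y⁻¹ i j)^2)
        ≤ Real.sqrt ((2 * δ * Real.sqrt (Y⁻¹ i i * Y⁻¹ j j))^2) := Real.sqrt_le_sqrt hsq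
    _ = 2 * δ * Real.sqrt (Y⁻¹ i i * Y⁻¹ j j) := by
        apply Real.sqrt_sq
        positivity
  -- trivial case: empty set
  rcases Set.eq_empty_or_nonempty SS with hSe | hne
  · subst hSe
    refine ⟨Set.finite_empty, ?_⟩
    simp only [Set.ncard_empty, Nat.cast_zero]
    have h1 : (0:ℝ) < Cval n r := Cval_pos n hr
    have h2 : (0:ℝ) < (k : ℝ) ^ ((1 / 2 + ε) * (n * (n + 1) : ℝ) / 2) :=
      Real.rpow_pos_of_pos hk0 _
    have h3 : (0:ℝ) < Y.det ^ (-((n : ℝ) + 1) / 4) := Real.rpow_pos_of_pos hdetY _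
    positivity
  -- nonempty case: diagonal entries of Y are bounded
  have hYub : ∀ i, Y i i ≤ b * r := by
    intro i
    obtain ⟨T0, hT0⟩ := hne
    obtain ⟨hL, hU⟩ := hTb T0 hT0
    rw [hSSdef] at hT0
    obtain ⟨⟨hTpd, hTdZ, _⟩, _⟩ := hT0
    have hT1 : 1 ≤ T0 i i := by
      obtain ⟨z, hz⟩ := hTdZ i
      have hpos := pd_diag hTpd i
      rw [hz] at hpos ⊢
      exact_mod_cast (by exact_mod_cast hpos : (0:ℤ) < z)
    have hub : T0 i i ≤ b * Y⁻¹ i i := by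
      have := psd_diag hU i
      simp only [Matrix.sub_apply, Matrix.smul_apply, smul_eq_mul] at this
      linarith
    have hWr := hWle i
    have hY0 := hYd0 i
    have h1 : 1 ≤ b * (r / Y i i) := by
      calc (1:ℝ) ≤ T0 i i := hT1
      _ ≤ b * Y⁻¹ i i := hub
      _ ≤ b * (r / Y i i) := mul_le_mul_of_nonneg_left hWr (le_of_lt hbpos)
    have h2 := mul_le_mul_of_nonneg_left h1 (le_of_lt hY0)
    calc Y i i = Y i i * 1 := (mul_one _).symm
    _ ≤ Y i i * (b * (r / Y i i)) := h2
    _ = b * r := by field_simp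
  -- boxes
  let Q := {p : Fin n × Fin n // p.1 ≤ p.2}
  let ρ : Q → ℝ := fun q => 2 * δ * Real.sqrt (Y⁻¹ q.1.1 q.1.1 * Y⁻¹ q.1.2 q.1.2)
  let ctr : Q → ℝ := fun q => a * Y⁻¹ q.1.1 q.1.2
  let lo : Q → ℤ := fun q => ⌈2 * (ctr q - ρ q)⌉
  let hi : Q → ℤ := fun q => ⌊2 * (ctr q + ρ q)⌋
  let B : Finset (Q → ℤ) := Fintype.piFinset (fun q => Finset.Icc (lo q) (hi q))
  let Φ : Matrix (Fin n) (Fin n) ℝ → (Q → ℤ) := fun T q => round (2 * T q.1.1 q.1.2)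
  have hρ0 : ∀ q, 0 ≤ ρ q := by
    intro q
    have : 0 ≤ Real.sqrt (Y⁻¹ q.1.1 q.1.1 * Y⁻¹ q.1.2 q.1.2) := Real.sqrt_nonneg _
    positivity
  have himg : Φ '' SS ⊆ ↑B := by
    rintro _ ⟨T, hT, rfl⟩
    rw [Finset.mem_coe, Fintype.mem_piFinset]
    intro q
    rw [Finset.mem_Icc]
    have hE := hentry T hT q.1.1 q.1.2
    rw [abs_le] at hE
    have hTmem := hT
    rw [hSSdef] at hTmem
    obtain ⟨z, hz⟩ := hTmem.1.2.2 q.1.1 q.1.2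
    have hΦ : Φ T q = z := by
      simp only [Φ, hz, round_intCast]
    rw [hΦ]
    constructor
    · apply Int.ceil_le.mpr
      rw [← hz]
      simp only [ctr, ρ] at hE ⊢
      linarith [hE.1]
    · apply Int.le_floor.mpr
      rw [← hz]
      simp only [ctr, ρ] at hE ⊢
      linarith [hE.2]
  have hinj : Set.InjOn Φ SS := by
    intro T hT T' hT' heq
    have hTm := hT; have hTm' := hT'
    rw [hSSdef] at hTm hTm'
    have key : ∀ i j : Fin n, i ≤ j → T i j = T' i j := by
      intro i j hij
      obtain ⟨z, hz⟩ := hTm.1.2.2 i j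
      obtain ⟨z', hz'⟩ := hTm'.1.2.2 i j
      have h1 := congrFun heq (⟨(i, j), hij⟩ : Q)
      simp only [Φ, hz, hz', round_intCast] at h1
      have h2 : (z:ℝ) = (z':ℝ) := by exact_mod_cast h1
      have h3 : 2 * T i j = 2 * T' i j := by rw [hz, hz', h2]
      linarith
    ext i j
    rcases le_total i j with h | h
    · exact key i j h
    · rw [herm_apply hTm.1.1.1 j i, herm_apply hTm'.1.1.1 j i]
      exact key j i h
  have hfin : SS.Finite := Set.Finite.of_finite_image (B.finite_toSet.subset himg) hinj
  refine ⟨hfin, ?_⟩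
  -- cardinality comparison
  have hcount : (SS.ncard : ℝ) ≤ (B.card : ℝ) := by
    have h1 : (Φ '' SS).ncard = SS.ncard := Set.ncard_image_of_injOn hinj
    have h2 : (Φ '' SS).ncard ≤ B.card := by
      rw [← Set.ncard_coe_finset]
      exact Set.ncard_le_ncard himg B.finite_toSet
    exact_mod_cast h1 ▸ h2
  -- per-entry bound
  have hq : ∀ q : Q, ((Finset.Icc (lo q) (hi q)).card : ℝ) ≤
      10 * r * δ * (Y q.1.1 q.1.1 * Y q.1.2 q.1.2) ^ (-(1/4) : ℝ) := by
    intro q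
    set Yi := Y q.1.1 q.1.1 with hYi
    set Yj := Y q.1.2 q.1.2 with hYj
    have hYi1 : 1 ≤ Yi := hYd1 _
    have hYj1 : 1 ≤ Yj := hYd1 _
    have hYi0 : 0 < Yi := hYd0 _
    have hYj0 : 0 < Yj := hYd0 _
    have hYY0 : (0:ℝ) ≤ Yi * Yj := by positivity
    set u : ℝ := (Yi * Yj) ^ ((1/4 : ℝ)) with hudef
    have hu1 : 1 ≤ u := Real.one_le_rpow (by nlinarith) (by norm_num)
    have hu0 : 0 < u := by linarith
    have hu4 : u ^ (4:ℕ) = Yi * Yj := by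
      rw [hudef, ← Real.rpow_natCast ((Yi * Yj) ^ ((1/4:ℝ))) 4, ← Real.rpow_mul hYY0]
      norm_num
    have hu2rδ : u ≤ 2 * r * δ := by
      have hYYb : Yi * Yj ≤ (2 * r * δ)^(4:ℕ) := by
        have h1 : Yi ≤ 2 * (k:ℝ) * r := le_trans (hYub _) (by nlinarith)
        have h2 : Yj ≤ 2 * (k:ℝ) * r := le_trans (hYub _) (by nlinarith)
        have h3 : Yi * Yj ≤ (2 * (k:ℝ) * r)^2 := by nlinarith
        have h4 : ((k:ℝ))^2 ≤ (δ^2)^2 := by nlinarith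
        calc Yi * Yj ≤ (2 * (k:ℝ) * r)^2 := h3
        _ = 4 * r^2 * ((k:ℝ))^2 := by ring
        _ ≤ 4 * r^2 * (δ^2)^2 := by nlinarith
        _ = (4 * r^2) * δ^4 := by ring
        _ ≤ (16 * r^4) * δ^4 := by
            have h5 : 4 * r^2 ≤ 16 * r^4 := by
              have h7 : (1:ℝ) ≤ r^2 := by nlinarith
              nlinarith [h7, sq_nonneg r]
            have h6 : (0:ℝ) ≤ δ^4 := by positivity
            exact mul_le_mul_of_nonneg_right h5 h6
        _ = (2 * r * δ)^(4:ℕ) := by ring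
      calc u = (Yi * Yj) ^ ((1/4 : ℝ)) := hudef
      _ ≤ ((2 * r * δ)^(4:ℕ)) ^ ((1/4 : ℝ)) := Real.rpow_le_rpow hYY0 hYYb (by norm_num)
      _ = 2 * r * δ := by
          rw [← Real.rpow_natCast (2 * r * δ) 4, ← Real.rpow_mul (by positivity)]
          norm_num
    -- bound sqrt term
    have hsqrt : Real.sqrt (Y⁻¹ q.1.1 q.1.1 * Y⁻¹ q.1.2 q.1.2) ≤ r / u^2 := by
      have h1 : Y⁻¹ q.1.1 q.1.1 * Y⁻¹ q.1.2 q.1.2 ≤ (r / u^2)^2 := by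
        have hWi := hWle q.1.1
        have hWj := hWle q.1.2
        have hWi0 := hWd q.1.1
        have hWj0 := hWd q.1.2
        have h2 : Y⁻¹ q.1.1 q.1.1 * Y⁻¹ q.1.2 q.1.2 ≤ (r / Yi) * (r / Yj) := by
          apply mul_le_mul hWi hWj hWj0
          positivity
        have h3 : (r / Yi) * (r / Yj) = (r / u^2)^2 := by
          have hu4' : (u^2)^2 = Yi * Yj := by rw [← hu4]; ring
          field_simp
          nlinarith [hu4']
        linarith [h2, h3.le, h3.ge]
      calc Real.sqrt (Y⁻¹ q.1.1 q.1.1 * Y⁻¹ q.1.2 q.1.2) ≤ Real.sqrt ((r / u^2)^2) :=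
        Real.sqrt_le_sqrt h1
      _ = r / u^2 := Real.sqrt_sq (by positivity)
    -- interval card bound
    have hcard : ((Finset.Icc (lo q) (hi q)).card : ℝ) ≤ 4 * ρ q + 1 := by
      have h1 := icc_card_le (x := 2 * (ctr q - ρ q)) (y := 2 * (ctr q + ρ q))
        (by have := hρ0 q; linarith)
      calc ((Finset.Icc (lo q) (hi q)).card : ℝ)
          ≤ 2 * (ctr q + ρ q) - 2 * (ctr q - ρ q) + 1 := h1
      _ = 4 * ρ q + 1 := by ring
    have hrho : ρ q ≤ 2 * δ * (r / u^2) := by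
      simp only [ρ]
      have h2δ : (0:ℝ) ≤ 2 * δ := by linarith
      nlinarith [hsqrt, hδ0]
    have hkey : 8 * δ * r + u^2 ≤ 10 * r * δ * u := by
      nlinarith [hu1, hu2rδ, hδ1, hr, mul_le_mul_of_nonneg_left hu2rδ (le_of_lt hu0),
        mul_le_mul_of_nonneg_left hu1 (by positivity : (0:ℝ) ≤ 8 * δ * r)]
    have hfinal : 4 * ρ q + 1 ≤ 10 * r * δ * u⁻¹ := by
      have h1 : 4 * ρ q + 1 ≤ 8 * δ * (r / u^2) + 1 := by linarith [hrho]
      have h2 : 8 * δ * (r / u^2) + 1 = (8 * δ * r + u^2) / u^2 := by field_simp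
      have h3 : (8 * δ * r + u^2) / u^2 ≤ (10 * r * δ * u) / u^2 := by gcongr
      have h4 : (10 * r * δ * u) / u^2 = 10 * r * δ * u⁻¹ := by
        field_simp
      linarith [h2.le, h2.ge, h4.le, h4.ge]
    calc ((Finset.Icc (lo q) (hi q)).card : ℝ) ≤ 4 * ρ q + 1 := hcard
    _ ≤ 10 * r * δ * u⁻¹ := hfinal
    _ = 10 * r * δ * (Yi * Yj) ^ (-(1/4) : ℝ) := by
        rw [Real.rpow_neg hYY0, hudef]
  -- product bound
  set N := Fintype.card Q with hNdef
  have hBcard : (B.card : ℝ) ≤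
      ∏ q : Q, (10 * r * δ * (Y q.1.1 q.1.1 * Y q.1.2 q.1.2) ^ (-(1/4) : ℝ)) := by
    have h1 : B.card = ∏ q : Q, (Finset.Icc (lo q) (hi q)).card := Fintype.card_piFinset _
    rw [h1]
    push_cast
    exact Finset.prod_le_prod (fun q _ => by positivity) (fun q _ => hq q)
  set P : ℝ := ∏ i, Y i i with hPdef
  have hP0 : 0 < P := Finset.prod_pos (fun i _ => hYd0 i)
  set c : ℝ := ((n:ℝ)+1)/4 with hcdef
  have hc0 : 0 ≤ c := by positivity
  have hsplit : ∏ q : Q, (10 * r * δ * (Y q.1.1 q.1.1 * Y q.1.2 q.1.2) ^ (-(1/4) : ℝ))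
      = (10 * r * δ)^N * P ^ (-c) := by
    rw [Finset.prod_mul_distrib, Finset.prod_const, Finset.card_univ]
    congr 1
    rw [Real.finset_prod_rpow _ _ (fun q _ => by
      have := hYd0 q.1.1; have := hYd0 q.1.2; positivity) _]
    rw [show (∏ q : Q, Y q.1.1 q.1.1 * Y q.1.2 q.1.2) = P ^ (n+1) from
      prod_pairs (g := fun i => Y i i)]
    rw [← Real.rpow_natCast P (n+1), ← Real.rpow_mul (le_of_lt hP0)]
    congr 1
    rw [hcdef]
    push_cast
    ring
  have hdet' : Y.det ≤ r^n * P := det_le_r_prod hYpd hRR hRh hred3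
  have hPbound : P ^ (-c) ≤ Y.det ^ (-c) * (r^n : ℝ)^c := by
    have hx0 : 0 < Y.det / r^n := by positivity
    have hxP : Y.det / r^n ≤ P := by
      rw [div_le_iff₀ (by positivity)]
      calc Y.det ≤ r^n * P := hdet'
      _ = P * r^n := by ring
    have h1 : (Y.det / r^n) ^ c ≤ P ^ c := Real.rpow_le_rpow (le_of_lt hx0) hxP hc0
    have h2 : P ^ (-c) ≤ (Y.det / r^n) ^ (-c) := by
      rw [Real.rpow_neg (le_of_lt hP0), Real.rpow_neg (le_of_lt hx0)]
      exact inv_anti₀ (Real.rpow_pos_of_pos hx0 c) h1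
    calc P ^ (-c) ≤ (Y.det / r^n) ^ (-c) := h2
    _ = Y.det ^ (-c) * (r^n:ℝ)^c := by
        rw [Real.div_rpow (le_of_lt hdetY) (by positivity : (0:ℝ) ≤ r^n),
          Real.rpow_neg (by positivity : (0:ℝ) ≤ r^n) c, div_eq_mul_inv, inv_inv]
  have hδN : (10 * r * δ)^N
      = (10*r)^N * (k:ℝ) ^ ((1 / 2 + ε) * (n * (n + 1) : ℝ) / 2) := by
    rw [mul_pow]
    congr 1
    rw [hδdef, ← Real.rpow_natCast ((k:ℝ) ^ ((1:ℝ)/2 + ε)) N,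
      ← Real.rpow_mul (le_of_lt hk0)]
    congr 1
    have h2N : (2 * N : ℕ) = n * (n + 1) := card_pairs
    have hNcast : (N:ℝ) = (n * (n+1) : ℝ)/2 := by
      have h3 : (2:ℝ) * (N:ℝ) = (n:ℝ) * ((n:ℝ)+1) := by exact_mod_cast h2N
      linarith
    rw [hNcast]
    ring
  have hCval : Cval n r = (10*r)^N * (r^n:ℝ)^c := rfl
  have hexp : -((n : ℝ) + 1) / 4 = -c := by rw [hcdef]; ring
  calc (SS.ncard : ℝ) ≤ (B.card : ℝ) := hcount
  _ ≤ ∏ q : Q, (10 * r * δ * (Y q.1.1 q.1.1 * Y q.1.2 q.1.2) ^ (-(1/4) : ℝ)) := hBcard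
  _ = (10 * r * δ)^N * P ^ (-c) := hsplit
  _ = (10*r)^N * (k:ℝ) ^ ((1 / 2 + ε) * (n * (n + 1) : ℝ) / 2) * P ^ (-c) := by
      rw [hδN]
  _ ≤ (10*r)^N * (k:ℝ) ^ ((1 / 2 + ε) * (n * (n + 1) : ℝ) / 2)
        * (Y.det ^ (-c) * (r^n:ℝ)^c) := by
      apply mul_le_mul_of_nonneg_left hPbound
      have h1 : (0:ℝ) ≤ (10*r)^N := by positivity
      have h2 : (0:ℝ) ≤ (k:ℝ) ^ ((1 / 2 + ε) * (n * (n + 1) : ℝ) / 2) :=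
        Real.rpow_nonneg (le_of_lt hk0) _
      positivity
  _ = Cval n r * (k : ℝ) ^ ((1 / 2 + ε) * (n * (n + 1) : ℝ) / 2)
        * Y.det ^ (-((n : ℝ) + 1) / 4) := by
      rw [hCval, hexp]
      ring

lemma sqrt_mul_self' {A : Matrix (Fin n) (Fin n) ℝ} (hA : A.PosSemidef) :
    hA.sqrt * hA.sqrt = A := by
  have hsp := hA.1.spectral_theorem
  simp only [Unitary.conjStarAlgAut_apply] at hsp
  have hUU : (star hA.1.eigenvectorUnitary : Matrix (Fin n) (Fin n) ℝ) *
      hA.1.eigenvectorUnitary.1 = 1 := Unitary.coe_star_mul_self _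
  have hD : Matrix.diagonal ((↑) ∘ (√·) ∘ hA.1.eigenvalues) *
      Matrix.diagonal ((↑) ∘ (√·) ∘ hA.1.eigenvalues)
      = (Matrix.diagonal (RCLike.ofReal ∘ hA.1.eigenvalues) : Matrix (Fin n) (Fin n) ℝ) := by
    rw [Matrix.diagonal_mul_diagonal]
    congr 1; funext i
    simp [Real.mul_self_sqrt (hA.eigenvalues_nonneg i)]
  unfold Matrix.PosSemidef.sqrt
  rw [show ∀ X D S : Matrix (Fin n) (Fin n) ℝ, X * D * S * (X * D * S) = X * (D * (S * X) * D) * S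
    from fun _ _ _ => by simp only [mul_assoc], hUU, mul_one, hD]
  exact hsp.symm

lemma sqrt_herm' {A : Matrix (Fin n) (Fin n) ℝ} (hA : A.PosSemidef) :
    hA.sqrtᴴ = hA.sqrt := by
  simp [Matrix.PosSemidef.sqrt, Matrix.conjTranspose_mul, Matrix.diagonal_conjTranspose,
    Matrix.star_eq_conjTranspose, mul_assoc]

end Statement2Aux

theorem statement2 {n : ℕ} (hn : 1 ≤ n) (r ε : ℝ) (hr : 1 ≤ r)
    (hε : ε ∈ Set.Ioo (0 : ℝ) (1 / 2)) :
    ∃ C : ℝ, 0 < C ∧ ∀ k : ℕ, 2 ≤ k →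
      ∀ Y : Matrix (Fin n) (Fin n) ℝ, ∀ hred : MinkReduced r Y,
        LoewnerLE 1 Y →
        {T : Matrix (Fin n) (Fin n) ℝ | IsHalfIntegral T ∧
            ∀ μ ∈ spectrum ℝ
              (hred.1.posSemidef.sqrt * T * hred.1.posSemidef.sqrt),
              μ ∈ Set.Ioo ((k : ℝ) / (4 * π) - (k : ℝ) ^ ((1 : ℝ) / 2 + ε))
                ((k : ℝ) / (4 * π) + (k : ℝ) ^ ((1 : ℝ) / 2 + ε))}.Finite ∧
        ({T : Matrix (Fin n) (Fin n) ℝ | IsHalfIntegral T ∧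
            ∀ μ ∈ spectrum ℝ
              (hred.1.posSemidef.sqrt * T * hred.1.posSemidef.sqrt),
              μ ∈ Set.Ioo ((k : ℝ) / (4 * π) - (k : ℝ) ^ ((1 : ℝ) / 2 + ε))
                ((k : ℝ) / (4 * π) + (k : ℝ) ^ ((1 : ℝ) / 2 + ε))}.ncard : ℝ)
          ≤ C * (k : ℝ) ^ ((1 / 2 + ε) * (n * (n + 1) : ℝ) / 2) *
              Y.det ^ (-((n : ℝ) + 1) / 4) := by
  obtain ⟨hε0, hε2⟩ := hε
  refine ⟨Statement2Aux.Cval n r, Statement2Aux.Cval_pos n hr, ?_⟩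
  intro k hk Y hred hY1
  exact Statement2Aux.main_aux r ε hr hε0 hε2 k hk Y hred.1.posSemidef.sqrt hred.1
    (Statement2Aux.sqrt_mul_self' hred.1.posSemidef) (Statement2Aux.sqrt_herm' hred.1.posSemidef)
    hred.2.1 hred.2.2 hY1 _ rfl
end

section
/- Let n ≥ 1 be an integer, let Z = X + iY be an n×n complex symmetric matrix with X, Y real symmetric and Y positive definite, and let R be any n×n real symmetric matrix. Then |det(Z + R)| ≥ det(Y). -/
open scoped Real
open Matrix
open scoped ComplexOrder

/-- For a complex positive semidefinite matrix `P`, `1 ≤ re (det (1 + P))`. -/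
lemma lemA {n : ℕ} {P : Matrix (Fin n) (Fin n) ℂ} (hP : P.PosSemidef) :
    1 ≤ ((1 + P).det).re := by
  have hH := hP.isHermitian
  have hspec := hH.spectral_theorem
  set U : Matrix (Fin n) (Fin n) ℂ := (hH.eigenvectorUnitary : Matrix (Fin n) (Fin n) ℂ)
  have hUU : U * star U = 1 := (Matrix.mem_unitaryGroup_iff).mp hH.eigenvectorUnitary.2
  have h1 : 1 + P = U * (1 + Matrix.diagonal (RCLike.ofReal ∘ hH.eigenvalues)) * star U := by
    rw [Matrix.mul_add, Matrix.add_mul, Matrix.mul_one, hUU]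
    exact congrArg (1 + ·) hspec
  have hdet : (1 + P).det = ((1 : Matrix (Fin n) (Fin n) ℂ) + Matrix.diagonal (RCLike.ofReal ∘ hH.eigenvalues)).det := by
    rw [h1, Matrix.det_mul_right_comm, hUU, Matrix.one_mul]
  have hdiag : (1 : Matrix (Fin n) (Fin n) ℂ) + Matrix.diagonal (RCLike.ofReal ∘ hH.eigenvalues)
      = Matrix.diagonal (fun i => (1 : ℂ) + (hH.eigenvalues i : ℂ)) := by
    rw [← Matrix.diagonal_one, Matrix.diagonal_add]
    rfl
  rw [hdet, hdiag, Matrix.det_diagonal]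
  have hcast : (∏ i, ((1 : ℂ) + (hH.eigenvalues i : ℂ)))
      = ((∏ i, (1 + hH.eigenvalues i) : ℝ) : ℂ) := by
    push_cast
    rfl
  rw [hcast, Complex.ofReal_re]
  calc (1:ℝ) = ∏ _i : Fin n, (1:ℝ) := by simp
    _ ≤ ∏ i, (1 + hH.eigenvalues i) :=
      Finset.prod_le_prod (fun i _ => zero_le_one)
        (fun i _ => by linarith [hP.eigenvalues_nonneg i])

/-- For a Hermitian complex matrix `B`, `1 ≤ |det (B + iI)|`. -/
lemma lemB {n : ℕ} {B : Matrix (Fin n) (Fin n) ℂ} (hB : B.IsHermitian) :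
    1 ≤ ‖(B + Complex.I • 1).det‖ := by
  set d : ℂ := (B + Complex.I • 1).det with hd
  have hct : (B + Complex.I • (1 : Matrix (Fin n) (Fin n) ℂ))ᴴ = B - Complex.I • 1 := by
    rw [Matrix.conjTranspose_add, Matrix.conjTranspose_smul, hB, Matrix.conjTranspose_one]
    simp [sub_eq_add_neg, Complex.conj_I, neg_smul]
  have hmul : (B - Complex.I • (1 : Matrix (Fin n) (Fin n) ℂ)) * (B + Complex.I • 1)
      = 1 + Bᴴ * B := by
    rw [hB]
    rw [Matrix.sub_mul, Matrix.mul_add, Matrix.mul_add, Matrix.smul_mul, Matrix.mul_smul,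
      Matrix.mul_smul, Matrix.one_mul, Matrix.mul_one]
    simp only [smul_smul, Complex.I_mul_I, neg_smul, one_smul, Matrix.mul_one]
    abel
  have hconj : (starRingEnd ℂ) d = (B - Complex.I • 1).det := by
    rw [hd, ← hct, Matrix.det_conjTranspose]
    rfl
  have hns : ((Complex.normSq d : ℝ) : ℂ) = (1 + Bᴴ * B).det := by
    rw [Complex.normSq_eq_conj_mul_self, hconj, hd, ← Matrix.det_mul, hmul]
  have hP : (Bᴴ * B).PosSemidef := Matrix.posSemidef_conjTranspose_mul_self B
  have h1 : 1 ≤ Complex.normSq d := by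
    have h2 := lemA hP
    have hre : Complex.normSq d = ((1 + Bᴴ * B).det).re := by
      rw [← hns, Complex.ofReal_re]
    linarith
  have habs : ‖d‖ ^ 2 = Complex.normSq d := Complex.sq_norm d
  nlinarith [norm_nonneg d]

open scoped MatrixOrder in
lemma sqrtAux {n : ℕ} {Y : Matrix (Fin n) (Fin n) ℝ} (hY : Y.PosDef) :
    ∃ S : Matrix (Fin n) (Fin n) ℝ, S * S = Y ∧ S.IsHermitian :=
  ⟨CFC.sqrt Y, CFC.sqrt_mul_sqrt_self Y hY.posSemidef.nonneg,
    (CFC.sqrt_nonneg Y).posSemidef.isHermitian⟩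

/-- `Z = X + iY` as a complex matrix. -/
noncomputable def siegelZ {n : ℕ} (X Y : Matrix (Fin n) (Fin n) ℝ) :
    Matrix (Fin n) (Fin n) ℂ :=
  X.map (fun x => (x : ℂ)) + Complex.I • Y.map (fun x => (x : ℂ))

theorem statement8 {n : ℕ} (hn : 1 ≤ n) (X Y R : Matrix (Fin n) (Fin n) ℝ)
    (hX : X.IsSymm) (hYsymm : Y.IsSymm) (hY : Y.PosDef) (hR : R.IsSymm) :
    Y.det ≤ ‖(siegelZ X Y + R.map (fun x => (x : ℂ))).det‖ := by
  classical
  have hmapc : ∀ (M : Matrix (Fin n) (Fin n) ℝ),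
      M.map (fun x => (x : ℂ)) = M.map ⇑Complex.ofRealHom := fun M => rfl
  set A : Matrix (Fin n) (Fin n) ℝ := X + R with hA
  have hAsymm : A.IsSymm := hX.add hR
  have hM : siegelZ X Y + R.map (fun x => (x : ℂ))
      = A.map ⇑Complex.ofRealHom + Complex.I • Y.map ⇑Complex.ofRealHom := by
    rw [siegelZ, hmapc, hmapc, hmapc, hA, Matrix.map_add _ (map_add Complex.ofRealHom) X R]
    abel
  set Ac := A.map ⇑Complex.ofRealHom with hAc
  set Yc := Y.map ⇑Complex.ofRealHom with hYc
  have hAcherm : Ac.IsHermitian := by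
    ext i j
    simp only [hAc, Matrix.conjTranspose_apply, Matrix.map_apply, Complex.ofRealHom_eq_coe,
      RCLike.star_def, Complex.conj_ofReal]
    exact_mod_cast congrFun (congrFun hAsymm i) j
  -- the real square root of Y
  obtain ⟨S₀, hS0sq, hS0herm⟩ := sqrtAux hY
  have hS0det : S₀.det ≠ 0 := by
    intro h
    have : Y.det = 0 := by rw [← hS0sq, Matrix.det_mul, h, mul_zero]
    exact (hY.det_pos.ne' this)
  set Sc : Matrix (Fin n) (Fin n) ℂ := S₀.map ⇑Complex.ofRealHom with hSc
  have hScdet : Sc.det = (S₀.det : ℂ) := (RingHom.map_det Complex.ofRealHom S₀).symm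
  have hScunit : IsUnit Sc.det := by
    rw [hScdet]; exact isUnit_iff_ne_zero.mpr (by exact_mod_cast hS0det)
  have hScSc : Sc * Sc = Yc := by rw [hSc, hYc, ← hS0sq, Matrix.map_mul]
  have hScherm : Scᴴ = Sc := by
    ext i j
    simp only [hSc, Matrix.conjTranspose_apply, Matrix.map_apply, Complex.ofRealHom_eq_coe,
      RCLike.star_def, Complex.conj_ofReal]
    exact_mod_cast congrFun (congrFun hS0herm i) j
  have hinv1 : Sc * Sc⁻¹ = 1 := Matrix.mul_nonsing_inv Sc hScunit
  have hinv2 : Sc⁻¹ * Sc = 1 := Matrix.nonsing_inv_mul Sc hScunit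
  set B : Matrix (Fin n) (Fin n) ℂ := Sc⁻¹ * Ac * Sc⁻¹ with hB
  have hinvherm : Sc⁻¹ᴴ = Sc⁻¹ := by rw [Matrix.conjTranspose_nonsing_inv, hScherm]
  have hBherm : B.IsHermitian := by
    show Bᴴ = B
    rw [hB, Matrix.conjTranspose_mul, Matrix.conjTranspose_mul, hinvherm, hAcherm.eq]
    rw [Matrix.mul_assoc]
  have hfact : Ac + Complex.I • Yc = Sc * (B + Complex.I • 1) * Sc := by
    rw [Matrix.mul_add, Matrix.add_mul, hB]
    have h1 : Sc * (Sc⁻¹ * Ac * Sc⁻¹) * Sc = Ac := by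
      rw [← Matrix.mul_assoc, ← Matrix.mul_assoc, hinv1, Matrix.one_mul, Matrix.mul_assoc,
        hinv2, Matrix.mul_one]
    have h2 : Sc * (Complex.I • (1 : Matrix (Fin n) (Fin n) ℂ)) * Sc = Complex.I • Yc := by
      rw [Matrix.mul_smul, Matrix.mul_one, Matrix.smul_mul, hScSc]
    rw [h1, h2]
  rw [hM, hfact, Matrix.det_mul, Matrix.det_mul]
  have hdetY : Sc.det * (B + Complex.I • 1).det * Sc.det
      = (Y.det : ℂ) * (B + Complex.I • 1).det := by
    have hYd : (Y.map ⇑Complex.ofRealHom).det = (Y.det : ℂ) :=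
      (RingHom.map_det Complex.ofRealHom Y).symm
    rw [mul_comm, ← mul_assoc, ← Matrix.det_mul, hScSc, hYc, hYd]
  rw [hdetY, norm_mul]
  have habsY : ‖((Y.det : ℂ))‖ = Y.det := by
    rw [Complex.norm_real, Real.norm_eq_abs, abs_of_pos hY.det_pos]
  rw [habsY]
  nlinarith [lemB hBherm, hY.det_pos]
end

section
/- Let m ≥ 1 be an integer, let J denote the 4×4 matrix with 2×2 block form [[0, −1₂],[1₂, 0]], let S(m) := {M ∈ M₄(ℤ) : Mᵀ J M = m·J}, and let Γ₂ := Sp₄(ℤ) = {γ ∈ M₄(ℤ) : γᵀ J γ = J} act on S(m) by left multiplication. Then the number of orbits of this action (the number of right cosets Γ₂\S(m)) is at most m³ · σ₀(m)², where σ₀(m) denotes the number of positive divisors of m. -/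
open scoped Matrix

/-- The standard symplectic form `J = [[0, −1₂],[1₂, 0]]` as a `4 × 4` integer
matrix (indexed by `Fin 2 ⊕ Fin 2`). -/
def Jsymp : Matrix (Fin 2 ⊕ Fin 2) (Fin 2 ⊕ Fin 2) ℤ :=
  Matrix.fromBlocks 0 (-1) 1 0

/-- `S(m)`: integer matrices `M` with `Mᵀ J M = m • J`. -/
def Sm (m : ℕ) : Set (Matrix (Fin 2 ⊕ Fin 2) (Fin 2 ⊕ Fin 2) ℤ) :=
  {M | Mᵀ * Jsymp * M = (m : ℤ) • Jsymp}

/-- `Γ₂ = Sp₄(ℤ)`: integer matrices `γ` with `γᵀ J γ = J`. -/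
def Gamma2 : Set (Matrix (Fin 2 ⊕ Fin 2) (Fin 2 ⊕ Fin 2) ℤ) :=
  {γ | γᵀ * Jsymp * γ = Jsymp}


open Matrix

abbrev M2' := Matrix (Fin 2) (Fin 2) ℤ
abbrev M4' := Matrix (Fin 2 ⊕ Fin 2) (Fin 2 ⊕ Fin 2) ℤ

lemma transpose_fin2 (a b c d : ℤ) : (!![a,b;c,d])ᵀ = !![a,c;b,d] := by
  ext i j; fin_cases i <;> fin_cases j <;> simp

lemma gamma2_mul {α β : M4'} (hα : α ∈ Gamma2) (hβ : β ∈ Gamma2) : α * β ∈ Gamma2 := by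
  have hα' : αᵀ * Jsymp * α = Jsymp := hα
  have hβ' : βᵀ * Jsymp * β = Jsymp := hβ
  show (α*β)ᵀ * Jsymp * (α*β) = Jsymp
  rw [Matrix.transpose_mul]
  calc βᵀ * αᵀ * Jsymp * (α * β) = βᵀ * (αᵀ * Jsymp * α) * β := by
        simp only [Matrix.mul_assoc]
    _ = Jsymp := by rw [hα']; exact hβ'

lemma one_mem_gamma2 : (1 : M4') ∈ Gamma2 := by
  show (1:M4')ᵀ * Jsymp * 1 = Jsymp; simp

/-- key workhorse: block criterion for membership in `Gamma2`. -/
lemma gamma2_blocks (P Q R S : M2')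
    (h1 : Rᵀ*P = Pᵀ*R) (h2 : Pᵀ*S - Rᵀ*Q = 1) (h4 : Sᵀ*Q = Qᵀ*S) :
    fromBlocks P Q R S ∈ Gamma2 := by
  have h3 : Sᵀ*P - Qᵀ*R = 1 := by
    have := congrArg Matrix.transpose h2
    simpa [Matrix.transpose_sub, Matrix.transpose_mul] using this
  show (fromBlocks P Q R S)ᵀ * Jsymp * fromBlocks P Q R S = Jsymp
  rw [Jsymp, Matrix.fromBlocks_transpose, Matrix.fromBlocks_multiply,
    Matrix.fromBlocks_multiply]
  refine (Matrix.fromBlocks_inj).mpr ⟨?_, ?_, ?_, ?_⟩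
  · simp only [Matrix.mul_zero, Matrix.mul_one, Matrix.mul_neg, 
      zero_add, add_zero, Matrix.neg_mul]
    rw [h1]; abel
  · simp only [Matrix.mul_zero, Matrix.mul_one, Matrix.mul_neg, zero_add, add_zero,
      Matrix.neg_mul]
    have : Rᵀ*Q + -(Pᵀ*S) = -(1:M2') := by rw [← h2]; abel
    rw [this]
  · simp only [Matrix.mul_zero, Matrix.mul_one, Matrix.mul_neg, zero_add, add_zero,
      Matrix.neg_mul]
    have : Sᵀ*P + -(Qᵀ*R) = (1:M2') := by rw [← h3]; abel
    rw [this]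
  · simp only [Matrix.mul_zero, Matrix.mul_one, Matrix.mul_neg, zero_add, add_zero,
      Matrix.neg_mul]
    rw [h4]; abel

/-- `SRel m M N`: `N ∈ S(m)` and `M = γ N` for some `γ ∈ Γ₂`. -/
def SRel (m : ℕ) (M N : M4') : Prop := N ∈ Sm m ∧ ∃ γ ∈ Gamma2, M = γ * N

lemma rel_refl {m : ℕ} {M : M4'} (hM : M ∈ Sm m) : SRel m M M :=
  ⟨hM, 1, one_mem_gamma2, (one_mul M).symm⟩

lemma rel_trans {m : ℕ} {M N P : M4'} (h1 : SRel m M N) (h2 : SRel m N P) : SRel m M P := by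
  obtain ⟨_, γ₁, hγ₁, e₁⟩ := h1
  obtain ⟨hP, γ₂, hγ₂, e₂⟩ := h2
  exact ⟨hP, γ₁ * γ₂, gamma2_mul hγ₁ hγ₂, by rw [e₁, e₂, Matrix.mul_assoc]⟩

/-- apply an invertible symplectic transformation `γ` (with explicit inverse `γ'`)
to the current representative. -/
lemma rel_step {m : ℕ} {M N : M4'} (h : SRel m M N) (γ γ' : M4')
    (hγ' : γ' ∈ Gamma2) (hinv : γ' * γ = 1) : SRel m M (γ * N) := by
  obtain ⟨hN, γ₀, hγ₀, e₀⟩ := h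
  have hNe : N = γ' * (γ * N) := by rw [← Matrix.mul_assoc, hinv, one_mul]
  have key : ∀ X : M4', (γ' * X)ᵀ * Jsymp * (γ' * X) = Xᵀ * Jsymp * X := by
    intro X
    have hγ'' : γ'ᵀ * Jsymp * γ' = Jsymp := hγ'
    calc (γ' * X)ᵀ * Jsymp * (γ' * X)
        = Xᵀ * (γ'ᵀ * Jsymp * γ') * X := by
          rw [Matrix.transpose_mul]; simp only [Matrix.mul_assoc]
      _ = Xᵀ * Jsymp * X := by rw [hγ'']
  refine ⟨?_, γ₀ * γ', gamma2_mul hγ₀ hγ', by rw [Matrix.mul_assoc, ← hNe]; exact e₀⟩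
  show (γ*N)ᵀ * Jsymp * (γ*N) = (m : ℤ) • Jsymp
  rw [← key (γ*N), ← hNe]
  exact hN

/-! ### Generators -/

/-- symplectic `SL₂` embedded on the coordinate pair `(x₁, y₁)`. -/
def E0 (u v w z : ℤ) : M4' :=
  fromBlocks !![u,0;0,1] !![v,0;0,0] !![w,0;0,0] !![z,0;0,1]

/-- symplectic `SL₂` embedded on the coordinate pair `(x₂, y₂)`. -/
def E1 (u v w z : ℤ) : M4' :=
  fromBlocks !![1,0;0,u] !![0,0;0,v] !![0,0;0,w] !![1,0;0,z]

/-- block-diagonal symplectic matrices. -/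
def G (U W : M2') : M4' := fromBlocks U 0 0 W

/-- unipotent symplectic matrices. -/
def T (S : M2') : M4' := fromBlocks 1 S 0 1

lemma E0_mem (u v w z : ℤ) (h : u*z - v*w = 1) : E0 u v w z ∈ Gamma2 := by
  refine gamma2_blocks _ _ _ _ ?_ ?_ ?_ <;>
    · try simp only [transpose_fin2]
      ext i j
      fin_cases i <;> fin_cases j <;>
        simp [Matrix.mul_apply, Fin.sum_univ_two] <;> linarith

lemma E1_mem (u v w z : ℤ) (h : u*z - v*w = 1) : E1 u v w z ∈ Gamma2 := by
  refine gamma2_blocks _ _ _ _ ?_ ?_ ?_ <;>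
    · try simp only [transpose_fin2]
      ext i j
      fin_cases i <;> fin_cases j <;>
        simp [Matrix.mul_apply, Fin.sum_univ_two] <;> linarith

lemma G_mem (U W : M2') (h : Uᵀ * W = 1) : G U W ∈ Gamma2 := by
  refine gamma2_blocks _ _ _ _ ?_ ?_ ?_ <;> simp [h]

lemma T_mem (S : M2') (h : Sᵀ = S) : T S ∈ Gamma2 := by
  refine gamma2_blocks _ _ _ _ ?_ ?_ ?_ <;> simp [h]

lemma E0_inv (u v w z : ℤ) (h : u*z - v*w = 1) :
    E0 z (-v) (-w) u * E0 u v w z = 1 := by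
  rw [E0, E0, Matrix.fromBlocks_multiply, ← Matrix.fromBlocks_one]
  refine Matrix.fromBlocks_inj.mpr ⟨?_, ?_, ?_, ?_⟩ <;>
    · try simp only [transpose_fin2]
      ext i j
      fin_cases i <;> fin_cases j <;>
        simp [Matrix.mul_apply, Fin.sum_univ_two] <;> linarith

lemma E1_inv (u v w z : ℤ) (h : u*z - v*w = 1) :
    E1 z (-v) (-w) u * E1 u v w z = 1 := by
  rw [E1, E1, Matrix.fromBlocks_multiply, ← Matrix.fromBlocks_one]
  refine Matrix.fromBlocks_inj.mpr ⟨?_, ?_, ?_, ?_⟩ <;>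
    · try simp only [transpose_fin2]
      ext i j
      fin_cases i <;> fin_cases j <;>
        simp [Matrix.mul_apply, Fin.sum_univ_two] <;> linarith

lemma G_inv (U W U' W' : M2') (h1 : U' * U = 1) (h2 : W' * W = 1) :
    G U' W' * G U W = 1 := by
  rw [G, G, Matrix.fromBlocks_multiply, ← Matrix.fromBlocks_one]
  refine Matrix.fromBlocks_inj.mpr ⟨?_, ?_, ?_, ?_⟩ <;> simp [h1, h2]

lemma T_inv (S : M2') : T (-S) * T S = 1 := by
  rw [T, T, Matrix.fromBlocks_multiply, ← Matrix.fromBlocks_one]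
  refine Matrix.fromBlocks_inj.mpr ⟨?_, ?_, ?_, ?_⟩ <;> simp

/-! ### Moves -/

lemma srel_E0 {m : ℕ} {M N : M4'} (h : SRel m M N) (u v w z : ℤ)
    (huv : u*z - v*w = 1) : SRel m M (E0 u v w z * N) :=
  rel_step h _ _ (E0_mem z (-v) (-w) u (by linarith)) (E0_inv u v w z huv)

lemma srel_E1 {m : ℕ} {M N : M4'} (h : SRel m M N) (u v w z : ℤ)
    (huv : u*z - v*w = 1) : SRel m M (E1 u v w z * N) :=
  rel_step h _ _ (E1_mem z (-v) (-w) u (by linarith)) (E1_inv u v w z huv)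

lemma srel_G {m : ℕ} {M N : M4'} (h : SRel m M N) (U W U' W' : M2')
    (hm : U'ᵀ * W' = 1) (h1 : U' * U = 1) (h2 : W' * W = 1) :
    SRel m M (G U W * N) :=
  rel_step h _ _ (G_mem U' W' hm) (G_inv U W U' W' h1 h2)

lemma srel_T {m : ℕ} {M N : M4'} (h : SRel m M N) (S : M2') (hS : Sᵀ = S) :
    SRel m M (T S * N) := by
  have : (-S)ᵀ = -S := by rw [Matrix.transpose_neg, hS]
  exact rel_step h _ _ (T_mem (-S) this) (T_inv S)

/-! ### Block actions -/

set_option maxHeartbeats 1000000 in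
lemma E0_action (u v w z a00 a01 a10 a11 b00 b01 b10 b11 c00 c01 c10 c11 d00 d01 d10 d11 : ℤ) :
    E0 u v w z * fromBlocks !![a00,a01;a10,a11] !![b00,b01;b10,b11] !![c00,c01;c10,c11] !![d00,d01;d10,d11]
    = fromBlocks !![u*a00+v*c00, u*a01+v*c01; a10, a11] !![u*b00+v*d00, u*b01+v*d01; b10, b11]
        !![w*a00+z*c00, w*a01+z*c01; c10, c11] !![w*b00+z*d00, w*b01+z*d01; d10, d11] := by
  rw [E0, Matrix.fromBlocks_multiply]
  refine Matrix.fromBlocks_inj.mpr ⟨?_, ?_, ?_, ?_⟩ <;>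
    · ext i j
      fin_cases i <;> fin_cases j <;> simp [Matrix.mul_apply, Fin.sum_univ_two] <;> ring

set_option maxHeartbeats 1000000 in
lemma E1_action (u v w z a00 a01 a10 a11 b00 b01 b10 b11 c00 c01 c10 c11 d00 d01 d10 d11 : ℤ) :
    E1 u v w z * fromBlocks !![a00,a01;a10,a11] !![b00,b01;b10,b11] !![c00,c01;c10,c11] !![d00,d01;d10,d11]
    = fromBlocks !![a00, a01; u*a10+v*c10, u*a11+v*c11] !![b00, b01; u*b10+v*d10, u*b11+v*d11]
        !![c00, c01; w*a10+z*c10, w*a11+z*c11] !![d00, d01; w*b10+z*d10, w*b11+z*d11] := by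
  rw [E1, Matrix.fromBlocks_multiply]
  refine Matrix.fromBlocks_inj.mpr ⟨?_, ?_, ?_, ?_⟩ <;>
    · ext i j
      fin_cases i <;> fin_cases j <;> simp [Matrix.mul_apply, Fin.sum_univ_two] <;> ring

set_option maxHeartbeats 1000000 in
lemma G_action (u0 u1 u2 u3 w0 w1 w2 w3 a00 a01 a10 a11 b00 b01 b10 b11 c00 c01 c10 c11 d00 d01 d10 d11 : ℤ) :
    G !![u0,u1;u2,u3] !![w0,w1;w2,w3] * fromBlocks !![a00,a01;a10,a11] !![b00,b01;b10,b11] !![c00,c01;c10,c11] !![d00,d01;d10,d11]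
    = fromBlocks !![u0*a00+u1*a10, u0*a01+u1*a11; u2*a00+u3*a10, u2*a01+u3*a11]
        !![u0*b00+u1*b10, u0*b01+u1*b11; u2*b00+u3*b10, u2*b01+u3*b11]
        !![w0*c00+w1*c10, w0*c01+w1*c11; w2*c00+w3*c10, w2*c01+w3*c11]
        !![w0*d00+w1*d10, w0*d01+w1*d11; w2*d00+w3*d10, w2*d01+w3*d11] := by
  rw [G, Matrix.fromBlocks_multiply]
  refine Matrix.fromBlocks_inj.mpr ⟨?_, ?_, ?_, ?_⟩ <;>
    · ext i j
      fin_cases i <;> fin_cases j <;> simp [Matrix.mul_apply, Fin.sum_univ_two] <;> ring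

set_option maxHeartbeats 1000000 in
lemma T_action (s0 s1 s2 s3 a00 a01 a10 a11 b00 b01 b10 b11 c00 c01 c10 c11 d00 d01 d10 d11 : ℤ) :
    T !![s0,s1;s2,s3] * fromBlocks !![a00,a01;a10,a11] !![b00,b01;b10,b11] !![c00,c01;c10,c11] !![d00,d01;d10,d11]
    = fromBlocks !![a00+s0*c00+s1*c10, a01+s0*c01+s1*c11; a10+s2*c00+s3*c10, a11+s2*c01+s3*c11]
        !![b00+s0*d00+s1*d10, b01+s0*d01+s1*d11; b10+s2*d00+s3*d10, b11+s2*d01+s3*d11]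
        !![c00,c01;c10,c11] !![d00,d01;d10,d11] := by
  rw [T, Matrix.fromBlocks_multiply]
  refine Matrix.fromBlocks_inj.mpr ⟨?_, ?_, ?_, ?_⟩ <;>
    · ext i j
      fin_cases i <;> fin_cases j <;> simp [Matrix.mul_apply, Fin.sum_univ_two] <;> ring

/-! ### `Sm` in block terms -/

lemma Sm_blocks {m : ℕ} (A B C D : M2') :
    fromBlocks A B C D ∈ Sm m ↔
      (Cᵀ*A = Aᵀ*C ∧ Aᵀ*D - Cᵀ*B = (m:ℤ)•(1:M2') ∧ Dᵀ*B = Bᵀ*D) := by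
  have h0 : fromBlocks A B C D ∈ Sm m ↔
      ((fromBlocks A B C D)ᵀ * Jsymp * fromBlocks A B C D = (m:ℤ) • Jsymp) := Iff.rfl
  rw [h0, Jsymp, Matrix.fromBlocks_transpose, Matrix.fromBlocks_multiply,
    Matrix.fromBlocks_multiply, Matrix.fromBlocks_smul]
  rw [Matrix.fromBlocks_inj]
  simp only [Matrix.mul_zero, Matrix.mul_one, Matrix.mul_neg, zero_add, add_zero,
    Matrix.neg_mul, smul_zero, smul_neg]
  constructor
  · rintro ⟨h1, h2, h3, h4⟩
    refine ⟨?_, ?_, ?_⟩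
    · linear_combination (norm := abel) h1
    · linear_combination (norm := abel) -h2
    · linear_combination (norm := abel) h4
  · rintro ⟨h1, h2, h3⟩
    refine ⟨?_, ?_, ?_, ?_⟩
    · linear_combination (norm := abel) h1
    · linear_combination (norm := abel) -h2
    · have h2' : Dᵀ*A - Bᵀ*C = (m:ℤ)•(1:M2') := by
        have := congrArg Matrix.transpose h2
        simpa [Matrix.transpose_sub, Matrix.transpose_mul] using this
      linear_combination (norm := abel) h2'
    · linear_combination (norm := abel) h3

/-! ### Arithmetic helpers -/

lemma bezout2 (a b : ℤ) : ∃ u v w z : ℤ, u*z - v*w = 1 ∧ w*a + z*b = 0 := by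
  rcases eq_or_ne b 0 with hb | hb
  · exact ⟨1, 0, 0, 1, by ring, by simp [hb]⟩
  · set g : ℤ := (Int.gcd a b : ℤ) with hg
    have hgpos : 0 < g := by
      have : b ≠ 0 := hb
      simpa [hg] using Int.gcd_pos_of_ne_zero_right a this
    have hgne : g ≠ 0 := ne_of_gt hgpos
    obtain ⟨a', ha'⟩ : g ∣ a := Int.gcd_dvd_left a b
    obtain ⟨b', hb'⟩ : g ∣ b := Int.gcd_dvd_right a b
    have hbez : a * Int.gcdA a b + b * Int.gcdB a b = g := (Int.gcd_eq_gcd_ab a b).symm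
    refine ⟨Int.gcdA a b, Int.gcdB a b, -b', a', ?_, ?_⟩
    · have : g * (Int.gcdA a b * a' - Int.gcdB a b * (-b')) = g * 1 := by
        calc g * (Int.gcdA a b * a' - Int.gcdB a b * (-b'))
            = a * Int.gcdA a b + b * Int.gcdB a b := by rw [ha', hb']; ring
          _ = g := hbez
          _ = g * 1 := by ring
      exact mul_left_cancel₀ hgne this
    · rw [ha', hb']; ring

lemma sign_fix (a : ℤ) (ha : a ≠ 0) : ∃ e : ℤ, e*e = 1 ∧ 0 < e*a := by
  rcases lt_or_gt_of_ne ha with h | h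
  · exact ⟨-1, by ring, by linarith⟩
  · exact ⟨1, by ring, by linarith⟩

lemma euclid_step (b d : ℤ) (hd : 0 < d) : ∃ s : ℤ, 0 ≤ b + s*d ∧ b + s*d < d := by
  refine ⟨-(b/d), ?_, ?_⟩
  · have h := Int.emod_nonneg b (ne_of_gt hd)
    have : b + -(b/d)*d = b % d := by rw [Int.emod_def]; ring
    rw [this]; exact h
  · have h := Int.emod_lt_of_pos b hd
    have : b + -(b/d)*d = b % d := by rw [Int.emod_def]; ring
    rw [this]; exact h

lemma digit_eq {r k k' x x' : ℤ} (hr : 0 < r) (hx : 0 ≤ x) (hx2 : x < r)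
    (hy : 0 ≤ x') (hy2 : x' < r) (h : k*r + x = k'*r + x') : k = k' ∧ x = x' := by
  have ht : (k - k') * r = x' - x := by linear_combination h
  have hk : k = k' := by
    rcases lt_trichotomy k k' with hlt | he | hgt
    · exfalso
      have h1 : k - k' ≤ -1 := by omega
      have h2 : (k - k') * r ≤ -1 * r := mul_le_mul_of_nonneg_right h1 (le_of_lt hr)
      linarith
    · exact he
    · exfalso
      have h1 : (1:ℤ) ≤ k - k' := by omega
      have h2 : 1 * r ≤ (k - k') * r := mul_le_mul_of_nonneg_right h1 (le_of_lt hr)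
      linarith
  refine ⟨hk, by subst hk; linarith [ht]⟩

/-! ### Reduction stages -/

/-- Stage 1: clear the `(inr 0, inl 0)` entry. -/
lemma stage1 {m : ℕ} {M : M4'} (a00 a01 a10 a11 b00 b01 b10 b11 c00 c01 c10 c11 d00 d01 d10 d11 : ℤ)
    (h : SRel m M (fromBlocks !![a00,a01;a10,a11] !![b00,b01;b10,b11] !![c00,c01;c10,c11] !![d00,d01;d10,d11])) :
    ∃ A00 A01 B00 B01 C01 D00 D01 : ℤ,
      SRel m M (fromBlocks !![A00,A01;a10,a11] !![B00,B01;b10,b11] !![0,C01;c10,c11] !![D00,D01;d10,d11]) := by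
  obtain ⟨u, v, w, z, hdet, hzero⟩ := bezout2 a00 c00
  have h2 := srel_E0 h u v w z hdet
  rw [E0_action] at h2
  rw [hzero] at h2
  exact ⟨_, _, _, _, _, _, _, h2⟩

/-- Stage 2: clear the `(inr 1, inl 0)` entry. -/
lemma stage2 {m : ℕ} {M : M4'} (a00 a01 a10 a11 b00 b01 b10 b11 c01 c10 c11 d00 d01 d10 d11 : ℤ)
    (h : SRel m M (fromBlocks !![a00,a01;a10,a11] !![b00,b01;b10,b11] !![0,c01;c10,c11] !![d00,d01;d10,d11])) :
    ∃ A10 A11 B10 B11 C11 D10 D11 : ℤ,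
      SRel m M (fromBlocks !![a00,a01;A10,A11] !![b00,b01;B10,B11] !![0,c01;0,C11] !![d00,d01;D10,D11]) := by
  obtain ⟨u, v, w, z, hdet, hzero⟩ := bezout2 a10 c10
  have h2 := srel_E1 h u v w z hdet
  rw [E1_action] at h2
  rw [hzero] at h2
  exact ⟨_, _, _, _, _, _, _, h2⟩

/-- Stage 3: clear the `(inl 1, inl 0)` entry. -/
lemma stage3 {m : ℕ} {M : M4'} (a00 a01 a10 a11 b00 b01 b10 b11 c01 c11 d00 d01 d10 d11 : ℤ)
    (h : SRel m M (fromBlocks !![a00,a01;a10,a11] !![b00,b01;b10,b11] !![0,c01;0,c11] !![d00,d01;d10,d11])) :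
    ∃ A00 A01 A11 B00 B01 B10 B11 C01 C11 D00 D01 D10 D11 : ℤ,
      SRel m M (fromBlocks !![A00,A01;0,A11] !![B00,B01;B10,B11] !![0,C01;0,C11] !![D00,D01;D10,D11]) := by
  obtain ⟨u, v, w, z, hdet, hzero⟩ := bezout2 a00 a10
  have h2 := srel_G h !![u,v;w,z] !![z,-w;-v,u] !![z,-v;-w,u] !![u,w;v,z] ?_ ?_ ?_
  · rw [G_action] at h2
    rw [hzero] at h2
    have hcl : (fromBlocks
        !![u*a00+v*a10, u*a01+v*a11; 0, w*a01+z*a11]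
        !![u*b00+v*b10, u*b01+v*b11; w*b00+z*b10, w*b01+z*b11]
        !![z*0+(-w)*0, z*c01+(-w)*c11; (-v)*0+u*0, (-v)*c01+u*c11]
        !![z*d00+(-w)*d10, z*d01+(-w)*d11; (-v)*d00+u*d10, (-v)*d01+u*d11])
        = (fromBlocks
        !![u*a00+v*a10, u*a01+v*a11; 0, w*a01+z*a11]
        !![u*b00+v*b10, u*b01+v*b11; w*b00+z*b10, w*b01+z*b11]
        !![0, z*c01+(-w)*c11; 0, (-v)*c01+u*c11]
        !![z*d00+(-w)*d10, z*d01+(-w)*d11; (-v)*d00+u*d10, (-v)*d01+u*d11]) := by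
      refine Matrix.fromBlocks_inj.mpr ⟨rfl, rfl, ?_, rfl⟩
      ext i j; fin_cases i <;> fin_cases j <;> simp
    rw [hcl] at h2
    exact ⟨_, _, _, _, _, _, _, _, _, _, _, _, _, h2⟩
  · simp only [transpose_fin2]
    ext i j; fin_cases i <;> fin_cases j <;>
      simp [Matrix.mul_apply, Fin.sum_univ_two] <;> linarith
  · ext i j; fin_cases i <;> fin_cases j <;>
      simp [Matrix.mul_apply, Fin.sum_univ_two] <;> linarith
  · ext i j; fin_cases i <;> fin_cases j <;>
      simp [Matrix.mul_apply, Fin.sum_univ_two] <;> linarith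

/-- entry extraction from `Sm` for a matrix whose first column is clean. -/
lemma derive1 {m : ℕ} (hm : 1 ≤ m) (a a01 a11 b00 b01 b10 b11 c01 c11 d00 d01 d10 d11 : ℤ)
    (h : fromBlocks !![a,a01;0,a11] !![b00,b01;b10,b11] !![0,c01;0,c11] !![d00,d01;d10,d11] ∈ Sm m) :
    a ≠ 0 ∧ c01 = 0 := by
  rw [Sm_blocks] at h
  obtain ⟨h1, h2, h3⟩ := h
  simp only [transpose_fin2] at h1 h2 h3
  have e2 := congrFun (congrFun h2 0) 0
  have e1 := congrFun (congrFun h1 0) 1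
  simp [Matrix.mul_apply, Fin.sum_univ_two, Matrix.sub_apply, transpose_fin2] at e1 e2
  have hmz : (1:ℤ) ≤ (m:ℤ) := by exact_mod_cast hm
  have ha : a ≠ 0 := by
    intro h0
    rw [h0] at e2
    simp at e2
    omega
  refine ⟨ha, ?_⟩
  rcases e1 with e1 | e1
  · exact absurd e1 ha
  · exact e1

/-- entry extraction from `Sm` for a block-triangular matrix. -/
lemma derive2 {m : ℕ} (a b c b00 b01 b10 b11 d00 d01 d10 d11 : ℤ)
    (h : fromBlocks !![a,b;0,c] !![b00,b01;b10,b11] !![0,0;0,0] !![d00,d01;d10,d11] ∈ Sm m) :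
    a*d00 = m ∧ a*d01 = 0 ∧ b*d00 + c*d10 = 0 ∧ b*d01 + c*d11 = m ∧
      d00*b01 + d10*b11 = b00*d01 + b10*d11 := by
  rw [Sm_blocks] at h
  obtain ⟨h1, h2, h3⟩ := h
  simp only [transpose_fin2] at h1 h2 h3
  have e00 := congrFun (congrFun h2 0) 0
  have e01 := congrFun (congrFun h2 0) 1
  have e10 := congrFun (congrFun h2 1) 0
  have e11 := congrFun (congrFun h2 1) 1
  have f01 := congrFun (congrFun h3 0) 1
  simp [Matrix.mul_apply, Fin.sum_univ_two, Matrix.sub_apply, transpose_fin2] at e00 e01 e10 e11 f01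
  refine ⟨by linarith, ?_, by linarith, by linarith, by linarith⟩
  rcases e01 with h | h <;> simp [h]

/-- Stage 6: clear the `(inr 1, inl 1)` entry. -/
lemma stage6 {m : ℕ} {M : M4'} (a00 a01 a11 b00 b01 b10 b11 c11 d00 d01 d10 d11 : ℤ)
    (h : SRel m M (fromBlocks !![a00,a01;0,a11] !![b00,b01;b10,b11] !![0,0;0,c11] !![d00,d01;d10,d11])) :
    ∃ A11 B10 B11 D10 D11 : ℤ,
      SRel m M (fromBlocks !![a00,a01;0,A11] !![b00,b01;B10,B11] !![0,0;0,0] !![d00,d01;D10,D11]) := by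
  obtain ⟨u, v, w, z, hdet, hzero⟩ := bezout2 a11 c11
  have h2 := srel_E1 h u v w z hdet
  rw [E1_action] at h2
  simp only [mul_zero, zero_mul, add_zero, zero_add] at h2
  rw [hzero] at h2
  exact ⟨_, _, _, _, _, h2⟩

/-- Stage 7: make the diagonal of `A` positive. -/
lemma stage7 {m : ℕ} {M : M4'} (a b c b00 b01 b10 b11 d00 d10 d11 : ℤ)
    (ha : a ≠ 0) (hc : c ≠ 0)
    (h : SRel m M (fromBlocks !![a,b;0,c] !![b00,b01;b10,b11] !![0,0;0,0] !![d00,0;d10,d11])) :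
    ∃ A B C B00 B01 B10 B11 D00 D10 D11 : ℤ,
      SRel m M (fromBlocks !![A,B;0,C] !![B00,B01;B10,B11] !![0,0;0,0] !![D00,0;D10,D11]) ∧
      0 < A ∧ 0 < C := by
  obtain ⟨e1, he1, he1a⟩ := sign_fix a ha
  obtain ⟨e2, he2, he2c⟩ := sign_fix c hc
  have h2 := srel_G h !![e1,0;0,e2] !![e1,0;0,e2] !![e1,0;0,e2] !![e1,0;0,e2] ?_ ?_ ?_
  · rw [G_action] at h2
    simp only [mul_zero, zero_mul, add_zero, zero_add] at h2
    exact ⟨_, _, _, _, _, _, _, _, _, _, h2, he1a, he2c⟩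
  · simp only [transpose_fin2]
    ext i j; fin_cases i <;> fin_cases j <;>
      simp [Matrix.mul_apply, Fin.sum_univ_two] <;> linarith
  · ext i j; fin_cases i <;> fin_cases j <;>
      simp [Matrix.mul_apply, Fin.sum_univ_two] <;> linarith
  · ext i j; fin_cases i <;> fin_cases j <;>
      simp [Matrix.mul_apply, Fin.sum_univ_two] <;> linarith

/-- Stage 8: reduce `b` modulo `c`. -/
lemma stage8 {m : ℕ} {M : M4'} (a b c b00 b01 b10 b11 d00 d10 d11 : ℤ)
    (hc : 0 < c)
    (h : SRel m M (fromBlocks !![a,b;0,c] !![b00,b01;b10,b11] !![0,0;0,0] !![d00,0;d10,d11])) :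
    ∃ B B00 B01 D10 : ℤ,
      SRel m M (fromBlocks !![a,B;0,c] !![B00,B01;b10,b11] !![0,0;0,0] !![d00,0;D10,d11]) ∧
      0 ≤ B ∧ B < c := by
  obtain ⟨s, hs1, hs2⟩ := euclid_step b c hc
  have h2 := srel_G h !![1,s;0,1] !![1,0;-s,1] !![1,-s;0,1] !![1,0;s,1] ?_ ?_ ?_
  · rw [G_action] at h2
    simp only [mul_zero, zero_mul, add_zero, zero_add, one_mul, mul_one, neg_mul, neg_zero] at h2
    exact ⟨b + s*c, _, _, _, h2, hs1, hs2⟩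
  · simp only [transpose_fin2]
    ext i j; fin_cases i <;> fin_cases j <;>
      simp [Matrix.mul_apply, Fin.sum_univ_two] <;> linarith
  · ext i j; fin_cases i <;> fin_cases j <;>
      simp [Matrix.mul_apply, Fin.sum_univ_two] <;> linarith
  · ext i j; fin_cases i <;> fin_cases j <;>
      simp [Matrix.mul_apply, Fin.sum_univ_two] <;> linarith

/-- Stage 9: reduce `b01` modulo `d11`. -/
lemma stage9 {m : ℕ} {M : M4'} (a b c b00 b01 b10 b11 d00 d10 d11 : ℤ)
    (hd : 0 < d11)
    (h : SRel m M (fromBlocks !![a,b;0,c] !![b00,b01;b10,b11] !![0,0;0,0] !![d00,0;d10,d11])) :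
    ∃ B00 B10 B01 : ℤ,
      SRel m M (fromBlocks !![a,b;0,c] !![B00,B01;B10,b11] !![0,0;0,0] !![d00,0;d10,d11]) ∧
      0 ≤ B01 ∧ B01 < d11 := by
  obtain ⟨s, hs1, hs2⟩ := euclid_step b01 d11 hd
  have h2 := srel_T h !![0,s;s,0] (by simp only [transpose_fin2])
  rw [T_action] at h2
  simp only [mul_zero, zero_mul, add_zero, zero_add] at h2
  exact ⟨_, _, b01 + s*d11, h2, hs1, hs2⟩

/-- Stage 10: reduce `b11` modulo `d11`. -/
lemma stage10 {m : ℕ} {M : M4'} (a b c b00 b01 b10 b11 d00 d10 d11 : ℤ)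
    (hd : 0 < d11)
    (h : SRel m M (fromBlocks !![a,b;0,c] !![b00,b01;b10,b11] !![0,0;0,0] !![d00,0;d10,d11])) :
    ∃ B10 B11 : ℤ,
      SRel m M (fromBlocks !![a,b;0,c] !![b00,b01;B10,B11] !![0,0;0,0] !![d00,0;d10,d11]) ∧
      0 ≤ B11 ∧ B11 < d11 := by
  obtain ⟨s, hs1, hs2⟩ := euclid_step b11 d11 hd
  have h2 := srel_T h !![0,0;0,s] (by simp only [transpose_fin2])
  rw [T_action] at h2
  simp only [mul_zero, zero_mul, add_zero, zero_add] at h2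
  exact ⟨_, b11 + s*d11, h2, hs1, hs2⟩

/-- Stage 11: reduce `b00` modulo `d00`. -/
lemma stage11 {m : ℕ} {M : M4'} (a b c b00 b01 b10 b11 d00 d10 d11 : ℤ)
    (hd : 0 < d00)
    (h : SRel m M (fromBlocks !![a,b;0,c] !![b00,b01;b10,b11] !![0,0;0,0] !![d00,0;d10,d11])) :
    ∃ B00 : ℤ,
      SRel m M (fromBlocks !![a,b;0,c] !![B00,b01;b10,b11] !![0,0;0,0] !![d00,0;d10,d11]) ∧
      0 ≤ B00 ∧ B00 < d00 := by
  obtain ⟨s, hs1, hs2⟩ := euclid_step b00 d00 hd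
  have h2 := srel_T h !![s,0;0,0] (by simp only [transpose_fin2])
  rw [T_action] at h2
  simp only [mul_zero, zero_mul, add_zero, zero_add] at h2
  exact ⟨b00 + s*d00, h2, hs1, hs2⟩

lemma eta4 (N : M4') : N = fromBlocks
    !![N (Sum.inl 0) (Sum.inl 0), N (Sum.inl 0) (Sum.inl 1); N (Sum.inl 1) (Sum.inl 0), N (Sum.inl 1) (Sum.inl 1)]
    !![N (Sum.inl 0) (Sum.inr 0), N (Sum.inl 0) (Sum.inr 1); N (Sum.inl 1) (Sum.inr 0), N (Sum.inl 1) (Sum.inr 1)]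
    !![N (Sum.inr 0) (Sum.inl 0), N (Sum.inr 0) (Sum.inl 1); N (Sum.inr 1) (Sum.inl 0), N (Sum.inr 1) (Sum.inl 1)]
    !![N (Sum.inr 0) (Sum.inr 0), N (Sum.inr 0) (Sum.inr 1); N (Sum.inr 1) (Sum.inr 0), N (Sum.inr 1) (Sum.inr 1)] := by
  ext i j
  cases i <;> cases j <;> rename_i i j <;> fin_cases i <;> fin_cases j <;>
    simp [Matrix.fromBlocks]

/-- Full reduction: every matrix in `S(m)` is `Γ₂`-equivalent to a reduced
representative. -/
lemma reduce {m : ℕ} (hm : 1 ≤ m) (M : M4') (hM : M ∈ Sm m) :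
    ∃ a b c b00 b01 b10 b11 d00 d10 d11 : ℤ,
      SRel m M (fromBlocks !![a,b;0,c] !![b00,b01;b10,b11] !![0,0;0,0] !![d00,0;d10,d11]) ∧
      0 < a ∧ 0 < c ∧ 0 ≤ b ∧ b < c ∧ 0 ≤ b00 ∧ b00 < d00 ∧
      0 ≤ b01 ∧ b01 < d11 ∧ 0 ≤ b11 ∧ b11 < d11 := by
  have hm' : (1:ℤ) ≤ (m:ℤ) := by exact_mod_cast hm
  have h0 : SRel m M M := rel_refl hM
  nth_rewrite 2 [eta4 M] at h0
  obtain ⟨A00, A01, B00, B01, C01, D00, D01, h1⟩ := stage1 _ _ _ _ _ _ _ _ _ _ _ _ _ _ _ _ h0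
  obtain ⟨A10, A11, B10, B11, C11, D10, D11, h2⟩ := stage2 _ _ _ _ _ _ _ _ _ _ _ _ _ _ _ h1
  obtain ⟨a, a01, a11, b00, b01, b10, b11, c01, c11, d00, d01, d10, d11, h3⟩ :=
    stage3 _ _ _ _ _ _ _ _ _ _ _ _ _ _ h2
  obtain ⟨ha, hc01⟩ := derive1 hm _ _ _ _ _ _ _ _ _ _ _ _ _ h3.1
  subst hc01
  obtain ⟨c, B10', B11', D10', D11', h6⟩ := stage6 _ _ _ _ _ _ _ _ _ _ _ _ h3
  obtain ⟨e1, e2, e3, e4, e5⟩ := derive2 _ _ _ _ _ _ _ _ _ _ _ h6.1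
  have hd01 : d01 = 0 := by
    rcases mul_eq_zero.mp e2 with h | h
    · exact absurd h ha
    · exact h
  subst hd01
  have hc : c ≠ 0 := by
    intro h0
    rw [h0] at e4
    simp at e4
    omega
  obtain ⟨a', b', c', b00', b01', b10', b11', d00', d10', d11', h7, hapos, hcpos⟩ :=
    stage7 _ _ _ _ _ _ _ _ _ _ ha hc h6
  obtain ⟨f1, f2, f3, f4, f5⟩ := derive2 _ _ _ _ _ _ _ _ _ _ _ h7.1
  have hd00 : 0 < d00' := by nlinarith
  have hd11 : 0 < d11' := by
    have : c' * d11' = (m:ℤ) := by linarith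
    nlinarith
  obtain ⟨B, B00'', B01'', D10'', h8, hB0, hBc⟩ := stage8 _ _ _ _ _ _ _ _ _ _ hcpos h7
  obtain ⟨C00, C10, C01', h9, h01a, h01b⟩ := stage9 _ _ _ _ _ _ _ _ _ _ hd11 h8
  obtain ⟨E10, E11, h10, h11a, h11b⟩ := stage10 _ _ _ _ _ _ _ _ _ _ hd11 h9
  obtain ⟨F00, h11, h00a, h00b⟩ := stage11 _ _ _ _ _ _ _ _ _ _ hd00 h10
  exact ⟨a', B, c', F00, C01', E10, E11, d00', _, d11', h11,
    hapos, hcpos, hB0, hBc, h00a, h00b, h01a, h01b, h11a, h11b⟩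

/-- facts about a reduced representative. -/
lemma Rfacts {m : ℕ} (hm : 1 ≤ m) {a b c b00 b01 b10 b11 d00 d10 d11 : ℤ}
    (hSm : fromBlocks !![a,b;0,c] !![b00,b01;b10,b11] !![0,0;0,0] !![d00,0;d10,d11] ∈ Sm m)
    (ha : 0 < a) (hc : 0 < c) :
    a * d00 = m ∧ c * d11 = m ∧ b*d00 + c*d10 = 0 ∧ d00*b01 + d10*b11 = b10*d11 ∧
      0 < d00 ∧ 0 < d11 ∧ d00 ≤ m ∧ d11 ≤ m := by
  have hm' : (1:ℤ) ≤ (m:ℤ) := by exact_mod_cast hm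
  obtain ⟨e1, e2, e3, e4, e5⟩ := derive2 _ _ _ _ _ _ _ _ _ _ _ hSm
  simp only [mul_zero, zero_add, zero_mul] at e4 e5
  have hd00 : 0 < d00 := by nlinarith
  have hd11 : 0 < d11 := by nlinarith
  refine ⟨e1, e4, e3, e5, hd00, hd11, ?_, ?_⟩ <;> nlinarith

/-- the packing function used for counting. -/
noncomputable def pack (N : M4') : ℕ × ℕ × ℕ :=
  ((N (Sum.inl 0) (Sum.inl 0)).toNat, (N (Sum.inl 1) (Sum.inl 1)).toNat,
    (((N (Sum.inl 0) (Sum.inl 1) * N (Sum.inr 0) (Sum.inr 0) + N (Sum.inl 0) (Sum.inr 0))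
        * N (Sum.inr 1) (Sum.inr 1) + N (Sum.inl 0) (Sum.inr 1))
        * N (Sum.inr 1) (Sum.inr 1) + N (Sum.inl 1) (Sum.inr 1)).toNat)

lemma pack_blocks (a b c b00 b01 b10 b11 d00 d10 d11 : ℤ) :
    pack (fromBlocks !![a,b;0,c] !![b00,b01;b10,b11] !![0,0;0,0] !![d00,0;d10,d11])
      = (a.toNat, c.toNat, (((b * d00 + b00) * d11 + b01) * d11 + b11).toNat) := by
  simp [pack, Matrix.fromBlocks]

theorem statement16' (m : ℕ) (hm : 1 ≤ m) :
    ∃ R : Set (Matrix (Fin 2 ⊕ Fin 2) (Fin 2 ⊕ Fin 2) ℤ),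
      R ⊆ Sm m ∧ R.Finite ∧ R.ncard ≤ m ^ 3 * m.divisors.card ^ 2 ∧
      ∀ M ∈ Sm m, ∃ γ ∈ Gamma2, ∃ N ∈ R, M = γ * N := by
  classical
  have hm' : (1:ℤ) ≤ (m:ℤ) := by exact_mod_cast hm
  set R : Set M4' := {N | (∃ a b c b00 b01 b10 b11 d00 d10 d11 : ℤ,
      N = fromBlocks !![a,b;0,c] !![b00,b01;b10,b11] !![0,0;0,0] !![d00,0;d10,d11] ∧
      0 < a ∧ 0 < c ∧ 0 ≤ b ∧ b < c ∧ 0 ≤ b00 ∧ b00 < d00 ∧ 0 ≤ b01 ∧ b01 < d11 ∧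
      0 ≤ b11 ∧ b11 < d11) ∧ N ∈ Sm m} with hRdef
  set F : Finset (ℕ × ℕ × ℕ) := m.divisors ×ˢ m.divisors ×ˢ Finset.range (m^3) with hFdef
  have hdvd : ∀ x y : ℤ, 0 < x → 0 < y → x * y = (m:ℤ) → x.toNat ∣ m := by
    intro x y hx hy hxy
    refine ⟨y.toNat, ?_⟩
    have h : ((x.toNat * y.toNat : ℕ) : ℤ) = (m:ℤ) := by
      push_cast [Int.toNat_of_nonneg hx.le, Int.toNat_of_nonneg hy.le]
      exact hxy
    exact_mod_cast h.symm
  have hmaps : ∀ N ∈ R, pack N ∈ (F : Set (ℕ × ℕ × ℕ)) := by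
    intro N hN
    obtain ⟨⟨a,b,c,b00,b01,b10,b11,d00,d10,d11, hNe, ha, hc, hb0, hbc, h000, h00d,
      h010, h01d, h110, h11d⟩, hSm⟩ := hN
    rw [hNe] at hSm
    obtain ⟨e1, e4, e3, e5, hd00, hd11, hd00m, hd11m⟩ := Rfacts hm hSm ha hc
    rw [hNe, pack_blocks]
    simp only [hFdef, Finset.coe_product, Finset.mem_coe, Set.mem_prod, Finset.mem_range,
      Nat.mem_divisors, Finset.coe_range, Set.mem_Iio]
    refine ⟨⟨hdvd a d00 ha hd00 e1, by omega⟩, ⟨hdvd c d11 hc hd11 e4, by omega⟩, ?_⟩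
    have k1 : b * d00 + b00 ≤ c * d00 - 1 := by nlinarith
    have k2 : (b * d00 + b00) * d11 + b01 ≤ c * d00 * d11 - 1 := by nlinarith
    have k3 : ((b * d00 + b00) * d11 + b01) * d11 + b11 ≤ c * d00 * d11 * d11 - 1 := by
      nlinarith
    have k4a : d00 * d11 ≤ (m:ℤ) * (m:ℤ) :=
      mul_le_mul hd00m hd11m hd11.le (by linarith)
    have k4 : c * d00 * d11 * d11 ≤ (m:ℤ) * (m:ℤ) * (m:ℤ) := by
      calc c * d00 * d11 * d11 = (c * d11) * (d00 * d11) := by ring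
        _ = (m:ℤ) * (d00 * d11) := by rw [e4]
        _ ≤ (m:ℤ) * ((m:ℤ) * (m:ℤ)) := mul_le_mul_of_nonneg_left k4a (by linarith)
        _ = (m:ℤ) * (m:ℤ) * (m:ℤ) := by ring
    have k0a : 0 ≤ b * d00 + b00 := by
      have := mul_nonneg hb0 hd00.le; linarith
    have k0b : 0 ≤ (b * d00 + b00) * d11 + b01 := by
      have := mul_nonneg k0a hd11.le; linarith
    have k0 : 0 ≤ ((b * d00 + b00) * d11 + b01) * d11 + b11 := by
      have := mul_nonneg k0b hd11.le; linarith
    have hcast : ((m^3 : ℕ) : ℤ) = (m:ℤ) * (m:ℤ) * (m:ℤ) := by push_cast; ring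
    omega
  have hinj : Set.InjOn pack R := by
    rintro N hN N' hN' heq
    obtain ⟨⟨a,b,c,b00,b01,b10,b11,d00,d10,d11, hNe, ha, hc, hb0, hbc, h000, h00d,
      h010, h01d, h110, h11d⟩, hSm⟩ := hN
    obtain ⟨⟨a',b',c',b00',b01',b10',b11',d00',d10',d11', hNe', ha', hc', hb0', hbc', h000', h00d',
      h010', h01d', h110', h11d'⟩, hSm'⟩ := hN'
    rw [hNe] at hSm
    rw [hNe'] at hSm'
    obtain ⟨e1, e4, e3, e5, hd00, hd11, _, _⟩ := Rfacts hm hSm ha hc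
    obtain ⟨e1', e4', e3', e5', hd00', hd11', _, _⟩ := Rfacts hm hSm' ha' hc'
    rw [hNe, hNe', pack_blocks, pack_blocks] at heq
    rw [Prod.mk.injEq, Prod.mk.injEq] at heq
    obtain ⟨q1, q2, q3⟩ := heq
    have ea : a = a' := by omega
    subst ea
    have ec : c = c' := by omega
    subst ec
    have ed00 : d00 = d00' := mul_left_cancel₀ (ne_of_gt ha) (e1.trans e1'.symm)
    subst ed00
    have ed11 : d11 = d11' := mul_left_cancel₀ (ne_of_gt hc) (e4.trans e4'.symm)
    subst ed11
    -- recover the integer equality of the packed values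
    have k0a : 0 ≤ b * d00 + b00 := by
      have := mul_nonneg hb0 hd00.le; linarith
    have k0b : 0 ≤ (b * d00 + b00) * d11 + b01 := by
      have := mul_nonneg k0a hd11.le; linarith
    have k0 : 0 ≤ ((b * d00 + b00) * d11 + b01) * d11 + b11 := by
      have := mul_nonneg k0b hd11.le; linarith
    have k0a' : 0 ≤ b' * d00 + b00' := by
      have := mul_nonneg hb0' hd00.le; linarith
    have k0b' : 0 ≤ (b' * d00 + b00') * d11 + b01' := by
      have := mul_nonneg k0a' hd11.le; linarith
    have k0' : 0 ≤ ((b' * d00 + b00') * d11 + b01') * d11 + b11' := by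
      have := mul_nonneg k0b' hd11.le; linarith
    have q3' : ((b * d00 + b00) * d11 + b01) * d11 + b11
        = ((b' * d00 + b00') * d11 + b01') * d11 + b11' := by omega
    obtain ⟨l1, eb11⟩ := digit_eq hd11 h110 h11d h110' h11d' q3'
    subst eb11
    obtain ⟨l2, eb01⟩ := digit_eq hd11 h010 h01d h010' h01d' l1
    subst eb01
    obtain ⟨eb, eb00⟩ := digit_eq hd00 h000 h00d h000' h00d' l2
    subst eb
    subst eb00
    have ed10 : d10 = d10' := by
      have : c * d10 = c * d10' := by linarith
      exact mul_left_cancel₀ (ne_of_gt hc) this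
    subst ed10
    have eb10 : b10 = b10' := by
      have : b10 * d11 = b10' * d11 := by linarith
      exact mul_right_cancel₀ (ne_of_gt hd11) this
    subst eb10
    exact hNe.trans hNe'.symm
  have hFfin : ((F : Set (ℕ × ℕ × ℕ))).Finite := F.finite_toSet
  have hRfin : R.Finite := by
    refine Set.Finite.of_finite_image ?_ hinj
    refine hFfin.subset ?_
    rintro _ ⟨N, hN, rfl⟩
    exact hmaps N hN
  refine ⟨R, ?_, hRfin, ?_, ?_⟩
  · rintro N ⟨_, hSm⟩; exact hSm
  · calc R.ncard ≤ (F : Set (ℕ × ℕ × ℕ)).ncard :=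
        Set.ncard_le_ncard_of_injOn pack hmaps hinj hFfin
      _ = F.card := Set.ncard_coe_finset F
      _ = m.divisors.card * (m.divisors.card * m^3) := by
        simp [hFdef, Finset.card_product]
      _ = m ^ 3 * m.divisors.card ^ 2 := by ring
  · intro M hM
    obtain ⟨a,b,c,b00,b01,b10,b11,d00,d10,d11, hrel, hap, hcp, hb0, hbc, h000, h00d,
      h010, h01d, h110, h11d⟩ := reduce hm M hM
    obtain ⟨hNSm, γ, hγ, hMe⟩ := hrel
    exact ⟨γ, hγ, _, ⟨⟨a,b,c,b00,b01,b10,b11,d00,d10,d11, rfl, hap, hcp, hb0, hbc,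
      h000, h00d, h010, h01d, h110, h11d⟩, hNSm⟩, hMe⟩

/-- The number of orbits of `Γ₂` acting on `S(m)` by left multiplication is at
most `m³ · σ₀(m)²`: there is a set of representatives of at most that size. -/
theorem statement16 (m : ℕ) (hm : 1 ≤ m) :
    ∃ R : Set (Matrix (Fin 2 ⊕ Fin 2) (Fin 2 ⊕ Fin 2) ℤ),
      R ⊆ Sm m ∧ R.Finite ∧ R.ncard ≤ m ^ 3 * m.divisors.card ^ 2 ∧
      ∀ M ∈ Sm m, ∃ γ ∈ Gamma2, ∃ N ∈ R, M = γ * N := statement16' m hm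
end

section
/- There exists an absolute constant C such that for all real numbers α > 1 and d > 0, ∑_{t=1}^∞ t^{α−1} e^{−t d} ≤ C · d^{−α+1} · Γ(α) · ( d^{−1} + (α−1)^{−1/2} ). -/
open Real Set MeasureTheory

lemma aux_max {s b x : ℝ} (hs : 0 < s) (hb : 0 < b) (hx : 0 ≤ x) :
    x ^ s * Real.exp (-(x * b)) ≤ (s / b) ^ s * Real.exp (-s) := by
  rcases eq_or_lt_of_le hx with rfl | hx
  · rw [Real.zero_rpow hs.ne', zero_mul]
    positivity
  · rw [Real.rpow_def_of_pos hx, Real.rpow_def_of_pos (by positivity), ← Real.exp_add,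
      ← Real.exp_add, Real.exp_le_exp]
    have key : Real.log (x * b / s) ≤ x * b / s - 1 :=
      Real.log_le_sub_one_of_pos (by positivity)
    rw [Real.log_div (by positivity) hs.ne', Real.log_mul hx.ne' hb.ne'] at key
    rw [Real.log_div hs.ne' hb.ne']
    have h2 : s * (x * b / s) = x * b := by field_simp
    nlinarith [mul_le_mul_of_nonneg_left key hs.le]

lemma aux_mono {s d x y : ℝ} (hs : 0 < s) (hd : 0 < d) (hx : 0 < x) (hxy : x ≤ y)
    (hy : y ≤ s / d) : x ^ s * Real.exp (-(x * d)) ≤ y ^ s * Real.exp (-(y * d)) := by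
  have hy0 : 0 < y := lt_of_lt_of_le hx hxy
  rw [Real.rpow_def_of_pos hx, Real.rpow_def_of_pos hy0, ← Real.exp_add, ← Real.exp_add,
    Real.exp_le_exp]
  have key : Real.log (x / y) ≤ x / y - 1 := Real.log_le_sub_one_of_pos (by positivity)
  rw [Real.log_div hx.ne' hy0.ne'] at key
  have key2 : y * (Real.log x - Real.log y) ≤ x - y := by
    have := mul_le_mul_of_nonneg_left key hy0.le
    calc y * (Real.log x - Real.log y) ≤ y * (x / y - 1) := this
    _ = x - y := by field_simp
  have hyd : y * d ≤ s := (le_div_iff₀ hd).mp hy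
  rw [← mul_le_mul_iff_right₀ hy0]
  nlinarith [mul_le_mul_of_nonneg_left key2 hs.le,
    mul_nonneg (sub_nonneg.2 hyd) (sub_nonneg.2 hxy)]

lemma aux_anti {s d x y : ℝ} (hs : 0 < s) (hd : 0 < d) (hx : s / d ≤ x) (hxy : x ≤ y) :
    y ^ s * Real.exp (-(y * d)) ≤ x ^ s * Real.exp (-(x * d)) := by
  have hx0 : 0 < x := lt_of_lt_of_le (by positivity) hx
  have hy0 : 0 < y := lt_of_lt_of_le hx0 hxy
  rw [Real.rpow_def_of_pos hx0, Real.rpow_def_of_pos hy0, ← Real.exp_add, ← Real.exp_add,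
    Real.exp_le_exp]
  have key : Real.log (y / x) ≤ y / x - 1 := Real.log_le_sub_one_of_pos (by positivity)
  rw [Real.log_div hy0.ne' hx0.ne'] at key
  have key2 : x * (Real.log y - Real.log x) ≤ y - x := by
    have := mul_le_mul_of_nonneg_left key hx0.le
    calc x * (Real.log y - Real.log x) ≤ x * (y / x - 1) := this
    _ = y - x := by field_simp
  have hxd : s ≤ x * d := (div_le_iff₀ hd).mp hx
  rw [← mul_le_mul_iff_right₀ hx0]
  nlinarith [mul_le_mul_of_nonneg_left key2 hs.le,
    mul_nonneg (sub_nonneg.2 hxd) (sub_nonneg.2 hxy)]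


lemma aux_gamma_lower {s : ℝ} (hs : 0 < s) :
    Real.exp (-1) * (s ^ s * Real.exp (-s)) * Real.sqrt s ≤ Real.Gamma (s + 1) := by
  have hs1 : (0:ℝ) < s + 1 := by linarith
  rw [Real.Gamma_eq_integral hs1]
  simp only [add_sub_cancel_right]
  have hint : IntegrableOn (fun x : ℝ => Real.exp (-x) * x ^ s) (Ioi 0) := by
    simpa using Real.GammaIntegral_convergent hs1
  have hsub : Ioc s (s + Real.sqrt s) ⊆ Ioi 0 := fun x hx => lt_trans hs hx.1
  have hnn : 0 ≤ᵐ[volume.restrict (Ioi 0)] fun x : ℝ => Real.exp (-x) * x ^ s := by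
    filter_upwards [ae_restrict_mem measurableSet_Ioi] with x hx
    exact mul_nonneg (Real.exp_nonneg _) (Real.rpow_nonneg (le_of_lt hx) _)
  have step2 : (∫ x in Ioc s (s + Real.sqrt s), Real.exp (-x) * x ^ s)
      ≤ ∫ x in Ioi 0, Real.exp (-x) * x ^ s :=
    setIntegral_mono_set hint hnn (HasSubset.Subset.eventuallyLE hsub)
  refine le_trans ?_ step2
  have hpt : ∀ x ∈ Ioc s (s + Real.sqrt s),
      Real.exp (-1) * (s ^ s * Real.exp (-s)) ≤ Real.exp (-x) * x ^ s := by
    intro x hx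
    have hx0 : 0 < x := lt_trans hs hx.1
    rw [Real.rpow_def_of_pos hs, Real.rpow_def_of_pos hx0, ← Real.exp_add, ← Real.exp_add,
      mul_comm (Real.exp (-x)), ← Real.exp_add, Real.exp_le_exp]
    have key : Real.log (s / x) ≤ s / x - 1 := Real.log_le_sub_one_of_pos (by positivity)
    rw [Real.log_div hs.ne' hx0.ne'] at key
    have key2 : x * (Real.log s - Real.log x) ≤ s - x := by
      have := mul_le_mul_of_nonneg_left key hx0.le
      calc x * (Real.log s - Real.log x) ≤ x * (s / x - 1) := this
      _ = s - x := by field_simp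
    have hsq : (x - s) ^ 2 ≤ s := by
      nlinarith [Real.sq_sqrt hs.le, Real.sqrt_nonneg s, hx.1.le, hx.2]
    rw [← mul_le_mul_iff_right₀ hx0]
    nlinarith [mul_le_mul_of_nonneg_left key2 hs.le, hx.1.le]
  have := setIntegral_ge_of_const_le (measurableSet_Ioc)
    (by rw [Real.volume_Ioc]; exact ENNReal.ofReal_ne_top) hpt (hint.mono_set hsub)
  rw [measureReal_def, Real.volume_Ioc] at this
  have hvol : (ENNReal.ofReal (s + Real.sqrt s - s)).toReal = Real.sqrt s := by
    rw [ENNReal.toReal_ofReal (by simp [Real.sqrt_nonneg])]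
    ring
  rw [hvol, smul_eq_mul, mul_comm] at this
  exact this


theorem statement17 :
    ∃ C : ℝ, 0 < C ∧ ∀ α d : ℝ, 1 < α → 0 < d →
      (∑' t : ℕ+, (t : ℝ) ^ (α - 1) * Real.exp (-(t : ℝ) * d))
        ≤ C * d ^ (-α + 1) * Real.Gamma α * (d⁻¹ + (α - 1) ^ (-(1 : ℝ) / 2)) := by
  refine ⟨2 * Real.exp 1, by positivity, fun α d hα hd => ?_⟩
  set s : ℝ := α - 1 with hs_def
  have hs : 0 < s := by simp only [hs_def]; linarith
  have hα0 : (0:ℝ) < α := by linarith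
  set f : ℝ → ℝ := fun x => x ^ s * Real.exp (-(x * d)) with hf_def
  have hsum_eq : (∑' t : ℕ+, (t : ℝ) ^ (α - 1) * Real.exp (-(t : ℝ) * d))
      = ∑' n : ℕ, f ((n : ℝ) + 1) := by
    rw [← Equiv.tsum_eq Equiv.pnatEquivNat.symm
      (fun t : ℕ+ => (t : ℝ) ^ (α - 1) * Real.exp (-(t : ℝ) * d))]
    refine tsum_congr fun n => ?_
    have hcast : ((Equiv.pnatEquivNat.symm n : ℕ+) : ℝ) = (n : ℝ) + 1 := by simp
    simp only [hcast, hf_def, neg_mul, hs_def]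
  rw [hsum_eq]
  set M : ℝ := (s / d) ^ s * Real.exp (-s) with hM_def
  have hM0 : 0 ≤ M := by positivity
  have hfnn : ∀ x : ℝ, 0 ≤ x → 0 ≤ f x := fun x hx =>
    mul_nonneg (Real.rpow_nonneg hx _) (Real.exp_nonneg _)
  have hfle : ∀ x : ℝ, 0 ≤ x → f x ≤ M := fun x hx => aux_max hs hd hx
  have hint : IntegrableOn f (Ioi 0) := by
    have h1 : IntegrableOn (fun x : ℝ => Real.exp (-x) * x ^ s) (Ioi 0) := by
      simpa using Real.GammaIntegral_convergent (show (0:ℝ) < s + 1 by linarith)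
    have h2 : IntegrableOn (fun x : ℝ => Real.exp (-(d * x)) * (d * x) ^ s) (Ioi 0) := by
      have := (integrableOn_Ioi_comp_mul_left_iff
        (fun x : ℝ => Real.exp (-x) * x ^ s) 0 hd).mpr (by simpa [mul_zero] using h1)
      simpa using this
    have h3 : IntegrableOn
        (fun x : ℝ => ((d:ℝ) ^ (s:ℝ))⁻¹ * (Real.exp (-(d * x)) * (d * x) ^ s)) (Ioi 0) :=
      h2.const_mul _
    refine (integrableOn_congr_fun (fun x hx => ?_) measurableSet_Ioi).mp h3
    have hx0 : (0:ℝ) < x := hx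
    rw [Real.mul_rpow hd.le hx0.le, hf_def]
    simp only []
    rw [mul_comm x d]
    field_simp [(Real.rpow_pos_of_pos hd s).ne']
  set I : ℝ := ∫ x in Ioi 0, f x with hI_def
  have hI : I = (1 / d) ^ α * Real.Gamma α := by
    rw [hI_def, hf_def]
    have heq : ∀ x : ℝ, x ^ s * Real.exp (-(x * d)) = x ^ (α - 1) * Real.exp (-(d * x)) := by
      intro x; rw [mul_comm x d, hs_def]
    simp_rw [heq]
    exact integral_rpow_mul_exp_neg_mul_Ioi hα0 hd
  have hInn : 0 ≤ᵐ[volume.restrict (Ioi 0)] f := by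
    filter_upwards [ae_restrict_mem measurableSet_Ioi] with x hx
    exact hfnn x (le_of_lt hx)
  have hI0 : 0 ≤ I := setIntegral_nonneg measurableSet_Ioi fun x hx => hfnn x (le_of_lt hx)
  have hIoc : ∀ a b : ℝ, 0 ≤ a → a ≤ b → (∫ x in a..b, f x) ≤ I := by
    intro a b ha hab
    rw [intervalIntegral.integral_of_le hab]
    exact setIntegral_mono_set hint hInn
      (HasSubset.Subset.eventuallyLE fun x hx => lt_of_le_of_lt ha hx.1)
  have hsummable : Summable (fun n : ℕ => f ((n : ℝ) + 1)) := by
    set r : ℝ := Real.exp (-(d / 2)) with hr_def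
    have hr0 : 0 ≤ r := Real.exp_nonneg _
    have hr1 : r < 1 := Real.exp_lt_one_iff.mpr (by linarith)
    refine Summable.of_nonneg_of_le (fun n => hfnn _ (by positivity))
      (fun n => ?_) ((summable_geometric_of_lt_one hr0 hr1).mul_left
        ((s / (d/2)) ^ s * Real.exp (-s)))
    have hx : (0:ℝ) ≤ (n : ℝ) + 1 := by positivity
    have key : f ((n:ℝ)+1) ≤ ((s / (d/2)) ^ s * Real.exp (-s)) * r ^ (n+1) := by
      have h1 : ((n:ℝ)+1) ^ s * Real.exp (-(((n:ℝ)+1) * (d/2)))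
          ≤ (s / (d/2)) ^ s * Real.exp (-s) := aux_max hs (by linarith) hx
      have h2 : Real.exp (-(((n:ℝ)+1) * d))
          = Real.exp (-(((n:ℝ)+1) * (d/2))) * Real.exp (-(((n:ℝ)+1) * (d/2))) := by
        rw [← Real.exp_add]; ring_nf
      have h3 : Real.exp (-(((n:ℝ)+1) * (d/2))) = r ^ (n+1) := by
        rw [hr_def, ← Real.exp_nat_mul]
        congr 1
        push_cast
        ring
      calc f ((n:ℝ)+1) = (((n:ℝ)+1) ^ s * Real.exp (-(((n:ℝ)+1) * (d/2))))
            * Real.exp (-(((n:ℝ)+1) * (d/2))) := by rw [hf_def]; simp only []; rw [h2]; ring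
        _ ≤ ((s / (d/2)) ^ s * Real.exp (-s)) * Real.exp (-(((n:ℝ)+1) * (d/2))) :=
            mul_le_mul_of_nonneg_right h1 (Real.exp_nonneg _)
        _ = ((s / (d/2)) ^ s * Real.exp (-s)) * r ^ (n+1) := by rw [h3]
    refine key.trans (mul_le_mul_of_nonneg_left (pow_le_pow_of_le_one hr0 hr1.le (Nat.le_succ n))
      (by positivity))
  obtain ⟨L, hL1, hL2⟩ : ∃ L : ℕ, (L:ℝ) ≤ s/d ∧ s/d < (L:ℝ)+1 :=
    ⟨⌊s/d⌋₊, Nat.floor_le (by positivity), Nat.lt_floor_add_one _⟩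
  rw [← hsummable.sum_add_tsum_nat_add (L + 1)]
  have htail : (∑' n : ℕ, f ((↑(n + (L + 1)) : ℝ) + 1)) ≤ I := by
    refine Real.tsum_le_of_sum_range_le (fun n => hfnn _ (by positivity)) (fun N => ?_)
    have hanti : AntitoneOn f (Icc ((L:ℝ)+1) ((L:ℝ)+1+N)) := fun x hx y hy hxy =>
      aux_anti hs hd (le_trans hL2.le hx.1) hxy
    calc ∑ i ∈ Finset.range N, f ((↑(i + (L + 1)) : ℝ) + 1)
        = ∑ i ∈ Finset.range N, f (((L:ℝ)+1) + (↑(i+1) : ℝ)) := by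
          refine Finset.sum_congr rfl fun i _ => ?_
          congr 1
          push_cast
          ring
      _ ≤ ∫ x in ((L:ℝ)+1)..(((L:ℝ)+1) + N), f x := hanti.sum_le_integral
      _ ≤ I := hIoc _ _ (by positivity) (by linarith [Nat.cast_nonneg (α := ℝ) N])
  have hblock : (∑ i ∈ Finset.range (L + 1), f ((i : ℝ) + 1)) ≤ I + 2 * M := by
    obtain _ | m := L
    · rw [Finset.sum_range_one]
      have := hfle 1 zero_le_one
      norm_num
      linarith
    · rw [Finset.sum_range_succ, Finset.sum_range_succ]
      have hmono : MonotoneOn f (Icc (1:ℝ) (1 + m)) := by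
        intro x hx y hy hxy
        refine aux_mono hs hd (lt_of_lt_of_le zero_lt_one hx.1) hxy (le_trans hy.2 ?_)
        push_cast at hL1
        linarith
      have h1 : (∑ i ∈ Finset.range m, f ((i : ℝ) + 1)) ≤ I := by
        calc (∑ i ∈ Finset.range m, f ((i : ℝ) + 1))
            = ∑ i ∈ Finset.range m, f ((1:ℝ) + i) := by
              refine Finset.sum_congr rfl fun i _ => ?_
              congr 1; ring
          _ ≤ ∫ x in (1:ℝ)..(1 + m), f x := hmono.sum_le_integral
          _ ≤ I := hIoc _ _ zero_le_one (by linarith [Nat.cast_nonneg (α := ℝ) m])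
      have h2 : f ((m:ℝ) + 1) ≤ M := hfle _ (by positivity)
      have h3 : f ((↑(m+1):ℝ) + 1) ≤ M := hfle _ (by positivity)
      push_cast at h3 ⊢
      linarith
  have htotal : (∑ i ∈ Finset.range (L + 1), f ((i : ℝ) + 1))
      + (∑' n : ℕ, f ((↑(n + (L + 1)) : ℝ) + 1)) ≤ 2 * I + 2 * M := by linarith
  refine le_trans htotal ?_
  -- final arithmetic
  have hG : 0 < Real.Gamma α := Real.Gamma_pos_of_pos hα0
  have hda : (0:ℝ) < d ^ (-α + 1) := Real.rpow_pos_of_pos hd _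
  have hsqs : (0:ℝ) < Real.sqrt s := Real.sqrt_pos.2 hs
  have he1 : (1:ℝ) ≤ Real.exp 1 := by linarith [Real.add_one_le_exp (1:ℝ)]
  set A : ℝ := d ^ (-α + 1) with hA_def
  set G : ℝ := Real.Gamma α with hG_def
  set E : ℝ := s ^ s * Real.exp (-s) with hE_def
  have hE0 : 0 ≤ E := by positivity
  have hIeq : I = A * d⁻¹ * G := by
    have h1 : ((1:ℝ)/d) ^ α = d ^ (-α) := by
      rw [Real.rpow_neg hd.le, one_div, Real.inv_rpow hd.le]
    have h2 : d ^ (-α) = d ^ (-α+1) * d⁻¹ := by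
      rw [← Real.rpow_neg_one d, ← Real.rpow_add hd]
      norm_num
    rw [hI, hA_def, h1, h2]
  have hMeq : M = A * E := by
    have h3 : (s/d) ^ s = s ^ s * d ^ (-α+1) := by
      rw [Real.div_rpow hs.le hd.le, div_eq_mul_inv, ← Real.rpow_neg hd.le,
        show -s = -α+1 by rw [hs_def]; ring]
    rw [hM_def, hA_def, hE_def, h3]
    ring
  have hQ : s ^ (-(1:ℝ)/2) = (Real.sqrt s)⁻¹ := by
    rw [show (-(1:ℝ)/2) = -(1/2) by ring, Real.rpow_neg hs.le, ← Real.sqrt_eq_rpow]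
  have key2 : 2 * (A * E) ≤ 2 * Real.exp 1 * A * G * (Real.sqrt s)⁻¹ := by
    have hg := aux_gamma_lower hs
    have hsa : s + 1 = α := by rw [hs_def]; ring
    rw [hsa, ← hG_def, ← hE_def] at hg
    have h := mul_le_mul_of_nonneg_left hg
      (show (0:ℝ) ≤ 2 * Real.exp 1 * A * (Real.sqrt s)⁻¹ by positivity)
    calc 2 * (A * E) = (2 * Real.exp 1 * A * (Real.sqrt s)⁻¹)
          * (Real.exp (-1) * E * Real.sqrt s) := by
          rw [Real.exp_neg]
          field_simp
      _ ≤ (2 * Real.exp 1 * A * (Real.sqrt s)⁻¹) * G := h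
      _ = 2 * Real.exp 1 * A * G * (Real.sqrt s)⁻¹ := by ring
  have key1 : 2 * (A * d⁻¹ * G) ≤ 2 * Real.exp 1 * A * G * d⁻¹ := by
    calc 2 * (A * d⁻¹ * G) = (2 * A * G * d⁻¹) * 1 := by ring
      _ ≤ (2 * A * G * d⁻¹) * Real.exp 1 := by
          refine mul_le_mul_of_nonneg_left he1 (by positivity)
      _ = 2 * Real.exp 1 * A * G * d⁻¹ := by ring
  calc 2 * I + 2 * M = 2 * (A * d⁻¹ * G) + 2 * (A * E) := by rw [hIeq, hMeq]
    _ ≤ 2 * Real.exp 1 * A * G * d⁻¹ + 2 * Real.exp 1 * A * G * (Real.sqrt s)⁻¹ :=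
        add_le_add key1 key2
    _ = 2 * Real.exp 1 * A * G * (d⁻¹ + s ^ (-(1:ℝ)/2)) := by rw [hQ]; ring
end

section
/- There exist absolute constants C and k₀ such that the following holds for every integer k ≥ k₀. Let I be a finite index set and for each f ∈ I let a_f : {1, 2, 3, …} → ℂ be a function such that ∑_{f∈I} |a_f(n)|² ≤ (4πn)^k / Γ(k−1) for every positive integer n. Then for every complex number z = x + iy with y > 0, each series F_f(z) := ∑_{n≥1} a_f(n) e^{2πinz} converges absolutely, and ∑_{f∈I} y^k |F_f(z)|² ≤ C · k^{5/2} · ( y^{−1} + k^{−1/2} )². -/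
open scoped Real
open MeasureTheory

private lemma mono_aux {A s t : ℝ} (hs : 0 < s) (hst : s ≤ t) (hta : t ≤ A) :
    s ^ A * Real.exp (-s) ≤ t ^ A * Real.exp (-t) := by
  have ht : 0 < t := lt_of_lt_of_le hs hst
  rw [Real.rpow_def_of_pos hs, Real.rpow_def_of_pos ht, ← Real.exp_add, ← Real.exp_add]
  apply Real.exp_le_exp.2
  have hlog : Real.log (s/t) ≤ s/t - 1 := Real.log_le_sub_one_of_pos (by positivity)
  rw [Real.log_div hs.ne' ht.ne'] at hlog
  have h1 : (t - s)/t ≤ Real.log t - Real.log s := by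
    have : s/t - 1 = -((t-s)/t) := by field_simp; ring
    nlinarith
  have h2 : t - s ≤ A * ((t-s)/t) := by
    rw [mul_div_assoc']
    rw [le_div_iff₀ ht]
    nlinarith
  nlinarith

private lemma anti_aux {A s t : ℝ} (hA : 0 < A) (hAs : A ≤ s) (hst : s ≤ t) :
    t ^ A * Real.exp (-t) ≤ s ^ A * Real.exp (-s) := by
  have hs : 0 < s := lt_of_lt_of_le hA hAs
  have ht : 0 < t := lt_of_lt_of_le hs hst
  rw [Real.rpow_def_of_pos hs, Real.rpow_def_of_pos ht, ← Real.exp_add, ← Real.exp_add]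
  apply Real.exp_le_exp.2
  have hlog : Real.log (t/s) ≤ t/s - 1 := Real.log_le_sub_one_of_pos (by positivity)
  rw [Real.log_div ht.ne' hs.ne'] at hlog
  have h2 : A * (Real.log t - Real.log s) ≤ t - s := by
    have hA' : A * (Real.log t - Real.log s) ≤ A * (t/s - 1) := by
      apply mul_le_mul_of_nonneg_left _ hA.le
      nlinarith
    have : A * (t/s - 1) ≤ t - s := by
      rw [div_sub_one hs.ne', mul_div_assoc']
      rw [div_le_iff₀ hs]
      nlinarith [Real.log_le_sub_one_of_pos (show (0:ℝ) < t/s by positivity)]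
    linarith
  nlinarith

private lemma max_aux {A t : ℝ} (hA : 0 < A) (ht : 0 ≤ t) :
    t ^ A * Real.exp (-t) ≤ A ^ A * Real.exp (-A) := by
  rcases ht.lt_or_eq with h | h
  · rcases le_total t A with h2 | h2
    · exact mono_aux h h2 le_rfl
    · exact anti_aux hA le_rfl h2
  · rw [← h, Real.zero_rpow hA.ne', zero_mul]
    positivity

private lemma cont_f {A : ℝ} (hA : 0 < A) : Continuous (fun t : ℝ => t^A * Real.exp (-t)) := by
  apply Continuous.mul
  · exact continuous_id.rpow_const (fun x => Or.inr hA.le)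
  · exact Real.continuous_exp.comp continuous_neg

private lemma integral_le_Gamma {A c d : ℝ} (hA : 0 < A) (hc : 0 ≤ c) (hcd : c ≤ d) :
    (∫ t in c..d, t^A * Real.exp (-t)) ≤ Real.Gamma (A+1) := by
  rw [Real.Gamma_eq_integral (by linarith : (0:ℝ) < A+1)]
  simp only [add_sub_cancel_right]
  rw [intervalIntegral.integral_of_le hcd]
  have hInt : IntegrableOn (fun x : ℝ => Real.exp (-x) * x ^ A) (Set.Ioi 0) := by
    have := Real.GammaIntegral_convergent (by linarith : (0:ℝ) < A+1)
    simpa using this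
  calc (∫ t in Set.Ioc c d, t^A * Real.exp (-t))
      = ∫ t in Set.Ioc c d, Real.exp (-t) * t^A := by simp [mul_comm]
    _ ≤ ∫ t in Set.Ioi 0, Real.exp (-t) * t^A := by
        apply setIntegral_mono_set hInt
        · filter_upwards [ae_restrict_mem measurableSet_Ioi] with x hx
          have : (0:ℝ) < x := hx
          positivity
        · apply HasSubset.Subset.eventuallyLE
          intro x hx
          exact lt_of_lt_of_le (lt_of_le_of_lt hc (by exact hx.1)) (le_refl x) |>.trans_le le_rfl

private lemma const_le_integral {g : ℝ → ℝ} (hg : Continuous g) {c d v : ℝ} (hcd : c ≤ d)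
    (hv : ∀ x ∈ Set.Icc c d, v ≤ g x) : (d - c) * v ≤ ∫ x in c..d, g x := by
  have h := intervalIntegral.integral_mono_on (μ := volume) (f := fun _ => v) (g := g) hcd
    (intervalIntegrable_const) (hg.intervalIntegrable c d) hv
  simpa [smul_eq_mul] using h

private lemma core_sum {A lam : ℝ} (hA : 1 ≤ A) (hlam : 0 < lam) (N : ℕ) :
    ∑ n ∈ Finset.range N, (lam*((n:ℝ)+1))^A * Real.exp (-(lam*((n:ℝ)+1)))
      ≤ 2 * Real.Gamma (A+1) / lam + 3 * (A^A * Real.exp (-A)) := by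
  have hA0 : 0 < A := lt_of_lt_of_le one_pos hA
  set f : ℝ → ℝ := fun t => t^A * Real.exp (-t) with hfdef
  have hcont : Continuous f := cont_f hA0
  have hGpos : 0 < Real.Gamma (A+1) := Real.Gamma_pos_of_pos (by linarith)
  set m : ℕ := ⌊A/lam⌋₊ with hmdef
  have hmle : (m:ℝ) * lam ≤ A := by
    have h := Nat.floor_le (show 0 ≤ A/lam by positivity)
    calc (m:ℝ) * lam ≤ (A/lam) * lam := by
          apply mul_le_mul_of_nonneg_right _ hlam.le
          exact_mod_cast h
      _ = A := by field_simp
  have hmgt : A < ((m:ℝ)+1) * lam := by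
    have h := Nat.lt_floor_add_one (A/lam)
    calc A = (A/lam) * lam := by field_simp
      _ < ((m:ℝ)+1) * lam := by
          apply mul_lt_mul_of_pos_right _ hlam
          exact_mod_cast h
  -- key lemma: a block of terms dominated by f on consecutive intervals
  have key : ∀ (c : ℝ) (v : ℕ → ℝ) (P : ℕ), 0 ≤ c →
      (∀ i, i < P → ∀ x ∈ Set.Icc (c+lam*i) (c+lam*i+lam), f (v i) ≤ f x) →
      ∑ i ∈ Finset.range P, f (v i) ≤ Real.Gamma (A+1)/lam := by
    intro c v P hc hdom
    have hterm : ∀ i ∈ Finset.range P,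
        f (v i) ≤ (∫ x in (c+lam*(i:ℝ))..(c+lam*(i:ℝ)+lam), f x)/lam := by
      intro i hi
      rw [le_div_iff₀ hlam]
      calc f (v i) * lam = ((c+lam*(i:ℝ)+lam) - (c+lam*(i:ℝ))) * f (v i) := by ring
        _ ≤ ∫ x in (c+lam*(i:ℝ))..(c+lam*(i:ℝ)+lam), f x :=
            const_le_integral hcont (by nlinarith) (hdom i (Finset.mem_range.1 hi))
    have htele : (∑ i ∈ Finset.range P, ∫ x in (c+lam*(i:ℝ))..(c+lam*(i:ℝ)+lam), f x)
        = ∫ x in c..(c+lam*(P:ℝ)), f x := by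
      have h := intervalIntegral.sum_integral_adjacent_intervals
        (a := fun i : ℕ => c + lam*(i:ℝ)) (f := f) (μ := volume) (n := P)
        (fun i _ => hcont.intervalIntegrable _ _)
      rw [show c + lam * ((0:ℕ):ℝ) = c by push_cast; ring] at h
      rw [← h]
      apply Finset.sum_congr rfl
      intro i _
      congr 1
      push_cast; ring
    have htele' : (∑ i ∈ Finset.range P, ∫ x in (c+lam*(i:ℝ))..(c+lam*(i:ℝ)+lam), f x)
        ≤ Real.Gamma (A+1) := by
      rw [htele]
      exact integral_le_Gamma hA0 hc (by nlinarith)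
    calc ∑ i ∈ Finset.range P, f (v i)
        ≤ ∑ i ∈ Finset.range P, (∫ x in (c+lam*(i:ℝ))..(c+lam*(i:ℝ)+lam), f x)/lam :=
          Finset.sum_le_sum hterm
      _ = (∑ i ∈ Finset.range P, ∫ x in (c+lam*(i:ℝ))..(c+lam*(i:ℝ)+lam), f x)/lam :=
          (Finset.sum_div _ _ _).symm
      _ ≤ Real.Gamma (A+1)/lam := by gcongr
  -- now split the sum
  have hfnn : ∀ n : ℕ, 0 ≤ f (lam*((n:ℝ)+1)) := by
    intro n
    have h1 : 0 < lam*((n:ℝ)+1) := by positivity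
    simp only [hfdef]
    positivity
  show ∑ n ∈ Finset.range N, f (lam*((n:ℝ)+1)) ≤ _
  set Am : ℕ := m - 2 with hAmdef
  set M : ℕ := max N (m+1) with hMdef
  have hNM : ∑ n ∈ Finset.range N, f (lam*((n:ℝ)+1)) ≤ ∑ n ∈ Finset.range M, f (lam*((n:ℝ)+1)) := by
    apply Finset.sum_le_sum_of_subset_of_nonneg
    · exact Finset.range_subset_range.2 (le_max_left _ _)
    · intro n _ _; exact hfnn n
  have hsplit : ∑ n ∈ Finset.range M, f (lam*((n:ℝ)+1))
      = (∑ n ∈ Finset.range Am, f (lam*((n:ℝ)+1)))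
        + (∑ n ∈ Finset.Ico Am (m+1), f (lam*((n:ℝ)+1)))
        + (∑ n ∈ Finset.Ico (m+1) M, f (lam*((n:ℝ)+1))) := by
    rw [Finset.range_eq_Ico, ← Finset.sum_Ico_consecutive _ (Nat.zero_le (m+1)) (le_max_right N (m+1)),
      ← Finset.sum_Ico_consecutive _ (Nat.zero_le Am) (by omega : Am ≤ m+1), ← Finset.range_eq_Ico]
  have s1 : ∑ n ∈ Finset.range Am, f (lam*((n:ℝ)+1)) ≤ Real.Gamma (A+1)/lam := by
    apply key lam (fun n => lam*((n:ℝ)+1)) Am hlam.le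
    intro i hi x hx
    have hi2 : (i:ℝ) + 2 ≤ (m:ℝ) := by
      have : i + 2 ≤ m := by omega
      exact_mod_cast this
    apply mono_aux (by positivity) _ _
    · calc lam*((i:ℝ)+1) = lam + lam*(i:ℝ) := by ring
        _ ≤ x := hx.1
    · calc x ≤ lam + lam*(i:ℝ) + lam := hx.2
        _ = lam * ((i:ℝ)+2) := by ring
        _ ≤ lam * (m:ℝ) := by nlinarith
        _ ≤ A := by nlinarith
  have s2 : ∑ n ∈ Finset.Ico Am (m+1), f (lam*((n:ℝ)+1)) ≤ 3 * (A^A * Real.exp (-A)) := by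
    have hb : ∀ n ∈ Finset.Ico Am (m+1), f (lam*((n:ℝ)+1)) ≤ A^A * Real.exp (-A) := by
      intro n _
      exact max_aux hA0 (by positivity)
    have hcard := Finset.sum_le_card_nsmul (Finset.Ico Am (m+1)) _ _ hb
    rw [nsmul_eq_mul] at hcard
    refine hcard.trans ?_
    apply mul_le_mul_of_nonneg_right
    · have : (Finset.Ico Am (m+1)).card ≤ 3 := by
        rw [Nat.card_Ico]; omega
      exact_mod_cast this
    · positivity
  have s3 : ∑ n ∈ Finset.Ico (m+1) M, f (lam*((n:ℝ)+1)) ≤ Real.Gamma (A+1)/lam := by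
    rw [Finset.sum_Ico_eq_sum_range]
    have := key (lam*((m:ℝ)+1)) (fun i => lam*(((m+1+i:ℕ):ℝ)+1)) (M - (m+1)) (by positivity)
    apply le_trans _ (this _)
    · apply le_of_eq
      apply Finset.sum_congr rfl
      intro i _
      push_cast
      ring_nf
    · intro i hi x hx
      have h1 : A ≤ x := by
        calc A ≤ ((m:ℝ)+1) * lam := hmgt.le
          _ ≤ lam*((m:ℝ)+1) + lam*(i:ℝ) := by nlinarith [(Nat.cast_nonneg i : (0:ℝ) ≤ i)]
          _ ≤ x := hx.1
      apply anti_aux hA0 h1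
      calc x ≤ lam*((m:ℝ)+1) + lam*(i:ℝ) + lam := hx.2
        _ = lam*(((m+1+i:ℕ):ℝ)+1) := by push_cast; ring
  calc ∑ n ∈ Finset.range N, f (lam*((n:ℝ)+1))
      ≤ ∑ n ∈ Finset.range M, f (lam*((n:ℝ)+1)) := hNM
    _ = _ := hsplit
    _ ≤ Real.Gamma (A+1)/lam + 3 * (A^A * Real.exp (-A)) + Real.Gamma (A+1)/lam := by
        gcongr
    _ = 2 * Real.Gamma (A+1) / lam + 3 * (A^A * Real.exp (-A)) := by ring

private lemma stirling_lower (k : ℕ) (hk : 1 ≤ k) :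
    Real.sqrt k * ((k:ℝ)/Real.exp 1)^k ≤ (k.factorial : ℝ) := by
  obtain ⟨n, rfl⟩ : ∃ n, k = n + 1 := ⟨k - 1, by omega⟩
  have h1 : Real.sqrt π ≤ Stirling.stirlingSeq (n+1) := by
    have := Stirling.stirlingSeq'_antitone.le_of_tendsto
      (by
        have h := Stirling.tendsto_stirlingSeq_sqrt_pi
        exact h.comp (Filter.tendsto_add_atTop_nat 1)) n
    simpa using this
  have h2 : (0:ℝ) < Real.sqrt (2*(n+1:ℕ)) * (((n+1:ℕ):ℝ)/Real.exp 1)^(n+1) := by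
    have : (0:ℝ) < ((n+1:ℕ):ℝ) := by positivity
    positivity
  have h3 := Stirling.stirlingSeq (n+1)
  rw [Stirling.stirlingSeq] at h1
  rw [le_div_iff₀ h2] at h1
  calc Real.sqrt ((n+1:ℕ):ℝ) * (((n+1:ℕ):ℝ)/Real.exp 1)^(n+1)
      ≤ Real.sqrt π * (Real.sqrt (2*(n+1:ℕ)) * (((n+1:ℕ):ℝ)/Real.exp 1)^(n+1)) := by
        have hs : Real.sqrt ((n+1:ℕ):ℝ) ≤ Real.sqrt π * Real.sqrt (2*(n+1:ℕ)) := by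
          rw [← Real.sqrt_mul (by positivity)]
          apply Real.sqrt_le_sqrt
          nlinarith [Real.pi_gt_three, (by positivity : (0:ℝ) < ((n+1:ℕ):ℝ))]
        have hpow : (0:ℝ) ≤ (((n+1:ℕ):ℝ)/Real.exp 1)^(n+1) := by positivity
        nlinarith [hs, hpow]
    _ ≤ ((n+1).factorial : ℝ) := h1

private lemma unsquare_aux {x y : ℝ} (hx : 0 ≤ x) (hy : 0 ≤ y) (h : x^2 ≤ y^2) : x ≤ y := by
  have := Real.sqrt_le_sqrt h
  rwa [Real.sqrt_sq hx, Real.sqrt_sq hy] at this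

private lemma sq_rpow_aux {x : ℝ} (hx : 0 ≤ x) (p : ℝ) : (x^p)^2 = x^(p*2) := by
  rw [← Real.rpow_natCast (x^p) 2, ← Real.rpow_mul hx]
  norm_num

private lemma Gamma_sub_one_eq {k : ℕ} (hk : 3 ≤ k) :
    Real.Gamma ((k:ℝ)-1) = ((k-2).factorial : ℝ) := by
  have h2 : (2:ℕ) ≤ k := by omega
  have : (k:ℝ) - 1 = ((k-2:ℕ):ℝ) + 1 := by
    rw [Nat.cast_sub h2]; push_cast; ring
  rw [this, Real.Gamma_nat_eq_factorial]

private lemma E1_s18 {k : ℕ} (hk : 3 ≤ k) :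
    ((k:ℝ)/Real.exp 1)^((k:ℝ)/2) ≤ Real.sqrt (Real.Gamma ((k:ℝ)-1)) * (k:ℝ)^((3:ℝ)/4) := by
  have hk0 : (0:ℝ) < k := by positivity
  have hbase : (0:ℝ) < (k:ℝ)/Real.exp 1 := by positivity
  have hG : (0:ℝ) < Real.Gamma ((k:ℝ)-1) := by
    rw [Gamma_sub_one_eq hk]; positivity
  -- squared inequality
  have hsq : ((k:ℝ)/Real.exp 1)^(k:ℕ) ≤ Real.Gamma ((k:ℝ)-1) * (k:ℝ)^((3:ℝ)/2) := by
    rw [Gamma_sub_one_eq hk]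
    have hst := stirling_lower k (by omega)
    have hfact : (k.factorial : ℝ) ≤ (k:ℝ)^2 * ((k-2).factorial : ℝ) := by
      obtain ⟨m, rfl⟩ : ∃ m, k = m + 2 := ⟨k - 2, by omega⟩
      have h1 : (m+2).factorial = (m+2) * ((m+1) * m.factorial) := by
        simp [Nat.factorial_succ]
      rw [h1]
      simp only [Nat.add_sub_cancel]
      push_cast
      nlinarith [(by positivity : (0:ℝ) ≤ (m.factorial : ℝ)), (by positivity : (0:ℝ) < ((m:ℝ)+2))]
    have hks : Real.sqrt (k:ℝ) * (k:ℝ)^((3:ℝ)/2) = (k:ℝ)^2 := by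
      rw [Real.sqrt_eq_rpow, ← Real.rpow_add hk0, ← Real.rpow_natCast (k:ℝ) 2]
      norm_num
    have hsqrtpos : (0:ℝ) < Real.sqrt (k:ℝ) := Real.sqrt_pos.2 hk0
    nlinarith [hst, hfact, hks, hsqrtpos]
  -- unsquare
  have hL : (0:ℝ) ≤ ((k:ℝ)/Real.exp 1)^((k:ℝ)/2) := by positivity
  have hR : (0:ℝ) ≤ Real.sqrt (Real.Gamma ((k:ℝ)-1)) * (k:ℝ)^((3:ℝ)/4) := by positivity
  have hLsq : (((k:ℝ)/Real.exp 1)^((k:ℝ)/2))^2 = ((k:ℝ)/Real.exp 1)^(k:ℕ) := by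
    rw [sq_rpow_aux hbase.le, show (k:ℝ)/2*2 = (k:ℝ) by ring, Real.rpow_natCast]
  have hRsq : (Real.sqrt (Real.Gamma ((k:ℝ)-1)) * (k:ℝ)^((3:ℝ)/4))^2
      = Real.Gamma ((k:ℝ)-1) * (k:ℝ)^((3:ℝ)/2) := by
    rw [mul_pow, Real.sq_sqrt hG.le, sq_rpow_aux hk0.le]
    norm_num
  apply unsquare_aux hL hR
  rw [hLsq, hRsq]
  exact hsq

set_option maxHeartbeats 1000000 in
private lemma E2 {k : ℕ} (hk : 3 ≤ k) :
    (2:ℝ)^((k:ℝ)/2) * Real.Gamma ((k:ℝ)/2 + 1)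
      ≤ 2 * (Real.sqrt (Real.Gamma ((k:ℝ)-1)) * (k:ℝ)^((5:ℝ)/4)) := by
  have hk0 : (0:ℝ) < k := by positivity
  set a : ℝ := (k:ℝ)/2 with hadef
  have ha : (3:ℝ)/2 ≤ a := by
    rw [hadef]
    have : (3:ℝ) ≤ k := by exact_mod_cast hk
    linarith
  have hG : (0:ℝ) < Real.Gamma ((k:ℝ)-1) := by
    rw [Gamma_sub_one_eq hk]; positivity
  have hGa2 : (0:ℝ) < Real.Gamma (a + 1/2) := Real.Gamma_pos_of_pos (by linarith)
  have hGa1 : (0:ℝ) < Real.Gamma (a + 1) := Real.Gamma_pos_of_pos (by linarith)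
  have hGa3 : (0:ℝ) < Real.Gamma (a + 3/2) := Real.Gamma_pos_of_pos (by linarith)
  -- log convexity
  have hconv := Real.convexOn_log_Gamma.2 (Set.mem_Ioi.2 (by linarith : (0:ℝ) < a + 1/2))
    (Set.mem_Ioi.2 (by linarith : (0:ℝ) < a + 3/2)) (by norm_num : (0:ℝ) ≤ 1/2)
    (by norm_num : (0:ℝ) ≤ 1/2) (by norm_num)
  simp only [smul_eq_mul, Function.comp_apply] at hconv
  have hmid : (1/2 : ℝ) * (a + 1/2) + (1/2 : ℝ) * (a + 3/2) = a + 1 := by ring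
  rw [hmid] at hconv
  have hlc : Real.Gamma (a+1)^2 ≤ Real.Gamma (a+1/2) * Real.Gamma (a+3/2) := by
    have h1 : Real.Gamma (a+1)^2 = Real.exp (2 * Real.log (Real.Gamma (a+1))) := by
      rw [mul_comm, Real.exp_mul, Real.exp_log hGa1,
        show ((2:ℝ)) = ((2:ℕ):ℝ) by norm_num, Real.rpow_natCast]
    rw [h1, show Real.Gamma (a+1/2) * Real.Gamma (a+3/2)
        = Real.exp (Real.log (Real.Gamma (a+1/2)) + Real.log (Real.Gamma (a+3/2))) by
      rw [Real.exp_add, Real.exp_log hGa2, Real.exp_log hGa3]]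
    apply Real.exp_le_exp.2
    linarith
  have hrec : Real.Gamma (a+3/2) = (a+1/2) * Real.Gamma (a+1/2) := by
    rw [show a + 3/2 = (a+1/2) + 1 by ring, Real.Gamma_add_one (show (a+1/2) ≠ 0 by positivity)]
  -- Γ(a+1) ≤ √(a+1/2) Γ(a+1/2)
  have hr : Real.Gamma (a+1) ≤ Real.sqrt (a+1/2) * Real.Gamma (a+1/2) := by
    have hy : (0:ℝ) ≤ Real.sqrt (a+1/2) * Real.Gamma (a+1/2) := by positivity
    have h2 : Real.Gamma (a+1)^2 ≤ (Real.sqrt (a+1/2) * Real.Gamma (a+1/2))^2 := by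
      rw [mul_pow, Real.sq_sqrt (by positivity : (0:ℝ) ≤ a+1/2)]
      calc Real.Gamma (a+1)^2 ≤ Real.Gamma (a+1/2) * Real.Gamma (a+3/2) := hlc
        _ = (a+1/2) * Real.Gamma (a+1/2)^2 := by rw [hrec]; ring
    exact unsquare_aux hGa1.le hy h2
  -- duplication
  have hdup := Real.Gamma_mul_Gamma_add_half (a + 1/2)
  rw [show a + 1/2 + 1/2 = a + 1 by ring, show 2 * (a + 1/2) = (k:ℝ) + 1 by rw [hadef]; ring,
    show (1:ℝ) - ((k:ℝ) + 1) = -(k:ℝ) by ring] at hdup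
  -- Γ(k+1) = k (k-1) Γ(k-1)
  have hk3 : (3:ℝ) ≤ (k:ℝ) := by exact_mod_cast hk
  have hGk : Real.Gamma ((k:ℝ)+1) = (k:ℝ) * (((k:ℝ)-1) * Real.Gamma ((k:ℝ)-1)) := by
    have h2 : Real.Gamma (((k:ℝ)-1)+1) = ((k:ℝ)-1) * Real.Gamma ((k:ℝ)-1) :=
      Real.Gamma_add_one (by intro h; nlinarith)
    have h1 : Real.Gamma ((((k:ℝ)-1)+1)+1) = (((k:ℝ)-1)+1) * Real.Gamma (((k:ℝ)-1)+1) :=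
      Real.Gamma_add_one (by intro h; nlinarith)
    calc Real.Gamma ((k:ℝ)+1) = Real.Gamma ((((k:ℝ)-1)+1)+1) := by norm_num
      _ = (((k:ℝ)-1)+1) * (((k:ℝ)-1) * Real.Gamma ((k:ℝ)-1)) := by rw [h1, h2]
      _ = (k:ℝ) * (((k:ℝ)-1) * Real.Gamma ((k:ℝ)-1)) := by ring_nf
  -- squared main chain
  have hpow2 : ((2:ℝ)^((k:ℝ)/2))^2 = (2:ℝ)^((k:ℝ)) := by
    rw [sq_rpow_aux (by norm_num : (0:ℝ) ≤ 2)]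
    norm_num
  have hchain : (2:ℝ)^((k:ℝ)) * Real.Gamma (a+1)^2 ≤ 4 * (Real.Gamma ((k:ℝ)-1) * (k:ℝ)^((5:ℝ)/2)) := by
    have step1 : Real.Gamma (a+1)^2 ≤ Real.sqrt (a+1/2) * (Real.Gamma (a+1/2) * Real.Gamma (a+1)) := by
      have := mul_le_mul_of_nonneg_right hr hGa1.le
      calc Real.Gamma (a+1)^2 = Real.Gamma (a+1) * Real.Gamma (a+1) := sq (Real.Gamma (a+1)) ▸ by ring
        _ ≤ Real.sqrt (a+1/2) * Real.Gamma (a+1/2) * Real.Gamma (a+1) := this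
        _ = Real.sqrt (a+1/2) * (Real.Gamma (a+1/2) * Real.Gamma (a+1)) := by ring
    have step2 : Real.Gamma (a+1/2) * Real.Gamma (a+1) = Real.Gamma ((k:ℝ)+1) * (2:ℝ)^(-(k:ℝ)) * Real.sqrt π := hdup
    have hsπ : Real.sqrt π ≤ 2 := by
      rw [show (2:ℝ) = Real.sqrt 4 by rw [show (4:ℝ) = 2^2 by norm_num, Real.sqrt_sq]; norm_num]
      apply Real.sqrt_le_sqrt
      nlinarith [Real.pi_lt_d2]
    have hsa : Real.sqrt (a+1/2) ≤ Real.sqrt k := by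
      apply Real.sqrt_le_sqrt
      rw [hadef]
      have : (3:ℝ) ≤ k := by exact_mod_cast hk
      linarith
    have h2pow : (2:ℝ)^((k:ℝ)) * (2:ℝ)^(-(k:ℝ)) = 1 := by
      rw [← Real.rpow_add (by norm_num : (0:ℝ) < 2)]
      norm_num
    have hk52 : Real.sqrt (k:ℝ) * ((k:ℝ) * ((k:ℝ)-1)) ≤ (k:ℝ)^((5:ℝ)/2) := by
      have h1 : (k:ℝ)^((5:ℝ)/2) = (k:ℝ)^(2:ℕ) * Real.sqrt (k:ℝ) := by
        rw [Real.sqrt_eq_rpow, ← Real.rpow_natCast (k:ℝ) 2, ← Real.rpow_add hk0]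
        norm_num
      rw [h1]
      have h3 : (k:ℝ) * ((k:ℝ)-1) ≤ (k:ℝ)^(2:ℕ) := by nlinarith
      calc Real.sqrt (k:ℝ) * ((k:ℝ) * ((k:ℝ)-1)) = ((k:ℝ) * ((k:ℝ)-1)) * Real.sqrt (k:ℝ) := by ring
        _ ≤ (k:ℝ)^(2:ℕ) * Real.sqrt (k:ℝ) :=
            mul_le_mul_of_nonneg_right h3 (Real.sqrt_nonneg (k:ℝ))
    calc (2:ℝ)^((k:ℝ)) * Real.Gamma (a+1)^2
        ≤ (2:ℝ)^((k:ℝ)) * (Real.sqrt (a+1/2) * (Real.Gamma ((k:ℝ)+1) * (2:ℝ)^(-(k:ℝ)) * Real.sqrt π)) := by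
          rw [← step2]
          have h0 : (0:ℝ) ≤ (2:ℝ)^((k:ℝ)) := by positivity
          exact mul_le_mul_of_nonneg_left step1 h0
      _ = Real.sqrt (a+1/2) * Real.sqrt π * Real.Gamma ((k:ℝ)+1) * ((2:ℝ)^((k:ℝ)) * (2:ℝ)^(-(k:ℝ))) := by ring
      _ = Real.sqrt (a+1/2) * Real.sqrt π * Real.Gamma ((k:ℝ)+1) := by rw [h2pow, mul_one]
      _ ≤ 4 * (Real.Gamma ((k:ℝ)-1) * (k:ℝ)^((5:ℝ)/2)) := by
          rw [hGk]
          have hGk1 : (0:ℝ) ≤ ((k:ℝ)-1) := by nlinarith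
          have h3 : (0:ℝ) ≤ (k:ℝ) * (((k:ℝ)-1)) := by positivity
          have h4 : Real.sqrt (a+1/2) * Real.sqrt π ≤ 2 * Real.sqrt (k:ℝ) := by
            nlinarith [Real.sqrt_nonneg (a+1/2), Real.sqrt_nonneg π, Real.sqrt_nonneg (k:ℝ), hsπ, hsa]
          calc Real.sqrt (a+1/2) * Real.sqrt π * ((k:ℝ) * (((k:ℝ)-1) * Real.Gamma ((k:ℝ)-1)))
              ≤ 2 * Real.sqrt (k:ℝ) * ((k:ℝ) * (((k:ℝ)-1) * Real.Gamma ((k:ℝ)-1))) := by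
                apply mul_le_mul_of_nonneg_right h4
                positivity
            _ = 2 * (Real.sqrt (k:ℝ) * ((k:ℝ) * ((k:ℝ)-1))) * Real.Gamma ((k:ℝ)-1) := by ring
            _ ≤ 2 * (k:ℝ)^((5:ℝ)/2) * Real.Gamma ((k:ℝ)-1) := by
                apply mul_le_mul_of_nonneg_right _ hG.le
                nlinarith [hk52]
            _ ≤ 4 * (Real.Gamma ((k:ℝ)-1) * (k:ℝ)^((5:ℝ)/2)) := by
                have : (0:ℝ) ≤ (k:ℝ)^((5:ℝ)/2) := by positivity
                nlinarith [hG]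
  -- unsquare
  have hL : (0:ℝ) ≤ (2:ℝ)^((k:ℝ)/2) * Real.Gamma (a + 1) := by positivity
  have hR : (0:ℝ) ≤ 2 * (Real.sqrt (Real.Gamma ((k:ℝ)-1)) * (k:ℝ)^((5:ℝ)/4)) := by positivity
  have hLsq : ((2:ℝ)^((k:ℝ)/2) * Real.Gamma (a+1))^2 = (2:ℝ)^((k:ℝ)) * Real.Gamma (a+1)^2 := by
    rw [mul_pow, hpow2]
  have hRsq : (2 * (Real.sqrt (Real.Gamma ((k:ℝ)-1)) * (k:ℝ)^((5:ℝ)/4)))^2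
      = 4 * (Real.Gamma ((k:ℝ)-1) * (k:ℝ)^((5:ℝ)/2)) := by
    rw [mul_pow, mul_pow, Real.sq_sqrt hG.le, sq_rpow_aux hk0.le]
    norm_num
  apply unsquare_aux hL hR
  rw [hLsq, hRsq]
  exact hchain

private lemma coord_le_aux {I : Type} [Fintype I] (x : EuclideanSpace ℂ I) (f : I) :
    ‖x f‖ ≤ ‖x‖ := by
  rw [EuclideanSpace.norm_eq]
  have h : ‖x f‖^2 ≤ ∑ i, ‖x i‖^2 :=
    Finset.single_le_sum (fun i _ => sq_nonneg ‖x i‖) (Finset.mem_univ f)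
  calc ‖x f‖ = Real.sqrt (‖x f‖^2) := (Real.sqrt_sq (norm_nonneg _)).symm
    _ ≤ _ := Real.sqrt_le_sqrt h

set_option maxHeartbeats 1600000 in
theorem statement18 :
    ∃ C : ℝ, 0 < C ∧ ∃ k₀ : ℕ, ∀ k : ℕ, k₀ ≤ k →
      ∀ (I : Type) [Fintype I], ∀ a : I → ℕ+ → ℂ,
        (∀ m : ℕ+, (∑ f : I, ‖a f m‖ ^ 2) ≤
            (4 * π * (m : ℝ)) ^ k / Real.Gamma ((k : ℝ) - 1)) →
        ∀ z : ℂ, 0 < z.im →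
          (∀ f : I, Summable (fun m : ℕ+ =>
            ‖a f m * Complex.exp (2 * (π : ℂ) * Complex.I * (m : ℂ) * z)‖)) ∧
          (∑ f : I, z.im ^ k *
              ‖∑' m : ℕ+, a f m * Complex.exp (2 * (π : ℂ) * Complex.I * (m : ℂ) * z)‖ ^ 2)
            ≤ C * (k : ℝ) ^ ((5 : ℝ) / 2) * (z.im⁻¹ + (k : ℝ) ^ (-(1 : ℝ) / 2)) ^ 2 := by
  refine ⟨16, by norm_num, 3, ?_⟩
  intro k hk I _ a h1 z hz
  have hk0 : (0:ℝ) < k := by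
    have : 0 < k := by omega
    exact_mod_cast this
  set y : ℝ := z.im with hydef
  have hy : 0 < y := hz
  set lam : ℝ := 2*π*y with hlamdef
  have hlam : 0 < lam := by positivity
  set G : ℝ := Real.Gamma ((k:ℝ)-1) with hGdef
  have hG : 0 < G := by rw [hGdef, Gamma_sub_one_eq hk]; positivity
  set A : ℝ := (k:ℝ)/2 with hAdef
  have hA1 : 1 ≤ A := by
    rw [hAdef]
    have : (3:ℝ) ≤ (k:ℝ) := by exact_mod_cast hk
    linarith
  -- norms of individual terms
  have hnorm : ∀ (f : I) (m : ℕ+), ‖a f m * Complex.exp (2*(π:ℂ)*Complex.I*(m:ℂ)*z)‖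
      = ‖a f m‖ * Real.exp (-(lam*(m:ℝ))) := by
    intro f m
    rw [norm_mul]
    congr 1
    rw [Complex.norm_exp]
    congr 1
    have : (2*(π:ℂ)*Complex.I*(m:ℂ)*z).re = -(lam*(m:ℝ)) := by
      simp [Complex.mul_re, Complex.mul_im, hlamdef, hydef]
      ring
    rw [this]
  -- geometric ratio
  set r : ℝ := Real.exp (-lam) with hrdef
  have hr1 : r < 1 := by
    rw [hrdef]
    have : -lam < 0 := by linarith
    calc Real.exp (-lam) < Real.exp 0 := Real.exp_lt_exp.2 this
      _ = 1 := Real.exp_zero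
  have hr0 : (0:ℝ) ≤ r := (Real.exp_pos _).le
  have hexp_eq : ∀ m : ℕ+, Real.exp (-(lam*(m:ℝ))) = r^(m:ℕ) := by
    intro m
    rw [hrdef, ← Real.exp_nat_mul]
    congr 1
    push_cast
    ring
  -- the vector family
  set g : ℕ+ → EuclideanSpace ℂ I :=
    fun m => WithLp.toLp 2 (fun f => a f m * Complex.exp (2*(π:ℂ)*Complex.I*(m:ℂ)*z)) with hgdef
  set Bb : ℕ+ → ℝ :=
    fun m => Real.sqrt ((4*π*(m:ℝ))^k / G) * Real.exp (-(lam*(m:ℝ))) with hBbdef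
  have hBb0 : ∀ m, 0 ≤ Bb m := by
    intro m
    rw [hBbdef]
    positivity
  have hgmf : ∀ (m : ℕ+) (f : I), g m f = a f m * Complex.exp (2*(π:ℂ)*Complex.I*(m:ℂ)*z) := by
    intro m f
    rfl
  have hg_norm : ∀ m, ‖g m‖ ≤ Bb m := by
    intro m
    rw [EuclideanSpace.norm_eq]
    have hsumeq : (∑ f : I, ‖g m f‖^2)
        = (∑ f : I, ‖a f m‖^2) * (Real.exp (-(lam*(m:ℝ))))^2 := by
      rw [Finset.sum_mul]
      apply Finset.sum_congr rfl
      intro f _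
      rw [hgmf, hnorm f m, mul_pow]
    rw [hsumeq, Real.sqrt_mul (by positivity), Real.sqrt_sq (Real.exp_pos _).le, hBbdef]
    apply mul_le_mul_of_nonneg_right _ (Real.exp_pos _).le
    exact Real.sqrt_le_sqrt (h1 m)
  -- summability of the bound
  have hsumN : Summable (fun n : ℕ => ((n:ℝ))^k * r^n) := by
    have := summable_pow_mul_geometric_of_norm_lt_one (R := ℝ) k
      (r := r) (by rwa [Real.norm_eq_abs, abs_of_nonneg hr0])
    simpa [mul_comm] using this
  have hBb_le : ∀ m : ℕ+, Bb m ≤ Real.sqrt ((4*π)^k / G) * (((m:ℕ):ℝ)^k * r^(m:ℕ)) := by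
    intro m
    have hm1 : (1:ℝ) ≤ ((m:ℕ):ℝ) := by exact_mod_cast m.one_le
    have e1 : (4*π*(m:ℝ))^k / G = ((4*π)^k / G) * ((m:ℝ))^k := by
      rw [mul_pow]; ring
    rw [hBbdef]
    simp only
    rw [e1, Real.sqrt_mul (by positivity), hexp_eq m]
    have hmm : ((m:ℝ)) = ((m:ℕ):ℝ) := rfl
    rw [hmm]
    have h2 : Real.sqrt (((m:ℕ):ℝ)^k) ≤ ((m:ℕ):ℝ)^k := by
      have hx1 : (1:ℝ) ≤ ((m:ℕ):ℝ)^k := one_le_pow₀ hm1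
      have hs1 : (1:ℝ) ≤ Real.sqrt (((m:ℕ):ℝ)^k) := by
        rw [show (1:ℝ) = Real.sqrt 1 by simp]
        exact Real.sqrt_le_sqrt hx1
      nlinarith [Real.sq_sqrt (show (0:ℝ) ≤ ((m:ℕ):ℝ)^k by positivity)]
    have hrm : (0:ℝ) ≤ r^(m:ℕ) := pow_nonneg hr0 _
    calc Real.sqrt ((4*π)^k/G) * Real.sqrt (((m:ℕ):ℝ)^k) * r^(m:ℕ)
        ≤ Real.sqrt ((4*π)^k/G) * ((m:ℕ):ℝ)^k * r^(m:ℕ) := by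
          apply mul_le_mul_of_nonneg_right _ hrm
          exact mul_le_mul_of_nonneg_left h2 (Real.sqrt_nonneg _)
      _ = Real.sqrt ((4*π)^k/G) * (((m:ℕ):ℝ)^k * r^(m:ℕ)) := by ring
  have hBbsum : Summable Bb := by
    apply Summable.of_nonneg_of_le hBb0 hBb_le
    exact ((hsumN.mul_left _).comp_injective PNat.coe_injective)
  have hgns : Summable (fun m : ℕ+ => ‖g m‖) :=
    Summable.of_nonneg_of_le (fun m => norm_nonneg _) hg_norm hBbsum
  have hgsum : Summable g := Summable.of_norm hgns
  -- part 1
  have hpart1 : ∀ f : I, Summable (fun m : ℕ+ =>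
      ‖a f m * Complex.exp (2*(π:ℂ)*Complex.I*(m:ℂ)*z)‖) := by
    intro f
    apply Summable.of_nonneg_of_le (fun m => norm_nonneg _) _ hBbsum
    intro m
    calc ‖a f m * Complex.exp (2*(π:ℂ)*Complex.I*(m:ℂ)*z)‖ = ‖g m f‖ := by rw [hgmf]
      _ ≤ ‖g m‖ := coord_le_aux _ f
      _ ≤ Bb m := hg_norm m
  refine ⟨hpart1, ?_⟩
  set S : EuclideanSpace ℂ I := ∑' m, g m with hSdef
  have hSf : ∀ f : I, (∑' m : ℕ+, a f m * Complex.exp (2*(π:ℂ)*Complex.I*(m:ℂ)*z)) = S f := by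
    intro f
    have h := ContinuousLinearMap.map_tsum
      (EuclideanSpace.proj f : EuclideanSpace ℂ I →L[ℂ] ℂ) hgsum
    simp only [PiLp.proj_apply] at h
    rw [hSdef, h]
  have hS_le : ‖S‖ ≤ ∑' m, Bb m := by
    calc ‖S‖ ≤ ∑' m, ‖g m‖ := norm_tsum_le_tsum_norm hgns
      _ ≤ ∑' m, Bb m := Summable.tsum_le_tsum hg_norm hgns hBbsum
  have hLHS : (∑ f : I, y ^ k *
      ‖∑' m : ℕ+, a f m * Complex.exp (2 * (π : ℂ) * Complex.I * (m : ℂ) * z)‖ ^ 2)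
      = y^k * ‖S‖^2 := by
    rw [← Finset.mul_sum]
    congr 1
    have hsq : ‖S‖^2 = ∑ f : I, ‖S f‖^2 := by
      rw [EuclideanSpace.norm_eq, Real.sq_sqrt (by positivity)]
    rw [hsq]
    apply Finset.sum_congr rfl
    intro f _
    rw [hSf f]
  -- bound the tsum of Bb
  set D : ℝ := 2*Real.Gamma (A+1)/lam + 3*(A^A*Real.exp (-A)) with hDdef
  have hApos : (0:ℝ) < A := by linarith
  have hGam : 0 < Real.Gamma (A+1) := Real.Gamma_pos_of_pos (by linarith)
  have hD0 : 0 ≤ D := by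
    rw [hDdef]
    positivity
  set cst : ℝ := (4*π/lam)^A / Real.sqrt G with hcstdef
  have hcst0 : 0 ≤ cst := by
    rw [hcstdef]
    positivity
  have hBbeq : ∀ n : ℕ, Bb (Equiv.pnatEquivNat.symm n)
      = cst * ((lam*((n:ℝ)+1))^A * Real.exp (-(lam*((n:ℝ)+1)))) := by
    intro n
    have hmcast : ((Equiv.pnatEquivNat.symm n : ℕ+):ℝ) = (n:ℝ)+1 := by
      simp [Equiv.pnatEquivNat, Nat.succPNat]
    rw [hBbdef]
    simp only
    rw [hmcast]
    have key : Real.sqrt ((4*π*((n:ℝ)+1))^k / G)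
        = ((4*π/lam)^A * (lam*((n:ℝ)+1))^A) / Real.sqrt G := by
      rw [Real.sqrt_div (by positivity) G]
      congr 1
      rw [Real.sqrt_eq_rpow, ← Real.rpow_natCast (4*π*((n:ℝ)+1)) k,
        ← Real.rpow_mul (by positivity)]
      rw [show ((k:ℕ):ℝ)*(1/2) = A by rw [hAdef]; ring]
      rw [show 4*π*((n:ℝ)+1) = (4*π/lam)*(lam*((n:ℝ)+1)) by field_simp]
      rw [Real.mul_rpow (by positivity) (by positivity)]
    rw [key, hcstdef]
    ring
  have hTB : (∑' m, Bb m) ≤ cst * D := by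
    rw [← Equiv.tsum_eq (Equiv.pnatEquivNat.symm) Bb, tsum_congr hBbeq, tsum_mul_left]
    apply mul_le_mul_of_nonneg_left _ hcst0
    rw [hDdef]
    apply Real.tsum_le_of_sum_range_le
    · intro n
      have h0 : (0:ℝ) < lam*((n:ℝ)+1) := by positivity
      positivity
    · intro n
      exact core_sum hA1 hlam n
  -- final numeric assembly
  set Q : ℝ := y⁻¹ + (k:ℝ)^(-(1:ℝ)/2) with hQdef
  have hQ0 : 0 ≤ Q := by
    rw [hQdef]
    positivity
  have hE1 := E1_s18 hk
  have hE2 := E2 hk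
  rw [← hAdef] at hE1 hE2
  rw [← hGdef] at hE1 hE2
  have ht2 : (2:ℝ)^A * (A^A*Real.exp (-A)) = ((k:ℝ)/Real.exp 1)^A := by
    rw [← mul_assoc, ← Real.mul_rpow (by norm_num : (0:ℝ) ≤ 2) hApos.le,
      show (2:ℝ)*A = (k:ℝ) by rw [hAdef]; ring,
      Real.div_rpow (by positivity) (Real.exp_pos 1).le, Real.exp_one_rpow,
      Real.exp_neg, div_eq_mul_inv]
  have hX : (2:ℝ)^A * D ≤ 4 * (Real.sqrt G * ((k:ℝ)^((5:ℝ)/4) * Q)) := by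
    rw [hDdef]
    have expand : (2:ℝ)^A * (2*Real.Gamma (A+1)/lam + 3*(A^A*Real.exp (-A)))
        = (2/lam) * ((2:ℝ)^A * Real.Gamma (A+1)) + 3*((2:ℝ)^A * (A^A*Real.exp (-A))) := by
      ring
    rw [expand, ht2]
    have hinv : lam⁻¹ ≤ y⁻¹ := by
      have hly : y ≤ lam := by
        rw [hlamdef]
        nlinarith [Real.pi_gt_three]
      have := one_div_le_one_div_of_le hy hly
      simpa [one_div] using this
    have hb1 : (2/lam) * ((2:ℝ)^A * Real.Gamma (A+1))
        ≤ 4 * (Real.sqrt G * ((k:ℝ)^((5:ℝ)/4) * y⁻¹)) := by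
      calc (2/lam) * ((2:ℝ)^A * Real.Gamma (A+1))
          ≤ (2/lam) * (2 * (Real.sqrt G * (k:ℝ)^((5:ℝ)/4))) := by
            apply mul_le_mul_of_nonneg_left hE2 (by positivity)
        _ = 4*(Real.sqrt G * (k:ℝ)^((5:ℝ)/4)) * lam⁻¹ := by
            rw [div_eq_mul_inv]; ring
        _ ≤ 4*(Real.sqrt G * (k:ℝ)^((5:ℝ)/4)) * y⁻¹ := by
            apply mul_le_mul_of_nonneg_left hinv (by positivity)
        _ = 4 * (Real.sqrt G * ((k:ℝ)^((5:ℝ)/4) * y⁻¹)) := by ring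
    have hb2 : ((k:ℝ)/Real.exp 1)^A
        ≤ Real.sqrt G * ((k:ℝ)^((5:ℝ)/4) * (k:ℝ)^(-(1:ℝ)/2)) := by
      refine hE1.trans (le_of_eq ?_)
      rw [← Real.rpow_add hk0]
      norm_num
    have h3 : (0:ℝ) ≤ Real.sqrt G * ((k:ℝ)^((5:ℝ)/4) * (k:ℝ)^(-(1:ℝ)/2)) := by positivity
    calc (2/lam) * ((2:ℝ)^A * Real.Gamma (A+1)) + 3*((k:ℝ)/Real.exp 1)^A
        ≤ 4 * (Real.sqrt G * ((k:ℝ)^((5:ℝ)/4) * y⁻¹))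
          + 4*(Real.sqrt G * ((k:ℝ)^((5:ℝ)/4) * (k:ℝ)^(-(1:ℝ)/2))) := by
          have h4 := mul_le_mul_of_nonneg_left hb2 (by norm_num : (0:ℝ) ≤ 3)
          linarith [h3, hb1, h4]
      _ = 4 * (Real.sqrt G * ((k:ℝ)^((5:ℝ)/4) * Q)) := by
          rw [hQdef]; ring
  have hSQ : ‖S‖ ≤ cst * D := hS_le.trans hTB
  -- squared identities
  have c1 : ((4*π/lam)^A)^2 = (4*π/lam)^(k:ℕ) := by
    rw [sq_rpow_aux (by positivity), show A*2 = ((k:ℕ):ℝ) by rw [hAdef]; ring,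
      Real.rpow_natCast]
  have c2 : ((2:ℝ)^A)^2 = (2:ℝ)^(k:ℕ) := by
    rw [sq_rpow_aux (by norm_num : (0:ℝ) ≤ 2), show A*2 = ((k:ℕ):ℝ) by rw [hAdef]; ring,
      Real.rpow_natCast]
  have c3 : y^k * (4*π/lam)^(k:ℕ) = (2:ℝ)^(k:ℕ) := by
    rw [← mul_pow, show y*(4*π/lam) = 2 by
      rw [hlamdef]
      field_simp
      ring]
  calc (∑ f : I, y ^ k *
      ‖∑' m : ℕ+, a f m * Complex.exp (2 * (π : ℂ) * Complex.I * (m : ℂ) * z)‖ ^ 2)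
      = y^k * ‖S‖^2 := hLHS
    _ ≤ y^k * (cst*D)^2 := by
        apply mul_le_mul_of_nonneg_left _ (by positivity)
        exact pow_le_pow_left₀ (norm_nonneg S) hSQ 2
    _ = ((2:ℝ)^A * D)^2 / G := by
        have e1 : (cst*D)^2 = ((4*π/lam)^(k:ℕ) * D^2)/G := by
          rw [hcstdef, div_mul_eq_mul_div, div_pow, mul_pow, c1, Real.sq_sqrt hG.le]
        rw [e1, mul_pow, c2]
        rw [show y^k * ((4*π/lam)^(k:ℕ) * D^2/G) = (y^k * (4*π/lam)^(k:ℕ)) * D^2/G by ring, c3]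
    _ ≤ (4 * (Real.sqrt G * ((k:ℝ)^((5:ℝ)/4) * Q)))^2 / G := by
        apply (div_le_div_iff_of_pos_right hG).2
        exact pow_le_pow_left₀ (by positivity) hX 2
    _ = 16 * (k:ℝ)^((5:ℝ)/2) * Q^2 := by
        have e2 : (4*(Real.sqrt G*((k:ℝ)^((5:ℝ)/4)*Q)))^2
            = 16*(G*(((k:ℝ)^((5:ℝ)/4))^2*Q^2)) := by
          rw [mul_pow, mul_pow, mul_pow, Real.sq_sqrt hG.le]
          ring
        rw [e2, sq_rpow_aux hk0.le, show (5:ℝ)/4*2 = 5/2 by norm_num]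
        field_simp
end

section
/- Let ε ∈ (0, 1/2). There exist constants C = C(ε) and k₀ = k₀(ε) such that for every integer k ≥ k₀ and every point z = x + iy of the complex upper half-plane with |x| ≤ 1/2, y ≥ √3/2 and y ≤ k^{1/2}, one has #{ γ ∈ SL₂(ℤ) : |γ·z − z| ≤ (k^{ε}/k)^{1/2} · y } ≤ C · k^{1/2}. -/
open scoped MatrixGroups UpperHalfPlane Real
open UpperHalfPlane

set_option maxHeartbeats 1000000 in
lemma entry_bounds (z : ℍ) (hx : |z.re| ≤ 1/2) (hy : Real.sqrt 3 / 2 ≤ z.im)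
    (Y δ : ℝ) (hY : 1 ≤ Y) (hzY : z.im ≤ Y) (hδ0 : 0 ≤ δ) (hδ : δ ≤ 1/2)
    (γ : SL(2,ℤ)) (hγ : ‖(((γ • z : ℍ) : ℂ) - (z : ℂ))‖ ≤ δ * z.im) :
    |γ.1 1 0| ≤ 1 ∧ |γ.1 1 1| ≤ 2 ∧ |γ.1 0 0| ≤ 5 ∧ |(γ.1 0 1 : ℝ)| ≤ 8 * Y := by
  set x := z.re with hxdef
  set y := z.im with hydef
  set a : ℤ := γ.1 0 0 with hadef
  set b : ℤ := γ.1 0 1 with hbdef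
  set c : ℤ := γ.1 1 0 with hcdef
  set d : ℤ := γ.1 1 1 with hddef
  have h0 : 0 < y := z.im_pos
  have hy34 : 3/4 ≤ y := by
    nlinarith [Real.sq_sqrt (by norm_num : (0:ℝ) ≤ 3), Real.sqrt_nonneg 3]
  set w : ℂ := ((γ • z : ℍ) : ℂ) with hwdef
  have hdy : ‖(w - z)‖ ≤ y / 2 := le_trans hγ (by nlinarith)
  have hwim : |w.im - y| ≤ y / 2 := by
    have h1 := Complex.abs_im_le_norm (w - z)
    simp only [Complex.sub_im] at h1
    rw [show ((z:ℂ)).im = y from UpperHalfPlane.coe_im z] at h1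
    exact le_trans h1 hdy
  obtain ⟨hwim1, hwim2⟩ := abs_le.mp hwim
  set N : ℝ := Complex.normSq (denom ↑γ z) with hNdef
  have hNpos : 0 < N := normSq_denom_pos ↑γ z.im_ne_zero
  have hwimN : w.im = y / N := by
    have h2 := ModularGroup.im_smul_eq_div_normSq γ z
    rw [hwdef, UpperHalfPlane.coe_im, h2]
  have hN2 : N ≤ 2 := by
    have h3 : y / 2 ≤ y / N := by rw [← hwimN]; linarith
    rw [div_le_div_iff₀ (by norm_num) hNpos] at h3
    nlinarith
  have hNform : N = ((c:ℝ) * x + d)^2 + (c:ℝ)^2 * y^2 := by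
    rw [hNdef]
    have hd : denom ↑γ z = (c : ℂ) * z + (d : ℂ) := by simp [denom, hcdef, hddef]
    rw [hd]
    simp [Complex.normSq_apply, UpperHalfPlane.coe_re, UpperHalfPlane.coe_im]
    push_cast
    ring
  have hcy : ((c:ℝ) * y)^2 ≤ 2 := by nlinarith
  have hcxd : ((c:ℝ) * x + d)^2 ≤ 2 := by nlinarith
  have hcy' : |(c:ℝ) * y| ≤ 3/2 := by
    by_contra h; push_neg at h; nlinarith [sq_abs ((c:ℝ) * y)]
  have hcxd' : |(c:ℝ) * x + d| ≤ 3/2 := by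
    by_contra h; push_neg at h; nlinarith [sq_abs ((c:ℝ) * x + d)]
  have hc1 : |c| ≤ 1 := by
    by_contra h
    push_neg at h
    have h2 : (2:ℤ) ≤ |c| := h
    have h3 : (2:ℝ) ≤ |(c:ℝ)| := by rw [← Int.cast_abs]; exact_mod_cast h2
    have h4 : (3:ℝ)/2 ≤ |(c:ℝ)| * y := by nlinarith [abs_nonneg ((c:ℝ))]
    have h5 : ((c:ℝ) * y)^2 = (|(c:ℝ)| * y)^2 := by rw [mul_pow, mul_pow, sq_abs]
    nlinarith [h4, h5, hcy, abs_nonneg ((c:ℝ))]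
  have hCc1 : |(c:ℝ)| ≤ 1 := by rw [← Int.cast_abs]; exact_mod_cast hc1
  have hD : |(d:ℝ)| ≤ 2 := by
    have h4 : |(d:ℝ)| ≤ |(c:ℝ) * x + d| + |(c:ℝ) * x| := by
      calc |(d:ℝ)| = |((c:ℝ) * x + d) + (-((c:ℝ) * x))| := by ring_nf
        _ ≤ |(c:ℝ) * x + d| + |(-((c:ℝ) * x))| := abs_add_le _ _
        _ = |(c:ℝ) * x + d| + |(c:ℝ) * x| := by rw [abs_neg]
    have h5 : |(c:ℝ) * x| ≤ 1/2 := by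
      rw [abs_mul]
      calc |(c:ℝ)| * |x| ≤ 1 * (1/2) := mul_le_mul hCc1 hx (abs_nonneg _) (by norm_num)
        _ = 1/2 := by norm_num
    linarith
  have hd2 : |d| ≤ 2 := by
    have : ((|d|:ℤ):ℝ) ≤ 2 := by rw [Int.cast_abs]; exact hD
    exact_mod_cast this
  -- key moebius identity
  have hkey : ((a:ℂ)) * z + (b:ℂ) = w * ((c:ℂ) * z + (d:ℂ)) := by
    have h1 : ((γ • z : ℍ) : ℂ) = num ↑γ z / denom ↑γ z := by
      rw [ModularGroup.sl_moeb, UpperHalfPlane.coe_smul_of_det_pos (by simp)]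
    have h2 : denom ↑γ z ≠ 0 := denom_ne_zero _ z
    have hdd : denom ↑γ z = (c : ℂ) * z + (d : ℂ) := by simp [denom, hcdef, hddef]
    have hnn : num ↑γ z = (a : ℂ) * z + (b : ℂ) := by simp [num, hadef, hbdef]
    rw [hwdef, h1, ← hdd, ← hnn, div_mul_cancel₀ _ h2]
  have h6 := congrArg Complex.im hkey
  have h7 := congrArg Complex.re hkey
  simp only [Complex.add_im, Complex.mul_im, Complex.add_re, Complex.mul_re,
    Complex.intCast_im, Complex.intCast_re, UpperHalfPlane.coe_re, UpperHalfPlane.coe_im] at h6 h7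
  have h6' : (a:ℝ) * y = w.re * ((c:ℝ) * y) + w.im * ((c:ℝ) * x + (d:ℝ)) := by
    rw [← hxdef, ← hydef] at h6; linarith [h6]
  have h7' : (a:ℝ) * x + (b:ℝ) = w.re * ((c:ℝ) * x + (d:ℝ)) - w.im * ((c:ℝ) * y) := by
    rw [← hxdef, ← hydef] at h7; linarith [h7]
  -- real part of w
  have hwre : |w.re - x| ≤ y / 2 := by
    have h1 := Complex.abs_re_le_norm (w - z)
    simp only [Complex.sub_re] at h1
    rw [show ((z:ℂ)).re = x from UpperHalfPlane.coe_re z] at h1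
    exact le_trans h1 hdy
  have hwre' : |w.re| ≤ 1/2 + y/2 := by
    have := abs_sub_abs_le_abs_sub w.re x
    have hx2 := abs_le.mp hx
    cases abs_le.mp hwre with | intro u v =>
    cases abs_le.mp hx with | intro u2 v2 =>
    rw [abs_le]; constructor <;> linarith
  have hwim' : |w.im| ≤ 3 * y / 2 := by
    rw [abs_le]; constructor <;> linarith
  -- bound on a
  have hA : |(a:ℝ)| * y ≤ 3/4 + 3 * y := by
    have h8 : |(a:ℝ) * y| ≤ |w.re| * |(c:ℝ) * y| + |w.im| * |(c:ℝ) * x + (d:ℝ)| := by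
      calc |(a:ℝ) * y| = |w.re * ((c:ℝ) * y) + w.im * ((c:ℝ) * x + (d:ℝ))| := by rw [h6']
        _ ≤ |w.re * ((c:ℝ) * y)| + |w.im * ((c:ℝ) * x + (d:ℝ))| := abs_add_le _ _
        _ = |w.re| * |(c:ℝ) * y| + |w.im| * |(c:ℝ) * x + (d:ℝ)| := by
            rw [abs_mul w.re, abs_mul w.im]
    have h9 : |(a:ℝ) * y| = |(a:ℝ)| * y := by rw [abs_mul, abs_of_pos h0]
    rw [h9] at h8
    have p1 : |w.re| * |(c:ℝ) * y| ≤ (1/2 + y/2) * (3/2) :=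
      mul_le_mul hwre' hcy' (abs_nonneg _) (by linarith)
    have p2 : |w.im| * |(c:ℝ) * x + (d:ℝ)| ≤ (3 * y / 2) * (3/2) :=
      mul_le_mul hwim' hcxd' (abs_nonneg _) (by linarith)
    linarith
  have ha5 : |a| ≤ 5 := by
    by_contra h
    push_neg at h
    have h2 : (6:ℤ) ≤ |a| := h
    have h3 : (6:ℝ) ≤ |(a:ℝ)| := by rw [← Int.cast_abs]; exact_mod_cast h2
    have h4 : 6 * y ≤ |(a:ℝ)| * y := mul_le_mul_of_nonneg_right h3 (le_of_lt h0)
    linarith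
  have hA5 : |(a:ℝ)| ≤ 5 := by rw [← Int.cast_abs]; exact_mod_cast ha5
  -- bound on b
  have hb8 : |(b:ℝ)| ≤ 8 * Y := by
    have h8 : |(b:ℝ)| ≤ |w.re| * |(c:ℝ) * x + (d:ℝ)| + |w.im| * |(c:ℝ) * y| + |(a:ℝ)| * |x| := by
      calc |(b:ℝ)| = |w.re * ((c:ℝ) * x + (d:ℝ)) + (-(w.im * ((c:ℝ) * y))) + (-((a:ℝ) * x))| := by
            rw [show w.re * ((c:ℝ) * x + (d:ℝ)) + (-(w.im * ((c:ℝ) * y))) + (-((a:ℝ) * x))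
              = (b:ℝ) by linarith [h7']]
        _ ≤ |w.re * ((c:ℝ) * x + (d:ℝ)) + (-(w.im * ((c:ℝ) * y)))| + |(-((a:ℝ) * x))| := abs_add_le _ _
        _ ≤ |w.re * ((c:ℝ) * x + (d:ℝ))| + |(-(w.im * ((c:ℝ) * y)))| + |(-((a:ℝ) * x))| := by
            linarith [abs_add_le (w.re * ((c:ℝ) * x + (d:ℝ))) (-(w.im * ((c:ℝ) * y)))]
        _ = |w.re| * |(c:ℝ) * x + (d:ℝ)| + |w.im| * |(c:ℝ) * y| + |(a:ℝ)| * |x| := by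
            rw [abs_neg, abs_neg, abs_mul w.re, abs_mul w.im, abs_mul ((a:ℝ))]
    have hwreY : |w.re| ≤ Y := by linarith
    have q1 : |w.re| * |(c:ℝ) * x + (d:ℝ)| ≤ Y * (3/2) :=
      mul_le_mul hwreY hcxd' (abs_nonneg _) (by linarith)
    have q2 : |w.im| * |(c:ℝ) * y| ≤ (3 * y / 2) * (3/2) :=
      mul_le_mul hwim' hcy' (abs_nonneg _) (by linarith)
    have q3 : |(a:ℝ)| * |x| ≤ 5 * (1/2) :=
      mul_le_mul hA5 hx (abs_nonneg _) (by norm_num)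
    linarith
  exact ⟨hc1, hd2, ha5, hb8⟩

set_option maxHeartbeats 1000000 in
lemma box_count (Bk : ℤ) (hBk : 0 ≤ Bk) (S : Set (SL(2,ℤ)))
    (hS : ∀ γ ∈ S, |γ.1 0 0| ≤ 5 ∧ |γ.1 0 1| ≤ Bk ∧ |γ.1 1 0| ≤ 1 ∧ |γ.1 1 1| ≤ 2) :
    S.Finite ∧ (S.ncard : ℝ) ≤ 165 * (2 * (Bk:ℝ) + 1) := by
  classical
  set f : SL(2,ℤ) → ℤ × ℤ × ℤ × ℤ := fun γ => (γ.1 0 0, γ.1 0 1, γ.1 1 0, γ.1 1 1) with hf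
  have hfinj : Function.Injective f := by
    intro γ₁ γ₂ h
    simp only [hf, Prod.mk.injEq] at h
    apply Subtype.ext
    ext i j
    fin_cases i <;> fin_cases j <;> simp [h.1, h.2.1, h.2.2.1, h.2.2.2]
  set T : Finset (ℤ × ℤ × ℤ × ℤ) :=
    (Finset.Icc (-5) 5) ×ˢ (Finset.Icc (-Bk) Bk) ×ˢ (Finset.Icc (-1) 1) ×ˢ (Finset.Icc (-2) 2)
    with hT
  have hsub : S ⊆ f ⁻¹' ↑T := by
    intro γ hγ
    obtain ⟨h1, h2, h3, h4⟩ := hS γ hγ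
    simp only [hT, hf, Set.mem_preimage, Finset.coe_product, Set.mem_prod, Finset.mem_coe,
      Finset.mem_Icc]
    rw [abs_le] at h1 h2 h3 h4
    omega
  have hfinpre : (f ⁻¹' ↑T).Finite := Set.Finite.preimage hfinj.injOn T.finite_toSet
  have hfin : S.Finite := hfinpre.subset hsub
  refine ⟨hfin, ?_⟩
  have h1 : S.ncard ≤ (f ⁻¹' (↑T : Set (ℤ×ℤ×ℤ×ℤ))).ncard := Set.ncard_le_ncard hsub hfinpre
  have h2 : (f ⁻¹' (↑T : Set (ℤ×ℤ×ℤ×ℤ))).ncard = (f '' (f ⁻¹' ↑T)).ncard :=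
    (Set.ncard_image_of_injective _ hfinj).symm
  have h3 : (f '' (f ⁻¹' ↑T)).ncard ≤ (↑T : Set (ℤ×ℤ×ℤ×ℤ)).ncard :=
    Set.ncard_le_ncard (Set.image_preimage_subset f ↑T) T.finite_toSet
  have h4 : (↑T : Set (ℤ×ℤ×ℤ×ℤ)).ncard = T.card := Set.ncard_coe_finset T
  have h5 : T.card = 11 * ((2 * Bk + 1).toNat * (3 * 5)) := by
    simp [hT, Finset.card_product, Int.card_Icc]
    norm_num
    omega
  have h6 : S.ncard ≤ 11 * ((2 * Bk + 1).toNat * (3 * 5)) := by omega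
  have h7 : (((2 * Bk + 1).toNat : ℤ) : ℝ) = 2 * (Bk:ℝ) + 1 := by
    rw [Int.toNat_of_nonneg (by omega)]; push_cast; ring
  have h8 : (((2 * Bk + 1).toNat : ℕ) : ℝ) = 2 * (Bk:ℝ) + 1 := by
    have := h7
    push_cast at this ⊢
    linarith
  calc (S.ncard : ℝ) ≤ ((11 * ((2 * Bk + 1).toNat * (3 * 5)) : ℕ) : ℝ) := by exact_mod_cast h6
    _ = 165 * (2 * (Bk:ℝ) + 1) := by push_cast [h8]; ring

set_option maxHeartbeats 1000000 in
theorem statement19 (ε : ℝ) (hε : ε ∈ Set.Ioo (0 : ℝ) (1 / 2)) :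
    ∃ C : ℝ, 0 < C ∧ ∃ k₀ : ℕ, ∀ k : ℕ, k₀ ≤ k →
      ∀ z : UpperHalfPlane, |z.re| ≤ 1 / 2 → Real.sqrt 3 / 2 ≤ z.im →
        z.im ≤ (k : ℝ) ^ ((1 : ℝ) / 2) →
        {γ : SL(2, ℤ) | ‖((γ • z : UpperHalfPlane) - (z : ℂ) : ℂ)‖
            ≤ Real.sqrt ((k : ℝ) ^ ε / k) * z.im}.Finite ∧
        ({γ : SL(2, ℤ) | ‖((γ • z : UpperHalfPlane) - (z : ℂ) : ℂ)‖
            ≤ Real.sqrt ((k : ℝ) ^ ε / k) * z.im}.ncard : ℝ)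
          ≤ C * (k : ℝ) ^ ((1 : ℝ) / 2) := by
  refine ⟨4000, by norm_num, 36, fun k hk z hx hy hzY => ?_⟩
  set Y : ℝ := (k : ℝ) ^ ((1 : ℝ) / 2) with hYdef
  have hk36 : (36:ℝ) ≤ (k:ℝ) := by exact_mod_cast hk
  have hk1 : (1:ℝ) ≤ (k:ℝ) := by linarith
  have hkpos : (0:ℝ) < (k:ℝ) := by linarith
  have hYsqrt : Y = Real.sqrt k := by rw [hYdef, Real.sqrt_eq_rpow]
  have hY6 : 6 ≤ Y := by
    rw [hYsqrt]
    have : Real.sqrt 36 ≤ Real.sqrt k := Real.sqrt_le_sqrt hk36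
    rwa [show (36:ℝ) = 6^2 by norm_num, Real.sqrt_sq (by norm_num : (0:ℝ) ≤ 6)] at this
  have hY1 : 1 ≤ Y := by linarith
  have hYpos : 0 < Y := by linarith
  have hYsq : Y * Y = (k:ℝ) := by rw [hYsqrt]; exact Real.mul_self_sqrt (by linarith)
  set δ : ℝ := Real.sqrt ((k:ℝ)^ε / k) with hδdef
  have hδ0 : 0 ≤ δ := Real.sqrt_nonneg _
  have hδ : δ ≤ 1/2 := by
    have h1 : (k:ℝ)^ε ≤ (k:ℝ)^((1:ℝ)/2) :=
      Real.rpow_le_rpow_of_exponent_le hk1 (le_of_lt hε.2)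
    have h2 : (k:ℝ)^ε / k ≤ Y / k := by gcongr
    have h3 : Y / (k:ℝ) = 1 / Y := by
      rw [← hYsq]; field_simp
    have h4 : (1:ℝ) / Y ≤ 1/4 := by
      rw [div_le_div_iff₀ hYpos (by norm_num)]; linarith
    have h5 : (k:ℝ)^ε / k ≤ 1/4 := by rw [h3] at h2; linarith
    calc δ ≤ Real.sqrt (1/4) := Real.sqrt_le_sqrt h5
      _ = 1/2 := by
        rw [show (1/4:ℝ) = (1/2)^2 by norm_num, Real.sqrt_sq (by norm_num : (0:ℝ) ≤ 1/2)]
  set S := {γ : SL(2, ℤ) | ‖((γ • z : UpperHalfPlane) - (z : ℂ) : ℂ)‖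
      ≤ Real.sqrt ((k : ℝ) ^ ε / k) * z.im} with hSdef
  set Bk : ℤ := ⌊8 * Y⌋ with hBkdef
  have hBk0 : 0 ≤ Bk := Int.floor_nonneg.mpr (by positivity)
  have hBkle : (Bk:ℝ) ≤ 8 * Y := Int.floor_le _
  have hS : ∀ γ ∈ S, |γ.1 0 0| ≤ 5 ∧ |γ.1 0 1| ≤ Bk ∧ |γ.1 1 0| ≤ 1 ∧ |γ.1 1 1| ≤ 2 := by
    intro γ hγ
    have hγ' : ‖(((γ • z : ℍ) : ℂ) - (z : ℂ))‖ ≤ δ * z.im := hγ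
    obtain ⟨hc, hd, ha, hb⟩ := entry_bounds z hx hy Y δ hY1 hzY hδ0 hδ γ hγ'
    refine ⟨ha, ?_, hc, hd⟩
    apply Int.le_floor.mpr
    rw [Int.cast_abs]
    exact hb
  obtain ⟨hfin, hcard⟩ := box_count Bk hBk0 S hS
  refine ⟨hfin, ?_⟩
  calc (S.ncard : ℝ) ≤ 165 * (2 * (Bk:ℝ) + 1) := hcard
    _ ≤ 4000 * Y := by nlinarith
end
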